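/- arXiv:2001.10600 — 10 statements merged into one kernel-verified Lean document; each statement's English description precedes it below -/
import Mathlib

section
/- Let Z_1,...,Z_n be independent nonnegative real-valued random variables and let W_1,...,W_n be nonnegative random variables such that, setting X_i = Z_i + W_i, for each i the variable Z_i is independent of (X_1,...,X_{i-1}). Let τ = (1/2)·E[max_i Z_i], and let ALG be the stopping rule that accepts the first X_i with X_i ≥ τ (receiving value X_i, or 0 if no variable is accepted). Then E[ALG] ≥ (1/2)·E[max_i Z_i]. -/
open MeasureTheory ProbabilityTheory Finset

open scoped Classical in
/-- Value obtained by the stopping rule that accepts the first `X i ≥ τ` (0 if none). -/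
noncomputable def algValue {Ω : Type*} {n : ℕ} (X : Fin (n + 1) → Ω → ℝ) (τ : ℝ) (ω : Ω) : ℝ :=
  if h : (Finset.univ.filter (fun i => τ ≤ X i ω)).Nonempty then
    X ((Finset.univ.filter (fun i => τ ≤ X i ω)).min' h) ω
  else 0

open scoped Classical in
lemma algValue_eq_sum {Ω : Type*} {n : ℕ} (X : Fin (n + 1) → Ω → ℝ) (τ : ℝ) (ω : Ω) :
    algValue X τ ω =
      ∑ i : Fin (n + 1), if τ ≤ X i ω ∧ ∀ j, j < i → X j ω < τ then X i ω else 0 := by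
  unfold algValue
  by_cases h : (Finset.univ.filter (fun i => τ ≤ X i ω)).Nonempty
  · rw [dif_pos h]
    set m := (Finset.univ.filter (fun i => τ ≤ X i ω)).min' h with hm
    have hmmem : m ∈ Finset.univ.filter (fun i => τ ≤ X i ω) := Finset.min'_mem _ h
    have hmτ : τ ≤ X m ω := (Finset.mem_filter.mp hmmem).2
    have hlt : ∀ j, j < m → X j ω < τ := by
      intro j hj
      by_contra hc
      push_neg at hc
      exact absurd (Finset.min'_le _ j (Finset.mem_filter.mpr ⟨Finset.mem_univ _, hc⟩))
        (not_le.mpr hj)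
    rw [Finset.sum_eq_single_of_mem m (Finset.mem_univ m)]
    · rw [if_pos ⟨hmτ, hlt⟩]
    · intro i _ hne
      rw [if_neg]
      rintro ⟨h1, h2⟩
      rcases lt_or_gt_of_ne hne with hlt' | hgt
      · exact absurd h1 (not_le.mpr (hlt i hlt'))
      · exact absurd hmτ (not_le.mpr (h2 m hgt))
  · rw [dif_neg h]
    symm
    apply Finset.sum_eq_zero
    intro i _
    rw [if_neg]
    rintro ⟨h1, _⟩
    exact h ⟨i, Finset.mem_filter.mpr ⟨Finset.mem_univ _, h1⟩⟩

/-- Single-item augmentation lemma: with `τ = (1/2)·E[max_i Z_i]`, the rule accepting the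
first `X i ≥ τ` gets at least half of `E[max_i Z_i]`. -/
theorem stmt0 {Ω : Type*} [MeasurableSpace Ω] (μ : Measure Ω) [IsProbabilityMeasure μ]
    {n : ℕ} (Z W X : Fin (n + 1) → Ω → ℝ)
    (hZmeas : ∀ i, Measurable (Z i)) (hWmeas : ∀ i, Measurable (W i))
    (hZnn : ∀ i ω, 0 ≤ Z i ω) (hWnn : ∀ i ω, 0 ≤ W i ω)
    (hZint : ∀ i, Integrable (Z i) μ) (hWint : ∀ i, Integrable (W i) μ)
    (hX : ∀ i ω, X i ω = Z i ω + W i ω)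
    (hindep : ∀ i : Fin (n + 1),
      IndepFun (Z i) (fun ω => fun j : { j : Fin (n + 1) // j < i } => X j ω) μ)
    (τ : ℝ)
    (hτ : τ = (1 / 2) * ∫ ω, Finset.univ.sup' Finset.univ_nonempty (fun i => Z i ω) ∂μ) :
    (1 / 2) * ∫ ω, Finset.univ.sup' Finset.univ_nonempty (fun i => Z i ω) ∂μ
      ≤ ∫ ω, algValue X τ ω ∂μ := by
  classical
  -- basic facts
  set M : Ω → ℝ := fun ω => Finset.univ.sup' Finset.univ_nonempty (fun i => Z i ω) with hMdef
  have hXmeas : ∀ i, Measurable (X i) := by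
    intro i
    have : X i = fun ω => Z i ω + W i ω := funext (hX i)
    rw [this]; exact (hZmeas i).add (hWmeas i)
  have hXint : ∀ i, Integrable (X i) μ := by
    intro i
    have : X i = fun ω => Z i ω + W i ω := funext (hX i)
    rw [this]; exact (hZint i).add (hWint i)
  have hZX : ∀ i ω, Z i ω ≤ X i ω := fun i ω => by
    rw [hX i ω]; linarith [hWnn i ω]
  have hMmeas : Measurable M := by
    have : M = Finset.univ.sup' Finset.univ_nonempty Z := by
      funext ω; rw [hMdef]; simp [Finset.sup'_apply]
    rw [this]
    exact Finset.measurable_sup' Finset.univ_nonempty (fun i _ => hZmeas i)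
  have hMle : ∀ ω, M ω ≤ ∑ i, Z i ω := by
    intro ω
    obtain ⟨i0, -, hi0⟩ := Finset.exists_mem_eq_sup' Finset.univ_nonempty (fun i => Z i ω)
    rw [hMdef]
    simp only
    rw [hi0]
    exact Finset.single_le_sum (fun j _ => hZnn j ω) (Finset.mem_univ i0)
  have hMnn : ∀ ω, 0 ≤ M ω := by
    intro ω
    exact le_trans (hZnn 0 ω) (Finset.le_sup' (fun i => Z i ω) (Finset.mem_univ 0))
  have hMint : Integrable M μ := by
    refine Integrable.mono' (integrable_finset_sum Finset.univ (fun i _ => hZint i))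
      hMmeas.aestronglyMeasurable (ae_of_all _ fun ω => ?_)
    rw [Real.norm_eq_abs, abs_of_nonneg (hMnn ω)]
    exact hMle ω
  have hIM : ∫ ω, M ω ∂μ = 2 * τ := by rw [hτ]; ring
  have hτnn : 0 ≤ τ := by
    rw [hτ]
    have : 0 ≤ ∫ ω, M ω ∂μ := integral_nonneg hMnn
    linarith
  -- sets
  set A : Set Ω := {ω | ∃ i, τ ≤ X i ω} with hAdef
  have hAmeas : MeasurableSet A := by
    have : A = ⋃ i, {ω | τ ≤ X i ω} := by
      ext ω; simp [hAdef]
    rw [this]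
    exact MeasurableSet.iUnion fun i => measurableSet_le measurable_const (hXmeas i)
  set B : Fin (n + 1) → Set Ω := fun i => {ω | ∀ j, j < i → X j ω < τ} with hBdef
  have hBmeas : ∀ i, MeasurableSet (B i) := by
    intro i
    have : B i = ⋂ j, ⋂ (_ : j < i), {ω | X j ω < τ} := by
      ext ω; simp [hBdef]
    rw [this]
    exact MeasurableSet.iInter fun j => MeasurableSet.iInter fun _ =>
      measurableSet_lt (hXmeas j) measurable_const
  have hAcB : ∀ i, Aᶜ ⊆ B i := by
    intro i ω hω j _
    have h' : ¬ ∃ k, τ ≤ X k ω := hω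
    push_neg at h'
    exact h' j
  set a : ℝ := (μ A).toReal with hadef
  set b : Fin (n + 1) → ℝ := fun i => (μ (B i)).toReal with hbdef
  have ha0 : 0 ≤ a := ENNReal.toReal_nonneg
  have ha1 : a ≤ 1 := by
    rw [hadef]
    exact (ENNReal.toReal_le_toReal (measure_ne_top μ A) (by simp)).mpr prob_le_one |>.trans
      (by simp)
  have hbge : ∀ i, 1 - a ≤ b i := by
    intro i
    have h1 : μ Aᶜ = 1 - μ A := prob_compl_eq_one_sub hAmeas
    have h2 : (μ Aᶜ).toReal = 1 - a := by
      rw [h1, ENNReal.toReal_sub_of_le prob_le_one ENNReal.one_ne_top, ENNReal.toReal_one, hadef]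
    rw [← h2]
    exact ENNReal.toReal_mono (measure_ne_top μ _) (measure_mono (hAcB i))
  -- independence identity
  set c : Fin (n + 1) → ℝ := fun i => ∫ ω, max (Z i ω - τ) 0 ∂μ with hcdef
  have hcnn : ∀ i, 0 ≤ c i := fun i => integral_nonneg fun ω => le_max_right _ _
  have hkey : ∀ i, ∫ ω, max (Z i ω - τ) 0 * (B i).indicator (fun _ => (1:ℝ)) ω ∂μ
      = c i * b i := by
    intro i
    set V : Ω → ({ j : Fin (n + 1) // j < i } → ℝ) := fun ω => fun j => X j ω with hVdef
    set S : Set ({ j : Fin (n + 1) // j < i } → ℝ) := {v | ∀ j, v j < τ} with hSdef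
    have hSmeas : MeasurableSet S := by
      have : S = ⋂ j, {v | v j < τ} := by ext v; simp [hSdef]
      rw [this]
      exact MeasurableSet.iInter fun j => measurableSet_lt (measurable_pi_apply j)
        measurable_const
    set φ : ℝ → ℝ := fun x => max (x - τ) 0 with hφdef
    set ψ : ({ j : Fin (n + 1) // j < i } → ℝ) → ℝ := S.indicator (fun _ => 1) with hψdef
    have hφm : Measurable φ := (measurable_id.sub measurable_const).max measurable_const
    have hψm : Measurable ψ := measurable_const.indicator hSmeas
    have hind : IndepFun (φ ∘ Z i) (ψ ∘ V) μ := (hindep i).comp hφm hψm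
    have heq : (fun ω => max (Z i ω - τ) 0 * (B i).indicator (fun _ => (1:ℝ)) ω)
        = (φ ∘ Z i) * (ψ ∘ V) := by
      funext ω
      have hmem : ω ∈ B i ↔ V ω ∈ S := by
        simp only [hBdef, hVdef, hSdef, Set.mem_setOf_eq, Subtype.forall]
      simp only [Pi.mul_apply, Function.comp_apply, hφdef, hψdef]
      by_cases hω : ω ∈ B i
      · rw [Set.indicator_of_mem hω, Set.indicator_of_mem (hmem.mp hω)]
      · rw [Set.indicator_of_notMem hω, Set.indicator_of_notMem (fun h => hω (hmem.mpr h))]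
    rw [heq, hind.integral_mul_eq_mul_integral
      (hφm.comp (hZmeas i)).aestronglyMeasurable
      (hψm.comp (measurable_pi_lambda _ fun j => hXmeas j)).aestronglyMeasurable]
    congr 1
    have : (ψ ∘ V) = (B i).indicator (fun _ => (1:ℝ)) := by
      funext ω
      have hmem : ω ∈ B i ↔ V ω ∈ S := by
        simp only [hBdef, hVdef, hSdef, Set.mem_setOf_eq, Subtype.forall]
      simp only [Function.comp_apply, hψdef]
      by_cases hω : ω ∈ B i
      · rw [Set.indicator_of_mem hω, Set.indicator_of_mem (hmem.mp hω)]
      · rw [Set.indicator_of_notMem hω, Set.indicator_of_notMem (fun h => hω (hmem.mpr h))]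
    rw [this, hbdef]
    exact integral_indicator_one (hBmeas i)
  -- helper bounds
  have hind_nn : ∀ (s : Set Ω) (ω : Ω), 0 ≤ s.indicator (fun _ => (1:ℝ)) ω :=
    fun s ω => Set.indicator_apply_nonneg fun _ => zero_le_one
  have htermle : ∀ (i : Fin (n+1)) ω,
      max (Z i ω - τ) 0 * (B i).indicator (fun _ => (1:ℝ)) ω ≤ max (Z i ω - τ) 0 := by
    intro i ω
    by_cases hω : ω ∈ B i
    · rw [Set.indicator_of_mem hω, mul_one]
    · rw [Set.indicator_of_notMem hω, mul_zero]
      exact le_max_right _ _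
  have htermnn : ∀ (i : Fin (n+1)) ω,
      0 ≤ max (Z i ω - τ) 0 * (B i).indicator (fun _ => (1:ℝ)) ω :=
    fun i ω => mul_nonneg (le_max_right _ _) (hind_nn _ ω)
  have hmaxle : ∀ (i : Fin (n+1)) ω, max (Z i ω - τ) 0 ≤ Z i ω + |τ| := by
    intro i ω
    refine max_le (by linarith [neg_abs_le τ]) (by linarith [hZnn i ω, abs_nonneg τ])
  -- integrability
  have hmax_int : ∀ i, Integrable (fun ω => max (Z i ω - τ) 0) μ := by
    intro i
    refine Integrable.mono' ((hZint i).add (integrable_const |τ|))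
      (((hZmeas i).sub measurable_const).max measurable_const).aestronglyMeasurable
      (ae_of_all _ fun ω => ?_)
    rw [Real.norm_eq_abs, abs_of_nonneg (le_max_right _ _)]
    exact hmaxle i ω
  have hterm_int : ∀ i, Integrable
      (fun ω => max (Z i ω - τ) 0 * (B i).indicator (fun _ => (1:ℝ)) ω) μ := by
    intro i
    refine Integrable.mono' ((hZint i).add (integrable_const |τ|))
      ((((hZmeas i).sub measurable_const).max measurable_const).mul
        (measurable_const.indicator (hBmeas i))).aestronglyMeasurable
      (ae_of_all _ fun ω => ?_)
    rw [Real.norm_eq_abs, abs_of_nonneg (htermnn i ω)]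
    exact le_trans (htermle i ω) (hmaxle i ω)
  have halg_int : Integrable (algValue X τ) μ := by
    have heq : algValue X τ = fun ω =>
        ∑ i : Fin (n+1), if τ ≤ X i ω ∧ ∀ j, j < i → X j ω < τ then X i ω else 0 :=
      funext (algValue_eq_sum X τ)
    rw [heq]
    refine integrable_finset_sum _ fun i _ => ?_
    have hs : MeasurableSet ({ω | τ ≤ X i ω} ∩ B i) :=
      (measurableSet_le measurable_const (hXmeas i)).inter (hBmeas i)
    refine Integrable.congr ((hXint i).indicator hs) (ae_of_all _ fun ω => ?_)
    show ({ω | τ ≤ X i ω} ∩ B i).indicator (X i) ω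
        = if τ ≤ X i ω ∧ ∀ j, j < i → X j ω < τ then X i ω else 0
    by_cases h : τ ≤ X i ω ∧ ∀ j, j < i → X j ω < τ
    · have hmem : ω ∈ ({ω | τ ≤ X i ω} ∩ B i) := ⟨h.1, h.2⟩
      rw [if_pos h, Set.indicator_of_mem hmem]
    · have hmem : ω ∉ ({ω | τ ≤ X i ω} ∩ B i) := fun hmem => h ⟨hmem.1, hmem.2⟩
      rw [if_neg h, Set.indicator_of_notMem hmem]
  -- the lower-bound function
  set f : Ω → ℝ := fun ω => τ * A.indicator (fun _ => (1:ℝ)) ω +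
      ∑ i, max (Z i ω - τ) 0 * (B i).indicator (fun _ => (1:ℝ)) ω with hfdef
  have hf0 : ∀ ω, 0 ≤ f ω := by
    intro ω
    refine add_nonneg (mul_nonneg hτnn (hind_nn _ ω)) ?_
    exact Finset.sum_nonneg fun i _ => htermnn i ω
  have hfle : ∀ ω, f ω ≤ algValue X τ ω := by
    intro ω
    by_cases h : (Finset.univ.filter (fun i => τ ≤ X i ω)).Nonempty
    · set m := (Finset.univ.filter (fun i => τ ≤ X i ω)).min' h with hm
      have hmτ : τ ≤ X m ω := (Finset.mem_filter.mp (Finset.min'_mem _ h)).2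
      have hlt : ∀ j, j < m → X j ω < τ := by
        intro j hj
        by_contra hc
        push_neg at hc
        exact absurd (Finset.min'_le _ j (Finset.mem_filter.mpr ⟨Finset.mem_univ _, hc⟩))
          (not_le.mpr hj)
      have halg : algValue X τ ω = X m ω := by rw [algValue, dif_pos h]
      have hωA : ω ∈ A := ⟨m, hmτ⟩
      have hA1 : A.indicator (fun _ => (1:ℝ)) ω = 1 :=
        Set.indicator_of_mem hωA (fun _ => (1:ℝ))
      have hsum : ∑ i, max (Z i ω - τ) 0 * (B i).indicator (fun _ => (1:ℝ)) ω
          ≤ X m ω - τ := by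
        have hstep : ∀ i ∈ Finset.univ,
            max (Z i ω - τ) 0 * (B i).indicator (fun _ => (1:ℝ)) ω
              ≤ if i = m then X m ω - τ else 0 := by
          intro i _
          rcases lt_trichotomy i m with hi | hi | hi
          · rw [if_neg (ne_of_lt hi)]
            have h0 : max (Z i ω - τ) 0 = 0 :=
              max_eq_right (by linarith [hZX i ω, hlt i hi])
            rw [h0, zero_mul]
          · rw [hi, if_pos rfl]
            exact le_trans (htermle m ω) (max_le (by linarith [hZX m ω]) (by linarith))
          · rw [if_neg (ne_of_gt hi)]
            have hnB : ω ∉ B i := fun hω => absurd (hω m hi) (not_lt.mpr hmτ)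
            rw [Set.indicator_of_notMem hnB, mul_zero]
        refine le_trans (Finset.sum_le_sum hstep) ?_
        simp
      rw [halg, hfdef]
      simp only [hA1, mul_one]
      linarith
    · have halg : algValue X τ ω = 0 := by rw [algValue, dif_neg h]
      have hXlt : ∀ i, X i ω < τ := by
        intro i
        by_contra hc
        push_neg at hc
        exact h ⟨i, Finset.mem_filter.mpr ⟨Finset.mem_univ _, hc⟩⟩
      have hA0 : A.indicator (fun _ => (1:ℝ)) ω = 0 := by
        refine Set.indicator_of_notMem ?_ _
        rintro ⟨i, hi⟩
        exact absurd hi (not_le.mpr (hXlt i))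
      have hsum0 : ∑ i, max (Z i ω - τ) 0 * (B i).indicator (fun _ => (1:ℝ)) ω = 0 := by
        refine Finset.sum_eq_zero fun i _ => ?_
        have h0 : max (Z i ω - τ) 0 = 0 := max_eq_right (by linarith [hZX i ω, hXlt i])
        rw [h0, zero_mul]
      rw [halg, hfdef]
      simp only [hA0, mul_zero, hsum0, add_zero]
      exact le_refl 0

  -- integral of f
  have hf_int1 : Integrable (fun ω => τ * A.indicator (fun _ => (1:ℝ)) ω) μ :=
    ((integrable_const (1:ℝ)).indicator hAmeas).const_mul τ
  have hf_int2 : Integrable (fun ω =>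
      ∑ i, max (Z i ω - τ) 0 * (B i).indicator (fun _ => (1:ℝ)) ω) μ :=
    integrable_finset_sum _ fun i _ => hterm_int i
  have hIf : ∫ ω, f ω ∂μ = τ * a + ∑ i, c i * b i := by
    rw [hfdef]
    rw [integral_add hf_int1 hf_int2, integral_const_mul τ,
      integral_finset_sum _ fun i _ => hterm_int i]
    congr 1
    · congr 1
      rw [hadef]
      exact integral_indicator_one hAmeas
    · exact Finset.sum_congr rfl fun i _ => hkey i
  -- sum of c's is at least τ
  have h4 : τ ≤ ∑ i, c i := by
    have hpt : ∀ ω, M ω - τ ≤ ∑ i, max (Z i ω - τ) 0 := by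
      intro ω
      obtain ⟨i0, -, hi0⟩ := Finset.exists_mem_eq_sup' Finset.univ_nonempty (fun i => Z i ω)
      have h1 : M ω - τ ≤ max (Z i0 ω - τ) 0 := by
        rw [hMdef]
        simp only
        rw [hi0]
        exact le_max_left _ _
      refine le_trans h1 (Finset.single_le_sum (f := fun j => max (Z j ω - τ) 0)
        (fun j _ => le_max_right _ _) (Finset.mem_univ i0))
    have hIc : ∑ i, c i = ∫ ω, ∑ i, max (Z i ω - τ) 0 ∂μ :=
      (integral_finset_sum _ fun i _ => hmax_int i).symm
    have hmono : ∫ ω, (M ω - τ) ∂μ ≤ ∫ ω, ∑ i, max (Z i ω - τ) 0 ∂μ :=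
      integral_mono (hMint.sub (integrable_const τ))
        (integrable_finset_sum _ fun i _ => hmax_int i) hpt
    have hIMt : ∫ ω, (M ω - τ) ∂μ = τ := by
      rw [integral_sub hMint (integrable_const τ), hIM, integral_const]
      simp only [measure_univ, probReal_univ, smul_eq_mul, one_mul]
      ring
    rw [hIc]
    linarith
  -- conclude
  have hstep : τ ≤ ∫ ω, f ω ∂μ := by
    rw [hIf]
    have h2 : ∑ i, c i * (1 - a) ≤ ∑ i, c i * b i :=
      Finset.sum_le_sum fun i _ => mul_le_mul_of_nonneg_left (hbge i) (hcnn i)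
    have h3 : ∑ i, c i * (1 - a) = (∑ i, c i) * (1 - a) := (Finset.sum_mul _ _ _).symm
    have h5 : τ * (1 - a) ≤ (∑ i, c i) * (1 - a) :=
      mul_le_mul_of_nonneg_right h4 (by linarith)
    have h6 : τ * a + τ * (1 - a) = τ := by ring
    linarith
  have hmono : ∫ ω, f ω ∂μ ≤ ∫ ω, algValue X τ ω ∂μ :=
    integral_mono_of_nonneg (ae_of_all _ hf0) halg_int (ae_of_all _ hfle)
  rw [← hτ]
  linarith
end

section
/- Fix ε ∈ (0, 1/(2n)]. Let Y_1,...,Y_n be independent random variables with Y_j = 1/ε^j with probability ε^j and Y_j = 0 otherwise. Then E[max_j Y_j] ≥ n/2. -/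
open MeasureTheory ProbabilityTheory Finset

lemma tower_pointwise {n : ℕ} (ε : ℝ) (hε0 : 0 < ε) (Y : Fin (n + 1) → ℝ)
    (hval : ∀ j, Y j = (1 / ε) ^ ((j : ℕ) + 1) ∨ Y j = 0) :
    ∑ j : Fin (n + 1), Y j ≤ Finset.univ.sup' Finset.univ_nonempty Y
      + ∑ j : Fin (n + 1), ∑ k ∈ Finset.univ.erase j, ε ^ ((k : ℕ) + 1) * (Y j * Y k) := by
  have hnn : ∀ j, 0 ≤ Y j := fun j => by
    rcases hval j with h | h <;> rw [h] <;> positivity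
  have hterm : ∀ j k : Fin (n + 1), 0 ≤ ε ^ ((k : ℕ) + 1) * (Y j * Y k) := fun j k =>
    mul_nonneg (pow_nonneg hε0.le _) (mul_nonneg (hnn j) (hnn k))
  obtain ⟨j0, -, hj0⟩ := Finset.exists_mem_eq_sup' Finset.univ_nonempty Y
  have hTnn : ∀ j ∈ (Finset.univ : Finset (Fin (n+1))), 0 ≤ ∑ k ∈ Finset.univ.erase j,
      ε ^ ((k : ℕ) + 1) * (Y j * Y k) := fun j _ =>
    Finset.sum_nonneg fun k _ => hterm j k
  rcases hval j0 with hj0v | hj0v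
  · have hone : ε ^ ((j0 : ℕ) + 1) * Y j0 = 1 := by
      rw [hj0v, one_div, inv_pow]
      exact mul_inv_cancel₀ (by positivity)
    have hsum : ∑ j : Fin (n + 1), Y j = Y j0 + ∑ j ∈ Finset.univ.erase j0, Y j :=
      (Finset.add_sum_erase _ _ (Finset.mem_univ j0)).symm
    rw [hsum, ← hj0]
    gcongr
    calc ∑ j ∈ Finset.univ.erase j0, Y j
        = ∑ j ∈ Finset.univ.erase j0, ε ^ ((j0 : ℕ) + 1) * (Y j * Y j0) := by
          refine Finset.sum_congr rfl fun j _ => ?_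
          rw [mul_comm (Y j) (Y j0), ← mul_assoc, hone, one_mul]
      _ ≤ ∑ j ∈ Finset.univ.erase j0, ∑ k ∈ Finset.univ.erase j,
            ε ^ ((k : ℕ) + 1) * (Y j * Y k) := by
          refine Finset.sum_le_sum fun j hj => ?_
          have hj0mem : j0 ∈ Finset.univ.erase j := by
            simp [Finset.mem_erase, (Finset.mem_erase.1 hj).1.symm]
          exact Finset.single_le_sum
            (f := fun k : Fin (n+1) => ε ^ ((k : ℕ) + 1) * (Y j * Y k))
            (fun k _ => hterm j k) hj0mem
      _ ≤ ∑ j : Fin (n + 1), ∑ k ∈ Finset.univ.erase j,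
            ε ^ ((k : ℕ) + 1) * (Y j * Y k) :=
          Finset.sum_le_sum_of_subset_of_nonneg (Finset.subset_univ _)
            (fun j hj _ => hTnn j hj)
  · have hall : ∀ j, Y j = 0 := by
      intro j
      have h1 : Y j ≤ Finset.univ.sup' Finset.univ_nonempty Y :=
        Finset.le_sup' Y (Finset.mem_univ j)
      rw [hj0, hj0v] at h1
      exact le_antisymm h1 (hnn j)
    simp [hall, Finset.sup'_const]

/-- Tower variables: `Y j = ε^{-(j+1)}` with probability `ε^{j+1}` (else 0), independent,
for `j = 0, …, n` (i.e. `n + 1` variables).  If `ε ≤ 1/(2(n+1))` then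
`E[max_j Y_j] ≥ (n+1)/2`. -/
theorem stmt4 {Ω : Type*} [MeasurableSpace Ω] (μ : Measure Ω) [IsProbabilityMeasure μ]
    {n : ℕ} (ε : ℝ) (hε0 : 0 < ε) (hε : ε ≤ 1 / (2 * (n + 1)))
    (Y : Fin (n + 1) → Ω → ℝ) (hmeas : ∀ j, Measurable (Y j))
    (hindep : iIndepFun Y μ)
    (hval : ∀ j ω, Y j ω = (1 / ε) ^ ((j : ℕ) + 1) ∨ Y j ω = 0)
    (hprob : ∀ j, (μ {ω | Y j ω = (1 / ε) ^ ((j : ℕ) + 1)}).toReal = ε ^ ((j : ℕ) + 1)) :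
    ((n : ℝ) + 1) / 2 ≤ ∫ ω, Finset.univ.sup' Finset.univ_nonempty (fun j => Y j ω) ∂μ := by
  set c : Fin (n + 1) → ℝ := fun j => (1 / ε) ^ ((j : ℕ) + 1) with hc
  have hcpos : ∀ j, 0 < c j := fun j => by positivity
  set A : Fin (n + 1) → Set Ω := fun j => {ω | Y j ω = c j} with hA
  have hAmeas : ∀ j, MeasurableSet (A j) := fun j => hmeas j (measurableSet_singleton (c j))
  have hYind : ∀ j, Y j = (A j).indicator (fun _ => c j) := by
    intro j; funext ω
    rcases hval j ω with h | h
    · have hmem : ω ∈ A j := h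
      rw [Set.indicator_of_mem hmem, h]
    · rw [h, Set.indicator_of_notMem]
      intro hmem
      have h2 : Y j ω = c j := hmem
      rw [h] at h2
      exact (hcpos j).ne' h2.symm
  have hInt : ∀ j, Integrable (Y j) μ := fun j => by
    rw [hYind j]; exact (integrable_const _).indicator (hAmeas j)
  have hEY : ∀ j, ∫ ω, Y j ω ∂μ = 1 := by
    intro j
    rw [hYind j]
    rw [MeasureTheory.integral_indicator_const _ (hAmeas j)]
    have hμ : (μ (A j)).toReal = ε ^ ((j : ℕ) + 1) := hprob j
    rw [smul_eq_mul, measureReal_def, hμ]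
    simp only [hc, one_div, inv_pow]
    exact mul_inv_cancel₀ (by positivity)
  have hYYind : ∀ j k, (fun ω => Y j ω * Y k ω)
      = (A j ∩ A k).indicator (fun _ => c j * c k) := by
    intro j k; funext ω
    rcases hval j ω with hj | hj
    · rcases hval k ω with hk | hk
      · have hmem : ω ∈ A j ∩ A k := ⟨(hj : Y j ω = c j), (hk : Y k ω = c k)⟩
        rw [Set.indicator_of_mem hmem, hj, hk]
      · rw [hk, mul_zero, Set.indicator_of_notMem]
        intro hmem
        have h2 : Y k ω = c k := hmem.2
        rw [hk] at h2
        exact (hcpos k).ne' h2.symm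
    · rw [hj, zero_mul, Set.indicator_of_notMem]
      intro hmem
      have h2 : Y j ω = c j := hmem.1
      rw [hj] at h2
      exact (hcpos j).ne' h2.symm
  have hIntYY : ∀ j k, Integrable (fun ω => Y j ω * Y k ω) μ := fun j k => by
    rw [hYYind j k]
    exact (integrable_const _).indicator ((hAmeas j).inter (hAmeas k))
  have hEYY : ∀ j k : Fin (n + 1), j ≠ k → ∫ ω, Y j ω * Y k ω ∂μ = 1 := by
    intro j k hjk
    have := IndepFun.integral_mul_eq_mul_integral (hindep.indepFun hjk) (hmeas j).aestronglyMeasurable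
      (hmeas k).aestronglyMeasurable
    calc ∫ ω, Y j ω * Y k ω ∂μ = ∫ ω, (Y j * Y k) ω ∂μ := rfl
      _ = 1 := by rw [this, hEY j, hEY k, mul_one]
  -- max function
  set M : Ω → ℝ := fun ω => Finset.univ.sup' Finset.univ_nonempty (fun j => Y j ω) with hM
  have hMmeas : Measurable M := by
    have : M = Finset.univ.sup' Finset.univ_nonempty Y := by
      funext ω; rw [hM]; simp [Finset.sup'_apply]
    rw [this]
    exact Finset.measurable_sup' _ (fun j _ => hmeas j)
  have hYnn : ∀ j ω, 0 ≤ Y j ω := fun j ω => by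
    rcases hval j ω with h | h
    · rw [h]; exact (hcpos j).le
    · rw [h]
  have hYle : ∀ j ω, Y j ω ≤ c j := fun j ω => by
    rcases hval j ω with h | h
    · exact le_of_eq h
    · rw [h]; exact (hcpos j).le
  set C : ℝ := ∑ j : Fin (n + 1), c j with hC
  have hMbound : ∀ ω, ‖M ω‖ ≤ C := by
    intro ω
    rw [Real.norm_eq_abs, abs_le]
    have hCnn : (0 : ℝ) ≤ C := Finset.sum_nonneg fun j _ => (hcpos j).le
    constructor
    · have h0 : (0 : ℝ) ≤ Y 0 ω := hYnn 0 ω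
      have h2 : Y 0 ω ≤ M ω := Finset.le_sup' (fun j => Y j ω) (Finset.mem_univ (0 : Fin (n + 1)))
      linarith
    · refine Finset.sup'_le _ _ fun j _ => (hYle j ω).trans ?_
      exact Finset.single_le_sum (fun k _ => (hcpos k).le) (Finset.mem_univ j)
  have hMint : Integrable M μ :=
    (integrable_const C).mono' hMmeas.aestronglyMeasurable
      (Filter.Eventually.of_forall hMbound)
  -- correction term
  set T : Ω → ℝ := fun ω => ∑ j : Fin (n + 1), ∑ k ∈ Finset.univ.erase j,
      ε ^ ((k : ℕ) + 1) * (Y j ω * Y k ω) with hT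
  have hTint : Integrable T μ := by
    refine integrable_finset_sum _ fun j _ => integrable_finset_sum _ fun k _ => ?_
    exact (hIntYY j k).const_mul _
  have hSint : Integrable (fun ω => ∑ j : Fin (n + 1), Y j ω) μ :=
    integrable_finset_sum _ fun j _ => hInt j
  have hkey : ∀ ω, (∑ j : Fin (n + 1), Y j ω) - T ω ≤ M ω := by
    intro ω
    have := tower_pointwise ε hε0 (fun j => Y j ω) (fun j => hval j ω)
    rw [hM, hT]
    linarith
  have hmono : ∫ ω, ((∑ j : Fin (n + 1), Y j ω) - T ω) ∂μ ≤ ∫ ω, M ω ∂μ :=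
    integral_mono (hSint.sub hTint) hMint hkey
  have hES : ∫ ω, (∑ j : Fin (n + 1), Y j ω) ∂μ = (n : ℝ) + 1 := by
    rw [integral_finset_sum _ fun j _ => hInt j]
    simp [hEY]
  have hET : ∫ ω, T ω ∂μ = ∑ j : Fin (n + 1), ∑ k ∈ Finset.univ.erase j,
      ε ^ ((k : ℕ) + 1) := by
    rw [hT]
    rw [integral_finset_sum _ fun j _ => integrable_finset_sum _ fun k _ =>
      (hIntYY j k).const_mul _]
    refine Finset.sum_congr rfl fun j _ => ?_
    rw [integral_finset_sum _ fun k _ => (hIntYY j k).const_mul _]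
    refine Finset.sum_congr rfl fun k hk => ?_
    rw [MeasureTheory.integral_const_mul, hEYY j k (Finset.mem_erase.1 hk).1.symm, mul_one]
  have hεle : ∀ k : ℕ, ε ^ (k + 1) ≤ ε := by
    intro k
    have hε1 : ε ≤ 1 := by
      refine hε.trans ?_
      rw [div_le_one (by positivity)]
      nlinarith [Nat.cast_nonneg (α := ℝ) n]
    calc ε ^ (k + 1) = ε ^ k * ε := by rw [pow_succ]
      _ ≤ 1 * ε := by
          have := pow_le_one₀ hε0.le hε1 (n := k)
          nlinarith
      _ = ε := one_mul ε
  have hBT : ∫ ω, T ω ∂μ ≤ ((n : ℝ) + 1) / 2 := by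
    rw [hET]
    have h1 : ∀ j : Fin (n + 1), ∑ k ∈ Finset.univ.erase j, ε ^ ((k : ℕ) + 1)
        ≤ ((n : ℝ) + 1) * ε := by
      intro j
      calc ∑ k ∈ Finset.univ.erase j, ε ^ ((k : ℕ) + 1)
          ≤ ∑ k : Fin (n + 1), ε ^ ((k : ℕ) + 1) :=
            Finset.sum_le_sum_of_subset_of_nonneg (Finset.subset_univ _)
              (fun k _ _ => by positivity)
        _ ≤ ∑ _k : Fin (n + 1), ε := Finset.sum_le_sum fun k _ => hεle k
        _ = ((n : ℝ) + 1) * ε := by simp [mul_comm]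
    calc ∑ j : Fin (n + 1), ∑ k ∈ Finset.univ.erase j, ε ^ ((k : ℕ) + 1)
        ≤ ∑ _j : Fin (n + 1), ((n : ℝ) + 1) * ε := Finset.sum_le_sum fun j _ => h1 j
      _ = ((n : ℝ) + 1) * (((n : ℝ) + 1) * ε) := by simp [mul_comm]
      _ ≤ ((n : ℝ) + 1) / 2 := by
          have hn : (0 : ℝ) < (n : ℝ) + 1 := by positivity
          have h2 : ε * (2 * ((n : ℝ) + 1)) ≤ 1 := by
            rw [← le_div_iff₀ (by positivity)]
            exact hε
          nlinarith
  have := integral_sub hSint hTint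
  rw [integral_sub hSint hTint, hES] at hmono
  linarith
end

section
/- Fix ε ∈ (0, 1/n]. Consider the 2-sparse tower instance: independent Y_1,...,Y_n with Y_j = 1/ε^j with probability ε^j and 0 otherwise, and X_i = Y_i + ε·Y_{i+1} for i < n, X_n = Y_n. For every fixed threshold τ ≥ 0, the algorithm that accepts the first X_i with X_i ≥ τ has expected reward at most 3. -/
open MeasureTheory ProbabilityTheory Finset

/-- On the 2-sparse tower instance `X_i = Y_i + ε·Y_{i+1}` (and `X_n = Y_n`) with tower
variables `Y_j = ε^{-(j+1)}` w.p. `ε^{j+1}`, any fixed-threshold algorithm has expected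
reward at most 3, provided `0 < ε ≤ 1/(n+1)`. -/
theorem stmt5 {Ω : Type*} [MeasurableSpace Ω] (μ : Measure Ω) [IsProbabilityMeasure μ]
    {n : ℕ} (ε : ℝ) (hε0 : 0 < ε) (hε : ε ≤ 1 / (n + 1))
    (Y X : Fin (n + 1) → Ω → ℝ) (hmeas : ∀ j, Measurable (Y j))
    (hindep : iIndepFun Y μ)
    (hval : ∀ j ω, Y j ω = (1 / ε) ^ ((j : ℕ) + 1) ∨ Y j ω = 0)
    (hprob : ∀ j, (μ {ω | Y j ω = (1 / ε) ^ ((j : ℕ) + 1)}).toReal = ε ^ ((j : ℕ) + 1))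
    (hX : ∀ (i : Fin (n + 1)) ω,
      X i ω = Y i ω + (if h : (i : ℕ) + 1 < n + 1 then ε * Y ⟨(i : ℕ) + 1, h⟩ ω else 0))
    (τ : ℝ) (hτ : 0 ≤ τ) :
    ∫ ω, algValue X τ ω ∂μ ≤ 3 := by
  classical
  have hεne : ε ≠ 0 := hε0.ne'
  have hn1 : (0:ℝ) < (n:ℝ) + 1 := by positivity
  have hnε : ε * ((n:ℝ) + 1) ≤ 1 := by
    rw [← le_div_iff₀ hn1] at *; exact hε
  have hε1 : ε ≤ 1 := by
    nlinarith [Nat.cast_nonneg (α := ℝ) n]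
  have hinv1 : (1:ℝ) ≤ 1 / ε := by
    rw [le_div_iff₀ hε0]; simpa using hε1
  have hpow_pos : ∀ k : ℕ, (0:ℝ) < (1 / ε) ^ k := fun k => by positivity
  have hstep : ∀ k : ℕ, ε * (1 / ε) ^ (k + 1) = (1 / ε) ^ k := by
    intro k
    rw [pow_succ]
    field_simp
  have hcancel : ∀ k : ℕ, ε ^ k * (1 / ε) ^ k = 1 := by
    intro k
    rw [← mul_pow]
    field_simp
    simp
  have hpmono : ∀ {a b : ℕ}, a ≤ b → (1 / ε) ^ a ≤ (1 / ε) ^ b := fun hab =>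
    pow_le_pow_right₀ hinv1 hab
  -- basic facts about Y, X
  have hYnonneg : ∀ j ω, 0 ≤ Y j ω := by
    intro j ω
    rcases hval j ω with h | h <;> rw [h]
    · exact (hpow_pos _).le
  have hYle : ∀ j ω, Y j ω ≤ (1 / ε) ^ ((j : ℕ) + 1) := by
    intro j ω
    rcases hval j ω with h | h <;> rw [h]
    · exact (hpow_pos _).le
  have hX0 : ∀ i ω, 0 ≤ X i ω := by
    intro i ω
    rw [hX]
    refine add_nonneg (hYnonneg i ω) ?_
    split_ifs with h
    · exact mul_nonneg hε0.le (hYnonneg _ ω)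
    · exact le_refl 0
  -- the sets where Y j is "set"
  set S : Fin (n + 1) → Set Ω := fun j => {ω | Y j ω = (1 / ε) ^ ((j : ℕ) + 1)} with hSdef
  have hSmeas : ∀ j, MeasurableSet (S j) := fun j =>
    (hmeas j) (measurableSet_singleton ((1 / ε) ^ ((j : ℕ) + 1)))
  have hSne : ∀ j ω, Y j ω ≠ 0 ↔ ω ∈ S j := by
    intro j ω
    constructor
    · intro h
      exact (hval j ω).resolve_right h
    · intro h
      have : Y j ω = (1 / ε) ^ ((j : ℕ) + 1) := h
      rw [this]
      exact (hpow_pos _).ne'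
  have hYrep : ∀ j, Y j = fun ω => Set.indicator (S j) (fun _ => (1 / ε) ^ ((j : ℕ) + 1)) ω := by
    intro j
    funext ω
    by_cases h : ω ∈ S j
    · rw [Set.indicator_of_mem h]
      exact h
    · rw [Set.indicator_of_notMem h]
      by_contra hne
      exact h ((hSne j ω).mp hne)
  have hYint : ∀ j, Integrable (Y j) μ := by
    intro j
    rw [hYrep j]
    exact (integrable_const _).indicator (hSmeas j)
  have hYintval : ∀ j, ∫ ω, Y j ω ∂μ = 1 := by
    intro j
    rw [hYrep j]
    rw [integral_indicator_const _ (hSmeas j), smul_eq_mul]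
    have := hprob j
    rw [show μ.real (S j) = (μ {ω | Y j ω = (1 / ε) ^ ((j : ℕ) + 1)}).toReal from rfl, this]
    exact hcancel _
  have hXeq : ∀ i, X i = fun ω =>
      Y i ω + (if h : (i : ℕ) + 1 < n + 1 then ε * Y ⟨(i : ℕ) + 1, h⟩ ω else 0) := by
    intro i; funext ω; exact hX i ω
  have hXint : ∀ i, Integrable (X i) μ := by
    intro i
    rw [hXeq i]
    by_cases h : (i : ℕ) + 1 < n + 1
    · simp only [dif_pos h]
      exact (hYint i).add ((hYint _).const_mul ε)
    · simp only [dif_neg h, add_zero]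
      exact hYint i
  have hXintval : ∀ i, ∫ ω, X i ω ∂μ ≤ 1 + ε := by
    intro i
    rw [hXeq i]
    by_cases h : (i : ℕ) + 1 < n + 1
    · simp only [dif_pos h]
      rw [integral_add (hYint i) ((hYint _).const_mul ε), integral_const_mul,
        hYintval, hYintval]
      simp
    · simp only [dif_neg h, add_zero]
      rw [hYintval]
      linarith
  -- the special "first feasible" predicate
  set spec : Fin (n + 1) → Prop := fun i =>
    τ ≤ (1 / ε) ^ ((i : ℕ) + 1) ∧
      ∀ j : Fin (n + 1), j < i → ¬ τ ≤ (1 / ε) ^ ((j : ℕ) + 1) with hspecdef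
  -- the bounding function
  set B : Fin (n + 1) → Ω → ℝ := fun i ω =>
    if spec i then X i ω
    else if τ ≤ (1 / ε) ^ ((i : ℕ) + 1) then
      (if h : (i : ℕ) + 1 < n + 1 then
        Set.indicator (S ⟨(i : ℕ) + 1, h⟩) (fun _ => (1 / ε) ^ ((i : ℕ) + 1)) ω else 0)
    else
      (if h : (i : ℕ) + 1 < n + 1 then
        Set.indicator (S i ∩ S ⟨(i : ℕ) + 1, h⟩)
          (fun _ => 2 * (1 / ε) ^ ((i : ℕ) + 1)) ω else 0) with hBdef
  have hBnn : ∀ i ω, 0 ≤ B i ω := by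
    intro i ω
    rw [hBdef]
    dsimp only
    split_ifs with h1 h2 h3 h4
    · exact hX0 i ω
    · exact Set.indicator_nonneg (fun _ _ => (hpow_pos _).le) ω
    · exact le_refl 0
    · exact Set.indicator_nonneg (fun _ _ => by positivity) ω
    · exact le_refl 0
  have hBint : ∀ i, Integrable (B i) μ := by
    intro i
    rw [hBdef]
    dsimp only
    split_ifs with h1 h2 h3 h4
    · exact hXint i
    · exact (integrable_const _).indicator (hSmeas _)
    · exact integrable_const 0
    · exact (integrable_const _).indicator ((hSmeas _).inter (hSmeas _))
    · exact integrable_const 0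
  -- independence computation
  have hIndep2 : ∀ (i : Fin (n + 1)) (h : (i : ℕ) + 1 < n + 1),
      μ (S i ∩ S ⟨(i : ℕ) + 1, h⟩) = μ (S i) * μ (S ⟨(i : ℕ) + 1, h⟩) := by
    intro i h
    have hne : i ≠ ⟨(i : ℕ) + 1, h⟩ := by
      intro hc
      have := congrArg Fin.val hc
      simp at this
    have h2 := hindep.indepFun hne
    have h3 := h2.measure_inter_preimage_eq_mul
      {(1 / ε) ^ ((i : ℕ) + 1)} {(1 / ε) ^ ((i : ℕ) + 1 + 1)}
      (measurableSet_singleton _) (measurableSet_singleton _)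
    exact h3
  -- integral bound for B
  have hBval : ∀ i, ∫ ω, B i ω ∂μ ≤
      (if (i : ℕ) < n then ε + 2 * ε ^ 2 else 0) + (if spec i then 1 + ε else 0) := by
    intro i
    have hrhs1 : (0:ℝ) ≤ (if (i : ℕ) < n then ε + 2 * ε ^ 2 else 0) := by
      split_ifs
      · positivity
      · exact le_refl 0
    rw [hBdef]
    dsimp only
    by_cases h1 : spec i
    · simp only [if_pos h1]
      linarith [hXintval i]
    · simp only [if_neg h1, add_zero]
      by_cases h2 : τ ≤ (1 / ε) ^ ((i : ℕ) + 1)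
      · simp only [if_pos h2]
        by_cases h3 : (i : ℕ) + 1 < n + 1
        · simp only [dif_pos h3]
          rw [integral_indicator_const _ (hSmeas _), smul_eq_mul]
          have hp : μ.real (S ⟨(i : ℕ) + 1, h3⟩) = ε ^ ((i : ℕ) + 1 + 1) := hprob _
          rw [hp, if_pos (by omega : (i : ℕ) < n)]
          have : ε ^ ((i : ℕ) + 1 + 1) * (1 / ε) ^ ((i : ℕ) + 1)
              = ε * (ε ^ ((i : ℕ) + 1) * (1 / ε) ^ ((i : ℕ) + 1)) := by ring
          rw [this, hcancel]
          nlinarith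
        · simp only [dif_neg h3, integral_zero]
          simpa using hrhs1
      · simp only [if_neg h2]
        by_cases h3 : (i : ℕ) + 1 < n + 1
        · simp only [dif_pos h3]
          rw [integral_indicator_const _ ((hSmeas _).inter (hSmeas _)), smul_eq_mul]
          rw [measureReal_def, hIndep2 i h3, ENNReal.toReal_mul]
          have hp1 : (μ (S i)).toReal = ε ^ ((i : ℕ) + 1) := hprob _
          have hp2 : (μ (S ⟨(i : ℕ) + 1, h3⟩)).toReal = ε ^ ((i : ℕ) + 1 + 1) := hprob _
          rw [hp1, hp2, if_pos (by omega : (i : ℕ) < n)]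
          have heq : ε ^ ((i : ℕ) + 1) * ε ^ ((i : ℕ) + 1 + 1)
              * (2 * (1 / ε) ^ ((i : ℕ) + 1))
              = 2 * ε ^ ((i : ℕ) + 1 + 1) * (ε ^ ((i : ℕ) + 1) * (1 / ε) ^ ((i : ℕ) + 1)) := by
            ring
          rw [heq, hcancel, mul_one]
          have hpowle : ε ^ ((i : ℕ) + 1 + 1) ≤ ε ^ 2 := by
            refine pow_le_pow_of_le_one hε0.le hε1 ?_
            omega
          nlinarith
        · simp only [dif_neg h3, integral_zero]
          simpa using hrhs1
  -- pointwise bound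
  have hpoint : ∀ ω, algValue X τ ω ≤ ∑ i, B i ω := by
    intro ω
    unfold algValue
    split_ifs with hne
    · set F := Finset.univ.filter (fun i => τ ≤ X i ω) with hF
      set i := F.min' hne with hi
      have hiF : i ∈ F := F.min'_mem hne
      have hiτ : τ ≤ X i ω := (Finset.mem_filter.mp hiF).2
      have hmin : ∀ j : Fin (n + 1), j < i → X j ω < τ := by
        intro j hj
        by_contra hc
        push_neg at hc
        have hle : i ≤ j := F.min'_le j (Finset.mem_filter.mpr ⟨mem_univ _, hc⟩)
        exact absurd hj (not_lt.mpr hle)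
      have key : X i ω ≤ B i ω := by
        by_cases hs : spec i
        · rw [hBdef]; dsimp only; rw [if_pos hs]
        · rw [hBdef]; dsimp only; rw [if_neg hs]
          by_cases h2 : τ ≤ (1 / ε) ^ ((i : ℕ) + 1)
          · rw [if_pos h2]
            have hex : ∃ j : Fin (n + 1), j < i ∧ τ ≤ (1 / ε) ^ ((j : ℕ) + 1) := by
              by_contra hno
              push_neg at hno
              exact hs ⟨h2, fun j hj hjτ => (hno j hj).not_ge hjτ⟩
            obtain ⟨j, hji, hjτ⟩ := hex
            have hji' : (j : ℕ) < (i : ℕ) := hji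
            have hi1 : 1 ≤ (i : ℕ) := by omega
            have hI'lt : (i : ℕ) - 1 < n + 1 := by omega
            set I' : Fin (n + 1) := ⟨(i : ℕ) - 1, hI'lt⟩ with hI'
            have hI'i : I' < i := by
              show (i : ℕ) - 1 < (i : ℕ)
              omega
            have hXI' : X I' ω < τ := hmin I' hI'i
            have h4 : (I' : ℕ) + 1 < n + 1 := by
              show (i : ℕ) - 1 + 1 < n + 1
              omega
            have hII : (⟨(I' : ℕ) + 1, h4⟩ : Fin (n + 1)) = i := by
              apply Fin.ext
              show (i : ℕ) - 1 + 1 = (i : ℕ)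
              omega
            have hXI'eq : X I' ω = Y I' ω + ε * Y i ω := by
              rw [hX, dif_pos h4, hII]
            -- Y i must vanish
            have hYi0 : Y i ω = 0 := by
              by_contra hY
              have hYi : Y i ω = (1 / ε) ^ ((i : ℕ) + 1) := (hval i ω).resolve_right hY
              have h5 : ε * Y i ω = (1 / ε) ^ (i : ℕ) := by rw [hYi, hstep]
              have h6 : (1 / ε) ^ ((j : ℕ) + 1) ≤ (1 / ε) ^ (i : ℕ) := hpmono (by omega)
              have h7 : τ ≤ X I' ω := by
                rw [hXI'eq, h5]
                have := hYnonneg I' ω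
                linarith
              linarith
            by_cases h3 : (i : ℕ) + 1 < n + 1
            · rw [dif_pos h3]
              have hXi : X i ω = ε * Y ⟨(i : ℕ) + 1, h3⟩ ω := by
                rw [hX, dif_pos h3, hYi0, zero_add]
              by_cases hY1 : Y ⟨(i : ℕ) + 1, h3⟩ ω = 0
              · rw [hXi, hY1, mul_zero]
                exact Set.indicator_nonneg (fun _ _ => (hpow_pos _).le) ω
              · have hmem : ω ∈ S ⟨(i : ℕ) + 1, h3⟩ := (hSne _ ω).mp hY1
                rw [Set.indicator_of_mem hmem]
                have hYv : Y ⟨(i : ℕ) + 1, h3⟩ ω = (1 / ε) ^ ((i : ℕ) + 1 + 1) :=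
                  (hval _ ω).resolve_right hY1
                rw [hXi, hYv, hstep]
            · rw [dif_neg h3]
              have : X i ω = Y i ω := by rw [hX, dif_neg h3, add_zero]
              rw [this, hYi0]
          · rw [if_neg h2]
            push_neg at h2
            have h3 : (i : ℕ) + 1 < n + 1 := by
              by_contra hc
              have hXY : X i ω = Y i ω := by rw [hX, dif_neg hc, add_zero]
              have := hYle i ω
              rw [hXY] at hiτ
              linarith
            rw [dif_pos h3]
            have hXi : X i ω = Y i ω + ε * Y ⟨(i : ℕ) + 1, h3⟩ ω := by
              rw [hX, dif_pos h3]
            have hYi : Y i ω ≠ 0 := by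
              intro h0
              rw [h0, zero_add] at hXi
              have hb : ε * Y ⟨(i : ℕ) + 1, h3⟩ ω ≤ (1 / ε) ^ ((i : ℕ) + 1) := by
                calc ε * Y ⟨(i : ℕ) + 1, h3⟩ ω
                    ≤ ε * (1 / ε) ^ ((i : ℕ) + 1 + 1) :=
                      mul_le_mul_of_nonneg_left (hYle _ ω) hε0.le
                  _ = (1 / ε) ^ ((i : ℕ) + 1) := hstep _
              rw [hXi] at hiτ
              linarith
            have hYi1 : Y ⟨(i : ℕ) + 1, h3⟩ ω ≠ 0 := by
              intro h0
              rw [h0, mul_zero, add_zero] at hXi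
              have := hYle i ω
              rw [hXi] at hiτ
              linarith
            have hmem : ω ∈ S i ∩ S ⟨(i : ℕ) + 1, h3⟩ :=
              ⟨(hSne _ ω).mp hYi, (hSne _ ω).mp hYi1⟩
            rw [Set.indicator_of_mem hmem]
            have hYv : Y i ω = (1 / ε) ^ ((i : ℕ) + 1) := (hval _ ω).resolve_right hYi
            have hYv1 : Y ⟨(i : ℕ) + 1, h3⟩ ω = (1 / ε) ^ ((i : ℕ) + 1 + 1) :=
              (hval _ ω).resolve_right hYi1
            rw [hXi, hYv, hYv1, hstep]
            ring_nf
            exact le_refl _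
      exact key.trans (Finset.single_le_sum (fun j _ => hBnn j ω) (mem_univ i))
    · exact Finset.sum_nonneg (fun i _ => hBnn i ω)
  have halgnn : ∀ ω, 0 ≤ algValue X τ ω := by
    intro ω
    unfold algValue
    split_ifs with h
    · exact hX0 _ ω
    · exact le_refl 0
  -- assemble
  have hmain : ∫ ω, algValue X τ ω ∂μ ≤ ∑ i, ∫ ω, B i ω ∂μ := by
    calc ∫ ω, algValue X τ ω ∂μ ≤ ∫ ω, ∑ i, B i ω ∂μ :=
          integral_mono_of_nonneg (ae_of_all _ halgnn)
            (integrable_finset_sum _ (fun i _ => hBint i)) (ae_of_all _ hpoint)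
      _ = ∑ i, ∫ ω, B i ω ∂μ := integral_finset_sum _ (fun i _ => hBint i)
  have hsum : ∑ i, ∫ ω, B i ω ∂μ ≤
      (n : ℝ) * (ε + 2 * ε ^ 2) + (1 + ε) := by
    calc ∑ i, ∫ ω, B i ω ∂μ
        ≤ ∑ i : Fin (n + 1),
            ((if (i : ℕ) < n then ε + 2 * ε ^ 2 else 0) + (if spec i then 1 + ε else 0)) :=
          Finset.sum_le_sum (fun i _ => hBval i)
      _ = (∑ i : Fin (n + 1), (if (i : ℕ) < n then ε + 2 * ε ^ 2 else 0))
            + ∑ i : Fin (n + 1), (if spec i then 1 + ε else 0) := Finset.sum_add_distrib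
      _ ≤ (n : ℝ) * (ε + 2 * ε ^ 2) + (1 + ε) := by
          gcongr
          · -- first sum
            rw [Fin.sum_univ_castSucc]
            have hlast : ¬ ((Fin.last n : Fin (n + 1)) : ℕ) < n := by simp
            rw [if_neg hlast, add_zero]
            have heach : ∀ i : Fin n,
                (if ((Fin.castSucc i : Fin (n + 1)) : ℕ) < n then ε + 2 * ε ^ 2 else 0)
                  = ε + 2 * ε ^ 2 := by
              intro i
              rw [if_pos]
              exact i.isLt
            rw [Finset.sum_congr rfl (fun i _ => heach i), Finset.sum_const, nsmul_eq_mul, Finset.card_univ, Fintype.card_fin]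
          · -- second sum
            have hcard : (Finset.univ.filter spec).card ≤ 1 := by
              rw [Finset.card_le_one]
              intro a ha b hb
              have hsa : spec a := (Finset.mem_filter.mp ha).2
              have hsb : spec b := (Finset.mem_filter.mp hb).2
              rcases lt_trichotomy a b with h | h | h
              · exact absurd hsa.1 (hsb.2 a h)
              · exact h
              · exact absurd hsb.1 (hsa.2 b h)
            calc ∑ i : Fin (n + 1), (if spec i then 1 + ε else 0)
                = ∑ i ∈ Finset.univ.filter spec, (1 + ε) := by
                  rw [Finset.sum_filter]
              _ = ((Finset.univ.filter spec).card : ℝ) * (1 + ε) := by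
                  rw [Finset.sum_const, nsmul_eq_mul]
              _ ≤ 1 * (1 + ε) := by
                  apply mul_le_mul_of_nonneg_right _ (by linarith)
                  exact_mod_cast hcard
              _ = 1 + ε := one_mul _
  have hfinal : (n : ℝ) * (ε + 2 * ε ^ 2) + (1 + ε) ≤ 3 := by
    have hn0 : (0:ℝ) ≤ (n : ℝ) := Nat.cast_nonneg n
    have h1 : (n : ℝ) * ε ≤ 1 - ε := by nlinarith
    nlinarith [sq_nonneg (2 * ε - 1), mul_le_mul_of_nonneg_right h1 hε0.le,
      mul_nonneg hn0 (sq_nonneg ε), mul_nonneg hn0 hε0.le]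
  linarith [hmain, hsum]
end

section
/- Fix ε ∈ (0, 1/2) with ε^n < 2, and the tower variables Y_j = 1/ε^j with probability ε^j (else 0), independent, with X_i = Σ_{j≥i} ε^{j−i} Y_j for i = 1,...,n. Then Pr[∃ j > i with Y_j = 1/ε^j | X_i = 1/ε^i] ≤ ε. -/
open MeasureTheory ProbabilityTheory Finset

/-- General tower instance `X_i = Σ_{j ≥ i} ε^{j−i} Y_j` with tower variables
`Y_j = ε^{-(j+1)}` w.p. `ε^{j+1}`:  conditioned on `X_i = ε^{-(i+1)}`, the probability
that some `Y_j` with `j > i` is active is at most `ε`. -/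
theorem stmt6 {Ω : Type*} [MeasurableSpace Ω] (μ : Measure Ω) [IsProbabilityMeasure μ]
    {n : ℕ} (ε : ℝ) (hε0 : 0 < ε) (hε : ε < 1 / 2) (hεn : ε ^ (n + 1) < 2)
    (Y X : Fin (n + 1) → Ω → ℝ) (hmeas : ∀ j, Measurable (Y j))
    (hindep : iIndepFun Y μ)
    (hval : ∀ j ω, Y j ω = (1 / ε) ^ ((j : ℕ) + 1) ∨ Y j ω = 0)
    (hprob : ∀ j, (μ {ω | Y j ω = (1 / ε) ^ ((j : ℕ) + 1)}).toReal = ε ^ ((j : ℕ) + 1))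
    (hX : ∀ (i : Fin (n + 1)) ω,
      X i ω = ∑ j ∈ Finset.univ.filter (fun j => i ≤ j), ε ^ ((j : ℕ) - (i : ℕ)) * Y j ω)
    (i : Fin (n + 1)) :
    (μ {ω | (∃ j, i < j ∧ Y j ω = (1 / ε) ^ ((j : ℕ) + 1)) ∧
        X i ω = (1 / ε) ^ ((i : ℕ) + 1)}).toReal
      ≤ ε * (μ {ω | X i ω = (1 / ε) ^ ((i : ℕ) + 1)}).toReal := by
  classical
  have hε1 : ε < 1 := hε.trans (by norm_num)
  set c : Fin (n + 1) → ℝ := fun j => (1 / ε) ^ ((j : ℕ) + 1) with hc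
  have hcpos : ∀ j, 0 < c j := fun j => pow_pos (by positivity) _
  have hcne : ∀ j, c j ≠ 0 := fun j => (hcpos j).ne'
  set F : Finset (Fin (n + 1)) := univ.filter (fun j => i ≤ j) with hF
  set F' : Finset (Fin (n + 1)) := univ.filter (fun j => i < j) with hF'
  have hiF : i ∈ F := by simp [hF]
  have hiF' : i ∉ F' := by simp [hF']
  have hF'F : F' ⊆ F := by
    intro j hj
    simp only [hF', mem_filter, mem_univ, true_and] at hj
    simp [hF, hj.le]
  have hFF' : F = insert i F' := by
    ext j
    simp only [hF, hF', mem_filter, mem_univ, true_and, mem_insert]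
    constructor
    · intro h
      rcases eq_or_lt_of_le h with h | h
      · exact Or.inl h.symm
      · exact Or.inr h
    · rintro (rfl | h)
      · exact le_refl _
      · exact h.le
  -- key power computation
  have hkey : ∀ j : Fin (n + 1), i ≤ j → ε ^ ((j : ℕ) - (i : ℕ)) * c j = c i := by
    intro j hij
    have h : (i : ℕ) ≤ (j : ℕ) := hij
    have h2 : ((j : ℕ) - (i : ℕ)) + ((i : ℕ) + 1) = (j : ℕ) + 1 := by omega
    simp only [hc]
    rw [← h2, pow_add, ← mul_assoc, ← mul_pow, mul_one_div, div_self hε0.ne', one_pow,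
      one_mul]
  -- atoms
  set A : Fin (n + 1) → Set Ω :=
    fun j => ⋂ k ∈ F, Y k ⁻¹' {if k = j then c k else 0} with hA
  have hmemA : ∀ j ω, ω ∈ A j ↔ ∀ k ∈ F, Y k ω = if k = j then c k else 0 := by
    intro j ω
    simp [hA, Set.mem_iInter]
  have hAmeas : ∀ j, MeasurableSet (A j) := by
    intro j
    exact MeasurableSet.biInter (F : Set (Fin (n + 1))).to_countable
      (fun k _ => (hmeas k) (measurableSet_singleton _))
  -- the event X i = c i is the disjoint union of atoms
  have hXiff : ∀ ω, X i ω = c i ↔ ∃ j ∈ F, ω ∈ A j := by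
    intro ω
    constructor
    · intro hx
      rw [hX] at hx
      set S := F.filter (fun j => Y j ω ≠ 0) with hS
      have hsum : ∑ j ∈ S, ε ^ ((j : ℕ) - (i : ℕ)) * Y j ω
          = ∑ j ∈ F, ε ^ ((j : ℕ) - (i : ℕ)) * Y j ω := by
        apply Finset.sum_filter_of_ne
        intro x _ hx0
        intro h0
        rw [h0, mul_zero] at hx0
        exact hx0 rfl
      have hsum2 : ∑ j ∈ S, ε ^ ((j : ℕ) - (i : ℕ)) * Y j ω = (S.card : ℝ) * c i := by
        have hterm : ∀ j ∈ S, ε ^ ((j : ℕ) - (i : ℕ)) * Y j ω = c i := by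
          intro j hj
          have hjF : j ∈ F := (Finset.mem_filter.mp hj).1
          have hjne : Y j ω ≠ 0 := (Finset.mem_filter.mp hj).2
          have hYj : Y j ω = c j := (hval j ω).resolve_right hjne
          rw [hYj]
          exact hkey j ((Finset.mem_filter.mp hjF).2)
        rw [Finset.sum_congr rfl hterm, Finset.sum_const, nsmul_eq_mul]
      have hcard : (S.card : ℝ) * c i = 1 * c i := by
        rw [one_mul, hsum2.symm, hsum, hx]
      have hcard1 : S.card = 1 := by
        have := mul_right_cancel₀ (hcne i) hcard
        exact_mod_cast this
      obtain ⟨j, hj⟩ := Finset.card_eq_one.mp hcard1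
      have hjS : j ∈ S := by rw [hj]; exact Finset.mem_singleton_self j
      have hjF : j ∈ F := (Finset.mem_filter.mp hjS).1
      refine ⟨j, hjF, (hmemA j ω).mpr ?_⟩
      intro k hk
      by_cases hkj : k = j
      · subst hkj
        rw [if_pos rfl]
        exact (hval k ω).resolve_right (Finset.mem_filter.mp hjS).2
      · rw [if_neg hkj]
        have : k ∉ S := by rw [hj]; simp [hkj]
        have : ¬(Y k ω ≠ 0) := fun h => this (Finset.mem_filter.mpr ⟨hk, h⟩)
        exact not_not.mp this
    · rintro ⟨j, hjF, hAj⟩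
      rw [hmemA] at hAj
      rw [hX]
      rw [Finset.sum_eq_single j]
      · rw [hAj j hjF, if_pos rfl]
        exact hkey j ((Finset.mem_filter.mp hjF).2)
      · intro b hb hbj
        rw [hAj b hb, if_neg hbj, mul_zero]
      · intro h; exact absurd hjF h
  -- conjunction event
  have hLiff : ∀ ω, ((∃ j, i < j ∧ Y j ω = c j) ∧ X i ω = c i) ↔ ∃ j ∈ F', ω ∈ A j := by
    intro ω
    constructor
    · rintro ⟨⟨j', hij', hYj'⟩, hx⟩
      obtain ⟨j, hjF, hAj⟩ := (hXiff ω).mp hx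
      have hj'F : j' ∈ F := by simp [hF, hij'.le]
      have h := (hmemA j ω).mp hAj j' hj'F
      by_cases hjj : j' = j
      · subst hjj
        exact ⟨j', by simp [hF', hij'], hAj⟩
      · rw [if_neg hjj] at h
        exact absurd (hYj'.symm.trans h) (hcne j')
    · rintro ⟨j, hjF', hAj⟩
      have hij : i < j := (Finset.mem_filter.mp hjF').2
      have hjF : j ∈ F := hF'F hjF'
      have hYj : Y j ω = c j := by
        have := (hmemA j ω).mp hAj j hjF
        rwa [if_pos rfl] at this
      exact ⟨⟨j, hij, hYj⟩, (hXiff ω).mpr ⟨j, hjF, hAj⟩⟩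
  -- set equalities
  have hset1 : {ω | (∃ j, i < j ∧ Y j ω = (1 / ε) ^ ((j : ℕ) + 1)) ∧
      X i ω = (1 / ε) ^ ((i : ℕ) + 1)} = ⋃ j ∈ F', A j := by
    ext ω
    simp only [Set.mem_setOf_eq, Set.mem_iUnion, exists_prop]
    exact hLiff ω
  have hset2 : {ω | X i ω = (1 / ε) ^ ((i : ℕ) + 1)} = ⋃ j ∈ F, A j := by
    ext ω
    simp only [Set.mem_setOf_eq, Set.mem_iUnion, exists_prop]
    exact hXiff ω
  -- disjointness
  have hdisj : (↑F : Set (Fin (n + 1))).PairwiseDisjoint A := by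
    intro j hj j' hj' hne
    simp only [Finset.coe_mem, Finset.mem_coe] at hj hj'
    simp only [Function.onFun]
    rw [Set.disjoint_left]
    intro ω h1 h2
    have e1 := (hmemA j ω).mp h1 j hj
    have e2 := (hmemA j' ω).mp h2 j hj
    rw [if_pos rfl] at e1
    rw [if_neg hne] at e2
    exact hcne j (by rw [← e1, e2])
  have hdisj' : (↑F' : Set (Fin (n + 1))).PairwiseDisjoint A :=
    hdisj.subset (by exact_mod_cast hF'F)
  -- measures of atoms
  have hAprod : ∀ j, μ (A j) = ∏ k ∈ F, μ (Y k ⁻¹' {if k = j then c k else 0}) := by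
    intro j
    exact hindep.measure_inter_preimage_eq_mul F
      (fun k _ => measurableSet_singleton _)
  have hzero : ∀ k, Y k ⁻¹' ({0} : Set ℝ) = (Y k ⁻¹' {c k})ᶜ := by
    intro k
    ext ω
    simp only [Set.mem_preimage, Set.mem_singleton_iff, Set.mem_compl_iff]
    constructor
    · intro h h'
      rw [h] at h'
      exact hcne k h'.symm
    · intro h
      exact (hval k ω).resolve_left h
  have hprob' : ∀ k, (μ (Y k ⁻¹' {c k})).toReal = ε ^ ((k : ℕ) + 1) := fun k => hprob k
  have hPle1 : ∀ k, μ (Y k ⁻¹' {c k}) ≤ 1 := fun k => prob_le_one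
  have hμzero : ∀ k, μ (Y k ⁻¹' ({0} : Set ℝ)) = 1 - μ (Y k ⁻¹' {c k}) := by
    intro k
    rw [hzero k, measure_compl ((hmeas k) (measurableSet_singleton _)) (measure_ne_top μ _),
      measure_univ]
  -- real values
  set a : Fin (n + 1) → ℝ :=
    fun j => ε ^ ((j : ℕ) + 1) * ∏ k ∈ F.erase j, (1 - ε ^ ((k : ℕ) + 1)) with ha
  have hεk1 : ∀ k : Fin (n + 1), ε ^ ((k : ℕ) + 1) ≤ ε := by
    intro k
    calc ε ^ ((k : ℕ) + 1) ≤ ε ^ 1 :=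
        pow_le_pow_of_le_one hε0.le hε1.le (by omega)
      _ = ε := pow_one ε
  have hfac_pos : ∀ k : Fin (n + 1), 0 < 1 - ε ^ ((k : ℕ) + 1) := by
    intro k
    have := hεk1 k
    linarith
  have hAval : ∀ j ∈ F, (μ (A j)).toReal = a j := by
    intro j hjF
    rw [hAprod j, ENNReal.toReal_prod]
    have hterm : ∀ k ∈ F, (μ (Y k ⁻¹' {if k = j then c k else 0})).toReal
        = if k = j then ε ^ ((k : ℕ) + 1) else 1 - ε ^ ((k : ℕ) + 1) := by
      intro k _
      by_cases hkj : k = j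
      · rw [if_pos hkj, if_pos hkj]
        exact hprob' k
      · rw [if_neg hkj, if_neg hkj, hμzero k,
          ENNReal.toReal_sub_of_le (hPle1 k) ENNReal.one_ne_top, ENNReal.toReal_one, hprob' k]
    rw [Finset.prod_congr rfl hterm, ← Finset.mul_prod_erase F _ hjF, if_pos rfl, ha]
    congr 1
    apply Finset.prod_congr rfl
    intro k hk
    rw [if_neg (Finset.ne_of_mem_erase hk)]
  -- measures of unions
  have hU1 : (μ (⋃ j ∈ F', A j)).toReal = ∑ j ∈ F', a j := by
    rw [measure_biUnion_finset hdisj' (fun j _ => hAmeas j),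
      ENNReal.toReal_sum (fun j _ => measure_ne_top μ _)]
    exact Finset.sum_congr rfl (fun j hj => hAval j (hF'F hj))
  have hU2 : (μ (⋃ j ∈ F, A j)).toReal = ∑ j ∈ F, a j := by
    rw [measure_biUnion_finset hdisj (fun j _ => hAmeas j),
      ENNReal.toReal_sum (fun j _ => measure_ne_top μ _)]
    exact Finset.sum_congr rfl hAval
  rw [hset1, hset2, hU1, hU2, hFF', Finset.sum_insert hiF']
  -- the analytic inequality
  set Q : ℝ := ∏ k ∈ F', (1 - ε ^ ((k : ℕ) + 1)) with hQ
  have hQ0 : 0 ≤ Q := Finset.prod_nonneg (fun k _ => (hfac_pos k).le)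
  have hFei : F.erase i = F' := by rw [hFF', Finset.erase_insert hiF']
  have hai : a i = ε ^ ((i : ℕ) + 1) * Q := by
    simp only [ha]
    rw [hFei, hQ]
  have hstepA : ∀ j ∈ F', a j ≤ ε ^ ((j : ℕ) + 1) * Q := by
    intro j hj
    have hij : i < j := (Finset.mem_filter.mp hj).2
    have hji : j ≠ i := fun h => absurd (h ▸ hij) (lt_irrefl i)
    have herase : F.erase j = insert i (F'.erase j) := by
      rw [hFF', Finset.erase_insert_of_ne hij.ne]
    have hiFe : i ∉ F'.erase j := fun h => hiF' (Finset.mem_of_mem_erase h)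
    have hprod1 : ∏ k ∈ F.erase j, (1 - ε ^ ((k : ℕ) + 1))
        = (1 - ε ^ ((i : ℕ) + 1)) * ∏ k ∈ F'.erase j, (1 - ε ^ ((k : ℕ) + 1)) := by
      rw [herase, Finset.prod_insert hiFe]
    have hprod2 : Q = (1 - ε ^ ((j : ℕ) + 1)) * ∏ k ∈ F'.erase j, (1 - ε ^ ((k : ℕ) + 1)) := by
      rw [hQ, ← Finset.mul_prod_erase F' _ hj]
    have hple : ε ^ ((j : ℕ) + 1) ≤ ε ^ ((i : ℕ) + 1) := by
      apply pow_le_pow_of_le_one hε0.le hε1.le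
      have : (i : ℕ) < (j : ℕ) := hij
      omega
    have hprodnn : 0 ≤ ∏ k ∈ F'.erase j, (1 - ε ^ ((k : ℕ) + 1)) :=
      Finset.prod_nonneg (fun k _ => (hfac_pos k).le)
    have hεnn : 0 ≤ ε ^ ((j : ℕ) + 1) := pow_nonneg hε0.le _
    simp only [ha]
    rw [hprod1, hprod2]
    have hle : (1 - ε ^ ((i : ℕ) + 1)) ≤ (1 - ε ^ ((j : ℕ) + 1)) := by linarith
    exact mul_le_mul_of_nonneg_left (mul_le_mul_of_nonneg_right hle hprodnn) hεnn
  have hsumpow : (1 - ε) * ∑ j ∈ F', ε ^ ((j : ℕ) + 1) ≤ ε ^ ((i : ℕ) + 2) := by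
    have h1 : ∑ j ∈ F', ε ^ ((j : ℕ) + 1)
        = ∑ m ∈ Finset.Ico ((i : ℕ) + 1) (n + 1), ε ^ (m + 1) := by
      apply Finset.sum_bij (i := fun (j : Fin (n + 1)) (_ : j ∈ F') => (j : ℕ))
      · intro j hj
        have hij : i < j := (Finset.mem_filter.mp hj).2
        have h1 : (i : ℕ) < (j : ℕ) := hij
        have h2 : (j : ℕ) < n + 1 := j.isLt
        exact Finset.mem_Ico.mpr ⟨by omega, h2⟩
      · intro a₁ _ a₂ _ h
        exact Fin.val_injective h
      · intro m hm
        obtain ⟨h1, h2⟩ := Finset.mem_Ico.mp hm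
        refine ⟨⟨m, h2⟩, ?_, rfl⟩
        simp only [hF', mem_filter, mem_univ, true_and]
        exact Fin.lt_def.mpr (by simp; omega)
      · intro j _; rfl
    have h2 : ∑ m ∈ Finset.Ico ((i : ℕ) + 1) (n + 1), ε ^ (m + 1)
        = ε * ((ε ^ (n + 1) - ε ^ ((i : ℕ) + 1)) / (ε - 1)) := by
      rw [← geom_sum_Ico hε1.ne (by omega : (i : ℕ) + 1 ≤ n + 1), Finset.mul_sum]
      apply Finset.sum_congr rfl
      intro m _
      ring
    rw [h1, h2]
    have hne1 : ε - 1 ≠ 0 := by linarith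
    have hpow_nn : 0 ≤ ε ^ (n + 1) := pow_nonneg hε0.le _
    have heq : (1 - ε) * (ε * ((ε ^ (n + 1) - ε ^ ((i : ℕ) + 1)) / (ε - 1)))
        = ε * (ε ^ ((i : ℕ) + 1) - ε ^ (n + 1)) := by
      field_simp
      ring
    rw [heq]
    have heq2 : ε ^ ((i : ℕ) + 2) = ε * ε ^ ((i : ℕ) + 1) := by ring
    rw [heq2]
    nlinarith [mul_nonneg hε0.le hpow_nn]
  have hmain : (1 - ε) * ∑ j ∈ F', a j ≤ ε * a i := by
    have h1 : ∑ j ∈ F', a j ≤ ∑ j ∈ F', ε ^ ((j : ℕ) + 1) * Q :=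
      Finset.sum_le_sum hstepA
    have h2 : ∑ j ∈ F', ε ^ ((j : ℕ) + 1) * Q = (∑ j ∈ F', ε ^ ((j : ℕ) + 1)) * Q := by
      rw [Finset.sum_mul]
    have h3 : (1 - ε) * ∑ j ∈ F', a j ≤ (1 - ε) * ((∑ j ∈ F', ε ^ ((j : ℕ) + 1)) * Q) := by
      apply mul_le_mul_of_nonneg_left _ (by linarith : (0:ℝ) ≤ 1 - ε)
      rw [← h2]; exact h1
    have h4 : (1 - ε) * ((∑ j ∈ F', ε ^ ((j : ℕ) + 1)) * Q) ≤ ε ^ ((i : ℕ) + 2) * Q := by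
      have := mul_le_mul_of_nonneg_right hsumpow hQ0
      calc (1 - ε) * ((∑ j ∈ F', ε ^ ((j : ℕ) + 1)) * Q)
          = ((1 - ε) * ∑ j ∈ F', ε ^ ((j : ℕ) + 1)) * Q := by ring
        _ ≤ ε ^ ((i : ℕ) + 2) * Q := this
    have h5 : ε * a i = ε ^ ((i : ℕ) + 2) * Q := by
      rw [hai]; ring
    rw [h5]
    exact h3.trans h4
  linarith
end

section
/- Fix ε ∈ (0, 1/2) with ε^n < 2, and the general tower instance X_i = Σ_{j≥i} ε^{j−i} Y_j with tower variables Y_j. Every online algorithm that may fractionally take amounts p_i ≥ 0 of each arriving X_i subject to Σ_i p_i ≤ 1 has expected total reward Σ_i p_i X_i at most 1/(1−ε)². -/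
open MeasureTheory ProbabilityTheory Finset

lemma measurable_filter_pattern {α : Type*} [MeasurableSpace α] {ι : Type*} [Fintype ι]
    [DecidableEq ι] (f : ι → α → Prop) [∀ l a, Decidable (f l a)]
    (hf : ∀ l, MeasurableSet {a | f l a}) :
    @Measurable α (Finset ι) _ ⊤ (fun a => Finset.univ.filter (fun l => f l a)) := by
  intro s _
  have key : ∀ t : Finset ι,
      MeasurableSet ((fun a => Finset.univ.filter fun l => f l a) ⁻¹' {t}) := by
    intro t
    have heq : (fun a => Finset.univ.filter fun l => f l a) ⁻¹' {t}
        = ⋂ l, {a | f l a ↔ l ∈ t} := by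
      ext a
      simp only [Set.mem_preimage, Set.mem_singleton_iff, Finset.ext_iff, Finset.mem_filter,
        Finset.mem_univ, true_and, Set.mem_iInter, Set.mem_setOf_eq]
    rw [heq]
    refine MeasurableSet.iInter fun l => ?_
    by_cases hl : l ∈ t
    · simp only [hl, iff_true]; exact hf l
    · simp only [hl, iff_false]
      exact (hf l).compl
  have hs2 : (fun a => Finset.univ.filter fun l => f l a) ⁻¹' s
      = ⋃ t ∈ s, (fun a => Finset.univ.filter fun l => f l a) ⁻¹' {t} := by
    ext a; simp
  rw [hs2]
  exact MeasurableSet.biUnion (Set.to_countable _) fun t _ => key t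

/-- On the general tower instance `X_i = Σ_{j ≥ i} ε^{j−i} Y_j`, every adapted fractional
online algorithm (taking fractions `p_i ≥ 0` of each `X_i`, with `Σ_i p_i ≤ 1`, where `p_i`
may depend only on `X_0, …, X_i`) has expected total reward at most `1/(1−ε)²`. -/
theorem stmt7 {Ω : Type*} [MeasurableSpace Ω] (μ : Measure Ω) [IsProbabilityMeasure μ]
    {n : ℕ} (ε : ℝ) (hε0 : 0 < ε) (hε : ε < 1 / 2) (hεn : ε ^ (n + 1) < 2)
    (Y X : Fin (n + 1) → Ω → ℝ) (hmeas : ∀ j, Measurable (Y j))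
    (hindep : iIndepFun Y μ)
    (hval : ∀ j ω, Y j ω = (1 / ε) ^ ((j : ℕ) + 1) ∨ Y j ω = 0)
    (hprob : ∀ j, (μ {ω | Y j ω = (1 / ε) ^ ((j : ℕ) + 1)}).toReal = ε ^ ((j : ℕ) + 1))
    (hX : ∀ (i : Fin (n + 1)) ω,
      X i ω = ∑ j ∈ Finset.univ.filter (fun j => i ≤ j), ε ^ ((j : ℕ) - (i : ℕ)) * Y j ω)
    (p : Fin (n + 1) → Ω → ℝ)
    (hpnn : ∀ i ω, 0 ≤ p i ω) (hpsum : ∀ ω, ∑ i, p i ω ≤ 1)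
    (hadapted : ∀ i, Measurable[MeasurableSpace.comap
      (fun ω => fun j : { j : Fin (n + 1) // j ≤ i } => X j ω) inferInstance] (p i)) :
    ∫ ω, ∑ i, p i ω * X i ω ∂μ ≤ 1 / (1 - ε) ^ 2 := by
  classical
  letI : MeasurableSpace (Finset (Fin (n + 1))) := ⊤
  have hε1 : ε < 1 := by linarith
  have h1ε : (0:ℝ) < 1 - ε := by linarith
  have hεne : ε ≠ 0 := ne_of_gt hε0
  have hεle : ∀ j : Fin (n+1), ε ^ ((j:ℕ)+1) ≤ ε := by
    intro j
    calc ε ^ ((j:ℕ)+1) ≤ ε ^ 1 := pow_le_pow_of_le_one hε0.le hε1.le (by omega)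
    _ = ε := pow_one ε
  have hεj1 : ∀ j : Fin (n+1), ε ^ ((j:ℕ)+1) < 1 := fun j => lt_of_le_of_lt (hεle j) hε1
  have hεjpos : ∀ j : Fin (n+1), 0 < ε ^ ((j:ℕ)+1) := fun j => pow_pos hε0 _
  have hkey : ∀ j : Fin (n+1), (1/ε) ^ ((j:ℕ)+1) * ε ^ ((j:ℕ)+1) = 1 := by
    intro j; rw [one_div, inv_pow, inv_mul_cancel₀ (pow_ne_zero _ hεne)]
  have hhipos : ∀ j : Fin (n+1), 0 < (1/ε) ^ ((j:ℕ)+1) := fun j => pow_pos (by positivity) _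
  -- the "active" events
  set D : Fin (n+1) → Set Ω := fun j => {ω | Y j ω ≠ 0} with hD_def
  have hDmeas : ∀ j, MeasurableSet (D j) := fun j => (hmeas j (measurableSet_singleton 0)).compl
  have hDeq : ∀ j, {ω | Y j ω = (1/ε) ^ ((j:ℕ)+1)} = D j := by
    intro j; ext ω
    simp only [hD_def, Set.mem_setOf_eq]
    constructor
    · intro h; rw [h]; exact ne_of_gt (hhipos j)
    · intro h; rcases hval j ω with h'|h'
      · exact h'
      · exact absurd h' h
  have hμD : ∀ j, (μ (D j)).toReal = ε ^ ((j:ℕ)+1) := fun j => by rw [← hDeq]; exact hprob j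
  have hμDne : ∀ j, μ (D j) ≠ 0 := by
    intro j h0
    have h := hμD j; rw [h0] at h; simp only [ENNReal.toReal_zero] at h
    exact absurd h.symm (ne_of_gt (hεjpos j))
  have hμDc : ∀ j, μ (D j)ᶜ ≠ 0 := by
    intro j h0
    have h1 : μ (D j) = 1 := (prob_compl_eq_zero_iff (hDmeas j)).mp h0
    have h := hμD j; rw [h1] at h; simp only [ENNReal.toReal_one] at h
    exact absurd h.symm (ne_of_lt (hεj1 j))
  -- the bit pattern map
  set β : Ω → Finset (Fin (n+1)) := fun ω => Finset.univ.filter (fun j => Y j ω ≠ 0) with hβ_def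
  have hβmeas : Measurable β :=
    measurable_filter_pattern (fun j ω => Y j ω ≠ 0) (fun j => hDmeas j)
  have hmemβ : ∀ (j : Fin (n+1)) ω, j ∈ β ω ↔ Y j ω ≠ 0 := by
    intro j ω; simp [hβ_def]
  -- every pattern is attained
  have hβfull : ∀ s : Finset (Fin (n+1)), ∃ ω, β ω = s := by
    intro s
    set C : Fin (n+1) → Set Ω := fun j => if j ∈ s then D j else (D j)ᶜ with hC_def
    have hCmeas : ∀ j, MeasurableSet[(inferInstance : MeasurableSpace ℝ).comap (Y j)] (C j) := by
      intro j
      rw [MeasurableSpace.measurableSet_comap]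
      by_cases hj : j ∈ s
      · refine ⟨{0}ᶜ, (measurableSet_singleton 0).compl, ?_⟩
        simp only [hC_def, if_pos hj, hD_def]
        ext ω; simp
      · refine ⟨{0}, measurableSet_singleton 0, ?_⟩
        simp only [hC_def, if_neg hj, hD_def]
        ext ω; simp
    have hprod : μ (⋂ j, C j) = ∏ j, μ (C j) := hindep.meas_iInter hCmeas
    have hne : μ (⋂ j, C j) ≠ 0 := by
      rw [hprod, Finset.prod_ne_zero_iff]
      intro j _
      by_cases hj : j ∈ s
      · simpa only [hC_def, if_pos hj] using hμDne j
      · simpa only [hC_def, if_neg hj] using hμDc j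
    obtain ⟨ω, hω⟩ := nonempty_of_measure_ne_zero hne
    refine ⟨ω, ?_⟩
    ext j
    have hωj : ω ∈ C j := Set.mem_iInter.mp hω j
    rw [hmemβ]
    by_cases hj : j ∈ s
    · simp only [hC_def, if_pos hj, hD_def, Set.mem_setOf_eq] at hωj
      simp [hj, hωj]
    · simp only [hC_def, if_neg hj, hD_def, Set.mem_compl_iff, Set.mem_setOf_eq,
        not_not] at hωj
      simp [hj, hωj]
  choose w hw using hβfull
  set P : Fin (n+1) → Finset (Fin (n+1)) → ℝ := fun i s => p i (w s) with hP_def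
  have hP0 : ∀ i s, 0 ≤ P i s := fun i s => hpnn i _
  have hP1 : ∀ i s, P i s ≤ 1 := by
    intro i s
    calc P i s ≤ ∑ k, p k (w s) :=
      Finset.single_le_sum (fun k _ => hpnn k _) (Finset.mem_univ i)
    _ ≤ 1 := hpsum _
  -- measurability of X and p
  have hXmeas : ∀ k, Measurable (X k) := by
    intro k
    have h : X k = fun ω => ∑ j ∈ Finset.univ.filter (fun j => k ≤ j),
        ε ^ ((j:ℕ)-(k:ℕ)) * Y j ω := funext (hX k)
    rw [h]
    exact Finset.measurable_sum _ (fun j _ => (hmeas j).const_mul _)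
  have hpmeas : ∀ i, Measurable (p i) := by
    intro i
    refine (hadapted i).mono (measurable_iff_comap_le.mp ?_) le_rfl
    exact measurable_pi_lambda _ (fun j => hXmeas j.1)
  -- p i is constant on fibers of the observed history
  have hfiber : ∀ (i : Fin (n+1)) (ω ω' : Ω), (∀ k : Fin (n+1), k ≤ i → X k ω = X k ω') →
      p i ω = p i ω' := by
    intro i ω ω' hXX
    obtain ⟨t, -, ht⟩ :=
      MeasurableSpace.measurableSet_comap.mp ((hadapted i) (measurableSet_singleton (p i ω)))
    have hfω : (fun j : {j : Fin (n+1) // j ≤ i} => X j ω)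
        = fun j : {j : Fin (n+1) // j ≤ i} => X j ω' := funext fun j => hXX j j.2
    have hmem : ω ∈ (fun ω => fun j : {j : Fin (n+1) // j ≤ i} => X j ω) ⁻¹' t := by
      rw [ht]; exact rfl
    have hmem' : ω' ∈ (fun ω => fun j : {j : Fin (n+1) // j ≤ i} => X j ω) ⁻¹' t := by
      simp only [Set.mem_preimage] at hmem ⊢
      rwa [← hfω]
    rw [ht] at hmem'
    exact hmem'.symm
  -- the count representation of X
  set φ : Finset (Fin (n+1)) → Fin (n+1) → ℝ :=
    fun s k => ((s.filter (fun j => k ≤ j)).card : ℝ) * (1/ε) ^ ((k:ℕ)+1) with hφ_def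
  have hterm : ∀ k j : Fin (n+1), k ≤ j →
      ε ^ ((j:ℕ)-(k:ℕ)) * (1/ε) ^ ((j:ℕ)+1) = (1/ε) ^ ((k:ℕ)+1) := by
    intro k j hkj
    have hkj' : (k:ℕ) ≤ (j:ℕ) := hkj
    have hj : (j:ℕ)+1 = ((j:ℕ)-(k:ℕ)) + ((k:ℕ)+1) := by omega
    rw [hj, pow_add, ← mul_assoc, ← mul_pow, mul_one_div_cancel hεne, one_pow, one_mul]
  have hXφ : ∀ (k : Fin (n+1)) ω, X k ω = φ (β ω) k := by
    intro k ω
    rw [hX]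
    have h1 : ((β ω).filter (fun j => k ≤ j)) =
        (Finset.univ.filter (fun j => k ≤ j)).filter (fun j => Y j ω ≠ 0) := by
      ext j; simp [hβ_def, Finset.filter_filter, and_comm]
    calc ∑ j ∈ Finset.univ.filter (fun j => k ≤ j), ε ^ ((j:ℕ)-(k:ℕ)) * Y j ω
        = ∑ j ∈ (Finset.univ.filter (fun j => k ≤ j)).filter (fun j => Y j ω ≠ 0),
            ε ^ ((j:ℕ)-(k:ℕ)) * Y j ω := by
          refine (Finset.sum_filter_of_ne ?_).symm
          intro j _ hne2 h0
          exact hne2 (by rw [h0, mul_zero])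
      _ = ∑ _j ∈ (Finset.univ.filter (fun j => k ≤ j)).filter (fun j => Y j ω ≠ 0),
            (1/ε) ^ ((k:ℕ)+1) := by
          refine Finset.sum_congr rfl (fun j hj => ?_)
          simp only [Finset.mem_filter] at hj
          obtain ⟨⟨-, hkj⟩, hne2⟩ := hj
          rcases hval j ω with h'|h'
          · rw [h']; exact hterm k j hkj
          · exact absurd h' hne2
      _ = φ (β ω) k := by
          rw [Finset.sum_const, nsmul_eq_mul, ← h1]
  have hrep : ∀ i ω, p i ω = P i (β ω) := by
    intro i ω
    exact hfiber i ω (w (β ω)) (fun k _ => by rw [hXφ, hXφ, hw])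
  have hPdep : ∀ (i : Fin (n+1)) s t, (∀ k : Fin (n+1), k ≤ i → φ s k = φ t k) →
      P i s = P i t := by
    intro i s t h
    exact hfiber i (w s) (w t) (fun k hk => by rw [hXφ, hXφ, hw, hw]; exact h k hk)
  have hφins : ∀ (s : Finset (Fin (n+1))) (j k : Fin (n+1)), j ∉ s → k ≤ j →
      φ (insert j s) k = φ s k + (1/ε) ^ ((k:ℕ)+1) := by
    intro s j k hj hkj
    simp only [hφ_def]
    rw [Finset.filter_insert, if_pos hkj,
      Finset.card_insert_of_notMem (fun h => hj (Finset.mem_of_mem_filter j h))]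
    push_cast; ring
  set t0 : Finset (Fin (n+1)) → Fin (n+1) :=
    fun s => if h : sᶜ.Nonempty then sᶜ.max' h else 0 with ht0_def
  have ht0 : ∀ (s : Finset (Fin (n+1))) (j : Fin (n+1)), j ∉ s → t0 s ∉ s ∧ j ≤ t0 s := by
    intro s j hj
    have hne : sᶜ.Nonempty := ⟨j, Finset.mem_compl.mpr hj⟩
    simp only [ht0_def, dif_pos hne]
    exact ⟨Finset.mem_compl.mp (Finset.max'_mem _ hne),
      Finset.le_max' _ j (Finset.mem_compl.mpr hj)⟩
  set q : Fin (n+1) → Fin (n+1) → Ω → ℝ := fun i j ω => P i (insert j (β ω)) with hq_def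
  set r : Fin (n+1) → Ω → ℝ := fun i ω => P i (insert (t0 (β ω)) (β ω)) with hr_def
  have hq_on : ∀ i j ω, ω ∈ D j → q i j ω = p i ω := by
    intro i j ω hω
    simp only [hq_def]
    rw [Finset.insert_eq_self.mpr ((hmemβ j ω).mpr hω)]
    exact (hrep i ω).symm
  have hq_off : ∀ (i j : Fin (n+1)) ω, i ≤ j → ω ∉ D j → q i j ω = r i ω := by
    intro i j ω hij hω
    have hjβ : j ∉ β ω := fun h => hω ((hmemβ j ω).mp h)
    obtain ⟨ht1, ht2⟩ := ht0 (β ω) j hjβ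
    exact hPdep i _ _ (fun k hk => by
      rw [hφins _ _ _ hjβ (le_trans hk hij), hφins _ _ _ ht1 (le_trans (le_trans hk hij) ht2)])
  have hrsum : ∀ ω, ∑ i, r i ω ≤ 1 := fun ω => hpsum _
  have hq0 : ∀ i j ω, 0 ≤ q i j ω := fun i j ω => hP0 _ _
  have hq1 : ∀ i j ω, q i j ω ≤ 1 := fun i j ω => hP1 _ _
  have hr0 : ∀ i ω, 0 ≤ r i ω := fun i ω => hP0 _ _
  have hr1 : ∀ i ω, r i ω ≤ 1 := fun i ω => hP1 _ _
  have hqmeas : ∀ i j, Measurable (q i j) := fun i j =>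
    (measurable_from_top (f := fun s => P i (insert j s))).comp hβmeas
  have hrmeas : ∀ i, Measurable (r i) := fun i =>
    (measurable_from_top (f := fun s => P i (insert (t0 s) s))).comp hβmeas
  -- the indicator
  set ind : Fin (n+1) → Ω → ℝ := fun j ω => if Y j ω = 0 then 0 else 1 with hind_def
  have hind0 : ∀ j ω, 0 ≤ ind j ω := by
    intro j ω; by_cases h : Y j ω = 0 <;> simp [hind_def, h]
  have hind1 : ∀ j ω, ind j ω ≤ 1 := by
    intro j ω; by_cases h : Y j ω = 0 <;> simp [hind_def, h]
  have hindmeas : ∀ j, Measurable (ind j) := fun j =>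
    Measurable.ite (hmeas j (measurableSet_singleton 0)) measurable_const measurable_const
  have hindint : ∀ j, ∫ ω, ind j ω ∂μ = ε ^ ((j:ℕ)+1) := by
    intro j
    have h : ind j = (D j).indicator (1 : Ω → ℝ) := by
      funext ω; by_cases h : Y j ω = 0 <;>
        simp [hind_def, hD_def, h, Set.indicator_apply]
    rw [h]
    rw [MeasureTheory.integral_indicator_one (hDmeas j)]
    exact hμD j
  -- integrability helper
  have hbint : ∀ (f : Ω → ℝ) (C : ℝ), Measurable f → (∀ ω, ‖f ω‖ ≤ C) → Integrable f μ :=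
    fun f C hf hC => (integrable_const C).mono' hf.aestronglyMeasurable (ae_of_all _ hC)
  have habs01 : ∀ x : ℝ, 0 ≤ x → x ≤ 1 → ‖x‖ ≤ 1 := by
    intro x h0 h1; rw [Real.norm_eq_abs, abs_le]; constructor <;> linarith
  have hqint : ∀ i j, Integrable (q i j) μ :=
    fun i j => hbint _ 1 (hqmeas i j) (fun ω => habs01 _ (hq0 i j ω) (hq1 i j ω))
  have hindint' : ∀ j, Integrable (ind j) μ :=
    fun j => hbint _ 1 (hindmeas j) (fun ω => habs01 _ (hind0 j ω) (hind1 j ω))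
  have hp1 : ∀ i ω, p i ω ≤ 1 := by
    intro i ω
    calc p i ω ≤ ∑ k, p k ω := Finset.single_le_sum (fun k _ => hpnn k _) (Finset.mem_univ i)
    _ ≤ 1 := hpsum ω
  have hpindint : ∀ i j, Integrable (fun ω => p i ω * ind j ω) μ := by
    intro i j
    refine hbint _ 1 ((hpmeas i).mul (hindmeas j)) (fun ω => habs01 _ ?_ ?_)
    · exact mul_nonneg (hpnn i ω) (hind0 j ω)
    · calc p i ω * ind j ω ≤ 1 * 1 :=
        mul_le_mul (hp1 i ω) (hind1 j ω) (hind0 j ω) zero_le_one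
      _ = 1 := one_mul 1
  have hrindint : ∀ i j, Integrable (fun ω => r i ω * (1 - ind j ω)) μ := by
    intro i j
    refine hbint _ 1 ((hrmeas i).mul (measurable_const.sub (hindmeas j))) (fun ω => habs01 _ ?_ ?_)
    · exact mul_nonneg (hr0 i ω) (by linarith [hind1 j ω])
    · calc r i ω * (1 - ind j ω) ≤ 1 * 1 :=
        mul_le_mul (hr1 i ω) (by linarith [hind0 j ω]) (by linarith [hind1 j ω]) zero_le_one
      _ = 1 := one_mul 1
  -- independence of q i j from ind j
  have hqindep : ∀ (i j : Fin (n+1)), IndepFun (q i j) (ind j) μ := by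
    intro i j
    have H := hindep.indepFun_finset ({j}ᶜ) {j} disjoint_compl_left hmeas
    set Gq : ({x // x ∈ ({j}ᶜ : Finset (Fin (n+1)))} → ℝ) → ℝ := fun v =>
      P i (insert j (Finset.univ.filter (fun l =>
        if h : l ∈ ({j}ᶜ : Finset (Fin (n+1))) then v ⟨l, h⟩ ≠ 0 else True))) with hGq_def
    set Gind : ({x // x ∈ ({j} : Finset (Fin (n+1)))} → ℝ) → ℝ := fun v =>
      if v ⟨j, Finset.mem_singleton_self j⟩ = 0 then 0 else 1 with hGind_def
    have hGqmeas : Measurable Gq := by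
      refine (measurable_from_top
        (f := fun s : Finset (Fin (n+1)) => P i (insert j s))).comp ?_
      refine measurable_filter_pattern _ (fun l => ?_)
      by_cases h : l ∈ ({j}ᶜ : Finset (Fin (n+1)))
      · simp only [dif_pos h]
        exact ((measurable_pi_apply (⟨l, h⟩ : {x // x ∈ ({j}ᶜ : Finset (Fin (n+1)))}))
          (measurableSet_singleton 0)).compl
      · simp only [dif_neg h, Set.setOf_true]
        exact MeasurableSet.univ
    have hGindmeas : Measurable Gind := by
      refine Measurable.ite ?_ measurable_const measurable_const
      exact (measurable_pi_apply _) (measurableSet_singleton 0)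
    have H2 := H.comp hGqmeas hGindmeas
    have e1 : Gq ∘ (fun a (x : {x // x ∈ ({j}ᶜ : Finset (Fin (n+1)))}) => Y x a) = q i j := by
      funext ω
      simp only [Function.comp_apply, hGq_def, hq_def]
      congr 1
      ext l
      by_cases hl : l = j
      · subst hl; simp
      · have hl' : l ∈ ({j}ᶜ : Finset (Fin (n+1))) :=
          Finset.mem_compl.mpr (by simpa using hl)
        simp only [Finset.mem_insert, hl, false_or, Finset.mem_filter, Finset.mem_univ,
          true_and, dif_pos hl', hmemβ]
    have e2 : Gind ∘ (fun a (x : {x // x ∈ ({j} : Finset (Fin (n+1)))}) => Y x a) = ind j := by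
      funext ω; rfl
    rw [e1, e2] at H2
    exact H2
  -- the main per-pair identity
  have hmain : ∀ i j : Fin (n+1), i ≤ j →
      (∫ ω, p i ω * Y j ω ∂μ) =
        (∫ ω, p i ω * ind j ω ∂μ) + (∫ ω, r i ω * (1 - ind j ω) ∂μ) ∧
      (∫ ω, p i ω * ind j ω ∂μ) = ε ^ ((j:ℕ)+1) *
        ((∫ ω, p i ω * ind j ω ∂μ) + (∫ ω, r i ω * (1 - ind j ω) ∂μ)) := by
    intro i j hij
    have hDind : ∀ ω, ω ∈ D j → ind j ω = 1 := by
      intro ω hω; simp only [hD_def, Set.mem_setOf_eq] at hω; simp [hind_def, hω]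
    have hDind' : ∀ ω, ω ∉ D j → ind j ω = 0 := by
      intro ω hω; simp only [hD_def, Set.mem_setOf_eq, not_not] at hω; simp [hind_def, hω]
    have hptw : ∀ ω, q i j ω = p i ω * ind j ω + r i ω * (1 - ind j ω) := by
      intro ω
      by_cases hω : ω ∈ D j
      · rw [hq_on i j ω hω, hDind ω hω]; ring
      · rw [hq_off i j ω hij hω, hDind' ω hω]; ring
    have hsplit : ∫ ω, q i j ω ∂μ =
        (∫ ω, p i ω * ind j ω ∂μ) + (∫ ω, r i ω * (1 - ind j ω) ∂μ) := by
      rw [← integral_add (hpindint i j) (hrindint i j)]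
      exact integral_congr_ae (ae_of_all _ hptw)
    have hqip : ∀ ω, q i j ω * ind j ω = p i ω * ind j ω := by
      intro ω
      by_cases hω : ω ∈ D j
      · rw [hq_on i j ω hω]
      · rw [hDind' ω hω]; ring
    have hmul : ∫ ω, q i j ω * ind j ω ∂μ = (∫ ω, q i j ω ∂μ) * ε ^ ((j:ℕ)+1) := by
      have h := IndepFun.integral_fun_mul_eq_mul_integral (hqindep i j) (hqint i j).aestronglyMeasurable (hindint' j).aestronglyMeasurable
      rw [← hindint j]
      exact h
    have hI1 : (∫ ω, p i ω * ind j ω ∂μ) = ε ^ ((j:ℕ)+1) * (∫ ω, q i j ω ∂μ) := by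
      rw [← integral_congr_ae (ae_of_all _ hqip), hmul, mul_comm]
    constructor
    · have hpY : ∀ ω, p i ω * Y j ω = (1/ε) ^ ((j:ℕ)+1) * (p i ω * ind j ω) := by
        intro ω
        rcases hval j ω with h'|h'
        · have hne2 : Y j ω ≠ 0 := by rw [h']; exact ne_of_gt (hhipos j)
          have : ind j ω = 1 := by simp [hind_def, hne2]
          rw [h', this]; ring
        · have : ind j ω = 0 := by simp [hind_def, h']
          rw [h', this]; ring
      calc ∫ ω, p i ω * Y j ω ∂μ
          = ∫ ω, (1/ε) ^ ((j:ℕ)+1) * (p i ω * ind j ω) ∂μ :=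
            integral_congr_ae (ae_of_all _ hpY)
        _ = (1/ε) ^ ((j:ℕ)+1) * ∫ ω, p i ω * ind j ω ∂μ := integral_const_mul _ _
        _ = (1/ε) ^ ((j:ℕ)+1) * (ε ^ ((j:ℕ)+1) * (∫ ω, q i j ω ∂μ)) := by rw [hI1]
        _ = ((1/ε) ^ ((j:ℕ)+1) * ε ^ ((j:ℕ)+1)) * (∫ ω, q i j ω ∂μ) := by ring
        _ = ∫ ω, q i j ω ∂μ := by rw [hkey j, one_mul]
        _ = _ := hsplit
    · rw [hsplit] at hI1; exact hI1
  -- per-pair bound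
  have hAbound : ∀ i j : Fin (n+1), i ≤ j → (∫ ω, p i ω * Y j ω ∂μ) ≤
      (∫ ω, r i ω * (1 - ind j ω) ∂μ) / (1-ε) := by
    intro i j hij
    obtain ⟨h1, h2⟩ := hmain i j hij
    have hI1nn : 0 ≤ ∫ ω, p i ω * ind j ω ∂μ :=
      integral_nonneg (fun ω => mul_nonneg (hpnn i ω) (hind0 j ω))
    have hI0nn : 0 ≤ ∫ ω, r i ω * (1 - ind j ω) ∂μ :=
      integral_nonneg (fun ω => mul_nonneg (hr0 i ω) (by linarith [hind1 j ω]))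
    set I1 := ∫ ω, p i ω * ind j ω ∂μ
    set I0 := ∫ ω, r i ω * (1 - ind j ω) ∂μ
    rw [h1, le_div_iff₀ h1ε]
    have ha : 0 ≤ I1 + I0 := by linarith
    have hmul2 : (I1 + I0) * ε ^ ((j:ℕ)+1) ≤ (I1 + I0) * ε :=
      mul_le_mul_of_nonneg_left (hεle j) ha
    nlinarith [h2]
  -- geometric sum bound
  have hgeom : ∀ i : Fin (n+1),
      ∑ j ∈ Finset.univ.filter (fun j => i ≤ j), ε ^ ((j:ℕ)-(i:ℕ)) ≤ 1/(1-ε) := by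
    intro i
    have h1 : ∑ j ∈ Finset.univ.filter (fun j => i ≤ j), ε ^ ((j:ℕ)-(i:ℕ)) =
        ∑ m ∈ (Finset.univ.filter (fun j => i ≤ j)).image
          (fun j : Fin (n+1) => (j:ℕ)-(i:ℕ)), ε ^ m := by
      rw [Finset.sum_image]
      intro a ha b hb hab
      have ha' : i ≤ a := (Finset.mem_filter.mp ha).2
      have hb' : i ≤ b := (Finset.mem_filter.mp hb).2
      have ha'' : (i:ℕ) ≤ (a:ℕ) := ha'
      have hb'' : (i:ℕ) ≤ (b:ℕ) := hb'
      exact Fin.ext (by simp only at hab; omega)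
    rw [h1]
    have h2 : ∑ m ∈ (Finset.univ.filter (fun j => i ≤ j)).image
          (fun j : Fin (n+1) => (j:ℕ)-(i:ℕ)), ε ^ m ≤ ∑ m ∈ Finset.range (n+1), ε ^ m := by
      refine Finset.sum_le_sum_of_subset_of_nonneg ?_ (fun m _ _ => by positivity)
      intro m hm
      simp only [Finset.mem_image] at hm
      obtain ⟨j, -, rfl⟩ := hm
      exact Finset.mem_range.mpr (by omega)
    refine le_trans h2 ?_
    rw [geom_sum_eq (ne_of_lt hε1) (n+1),
      show ε ^ (n+1) - 1 = -(1 - ε ^ (n+1)) by ring, show ε - 1 = -(1-ε) by ring,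
      neg_div_neg_eq, div_le_div_iff₀ h1ε h1ε]
    nlinarith [pow_pos hε0 (n+1)]
  -- bounds on |Y| and integrability of p*Y
  have hYbd : ∀ (j : Fin (n+1)) ω, ‖Y j ω‖ ≤ (1/ε) ^ ((j:ℕ)+1) := by
    intro j ω
    rcases hval j ω with h'|h' <;> rw [h', Real.norm_eq_abs]
    · rw [abs_of_pos (hhipos j)]
    · rw [abs_zero]; exact (hhipos j).le
  have hpYint : ∀ i j, Integrable (fun ω => p i ω * Y j ω) μ := by
    intro i j
    refine hbint _ ((1/ε) ^ ((j:ℕ)+1)) ((hpmeas i).mul (hmeas j)) (fun ω => ?_)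
    rw [norm_mul]
    calc ‖p i ω‖ * ‖Y j ω‖ ≤ 1 * (1/ε) ^ ((j:ℕ)+1) :=
      mul_le_mul (habs01 _ (hpnn i ω) (hp1 i ω)) (hYbd j ω) (norm_nonneg _) zero_le_one
    _ = (1/ε) ^ ((j:ℕ)+1) := one_mul _
  -- step 1 : expand the integral
  have hstep1 : ∫ ω, ∑ i, p i ω * X i ω ∂μ =
      ∑ i : Fin (n+1), ∑ j ∈ Finset.univ.filter (fun j => i ≤ j),
        ε ^ ((j:ℕ)-(i:ℕ)) * ∫ ω, p i ω * Y j ω ∂μ := by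
    have hptw : ∀ ω, ∑ i, p i ω * X i ω = ∑ i : Fin (n+1),
        ∑ j ∈ Finset.univ.filter (fun j => i ≤ j),
        ε ^ ((j:ℕ)-(i:ℕ)) * (p i ω * Y j ω) := by
      intro ω
      refine Finset.sum_congr rfl (fun i _ => ?_)
      rw [hX i ω, Finset.mul_sum]
      exact Finset.sum_congr rfl (fun j _ => by ring)
    rw [integral_congr_ae (ae_of_all _ hptw)]
    rw [integral_finset_sum _ (fun i _ => integrable_finset_sum _
      (fun j _ => ((hpYint i j).const_mul _)))]
    refine Finset.sum_congr rfl (fun i _ => ?_)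
    rw [integral_finset_sum _ (fun j _ => ((hpYint i j).const_mul _))]
    exact Finset.sum_congr rfl (fun j _ => integral_const_mul _ _)
  -- step 2 : bound by the residual integrals
  have hstep2 : ∫ ω, ∑ i, p i ω * X i ω ∂μ ≤
      (∑ i : Fin (n+1), ∑ j ∈ Finset.univ.filter (fun j => i ≤ j),
        ε ^ ((j:ℕ)-(i:ℕ)) * ∫ ω, r i ω * (1 - ind j ω) ∂μ) / (1-ε) := by
    rw [hstep1, Finset.sum_div]
    refine Finset.sum_le_sum (fun i _ => ?_)
    rw [Finset.sum_div]
    refine Finset.sum_le_sum (fun j hj => ?_)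
    have hij : i ≤ j := (Finset.mem_filter.mp hj).2
    rw [mul_div_assoc]
    exact mul_le_mul_of_nonneg_left (hAbound i j hij) (pow_nonneg hε0.le _)
  -- step 3 : the residual sum as one integral, bounded pointwise
  have hstep3 : ∑ i : Fin (n+1), ∑ j ∈ Finset.univ.filter (fun j => i ≤ j),
      ε ^ ((j:ℕ)-(i:ℕ)) * ∫ ω, r i ω * (1 - ind j ω) ∂μ ≤ 1/(1-ε) := by
    have heq : ∑ i : Fin (n+1), ∑ j ∈ Finset.univ.filter (fun j => i ≤ j),
        ε ^ ((j:ℕ)-(i:ℕ)) * ∫ ω, r i ω * (1 - ind j ω) ∂μ =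
        ∫ ω, ∑ i : Fin (n+1), ∑ j ∈ Finset.univ.filter (fun j => i ≤ j),
          ε ^ ((j:ℕ)-(i:ℕ)) * (r i ω * (1 - ind j ω)) ∂μ := by
      rw [integral_finset_sum _ (fun i _ => integrable_finset_sum _
        (fun j _ => ((hrindint i j).const_mul _)))]
      refine Finset.sum_congr rfl (fun i _ => ?_)
      rw [integral_finset_sum _ (fun j _ => ((hrindint i j).const_mul _))]
      exact Finset.sum_congr rfl (fun j _ => (integral_const_mul _ _).symm)
    rw [heq]
    have hptw : ∀ ω, ∑ i : Fin (n+1), ∑ j ∈ Finset.univ.filter (fun j => i ≤ j),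
        ε ^ ((j:ℕ)-(i:ℕ)) * (r i ω * (1 - ind j ω)) ≤ 1/(1-ε) := by
      intro ω
      have hinner : ∀ i : Fin (n+1), ∑ j ∈ Finset.univ.filter (fun j => i ≤ j),
          ε ^ ((j:ℕ)-(i:ℕ)) * (r i ω * (1 - ind j ω)) ≤ r i ω * (1/(1-ε)) := by
        intro i
        calc ∑ j ∈ Finset.univ.filter (fun j => i ≤ j),
            ε ^ ((j:ℕ)-(i:ℕ)) * (r i ω * (1 - ind j ω))
            ≤ ∑ j ∈ Finset.univ.filter (fun j => i ≤ j), ε ^ ((j:ℕ)-(i:ℕ)) * r i ω := by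
              refine Finset.sum_le_sum (fun j _ => ?_)
              refine mul_le_mul_of_nonneg_left ?_ (by positivity)
              exact mul_le_of_le_one_right (hr0 i ω) (by linarith [hind0 j ω])
          _ = (∑ j ∈ Finset.univ.filter (fun j => i ≤ j), ε ^ ((j:ℕ)-(i:ℕ))) * r i ω :=
              (Finset.sum_mul _ _ _).symm
          _ ≤ (1/(1-ε)) * r i ω :=
              mul_le_mul_of_nonneg_right (hgeom i) (hr0 i ω)
          _ = r i ω * (1/(1-ε)) := mul_comm _ _
      calc ∑ i : Fin (n+1), ∑ j ∈ Finset.univ.filter (fun j => i ≤ j),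
          ε ^ ((j:ℕ)-(i:ℕ)) * (r i ω * (1 - ind j ω))
          ≤ ∑ i, r i ω * (1/(1-ε)) := Finset.sum_le_sum (fun i _ => hinner i)
        _ = (∑ i, r i ω) * (1/(1-ε)) := (Finset.sum_mul _ _ _).symm
        _ ≤ 1 * (1/(1-ε)) := mul_le_mul_of_nonneg_right (hrsum ω) (by positivity)
        _ = 1/(1-ε) := one_mul _
    calc ∫ ω, ∑ i : Fin (n+1), ∑ j ∈ Finset.univ.filter (fun j => i ≤ j),
        ε ^ ((j:ℕ)-(i:ℕ)) * (r i ω * (1 - ind j ω)) ∂μ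
        ≤ ∫ _ω, 1/(1-ε) ∂μ := by
          refine integral_mono (integrable_finset_sum _ (fun i _ =>
            integrable_finset_sum _ (fun j _ => ((hrindint i j).const_mul _))))
            (integrable_const _) hptw
      _ = 1/(1-ε) := by simp
  -- conclude
  calc ∫ ω, ∑ i, p i ω * X i ω ∂μ
      ≤ (∑ i : Fin (n+1), ∑ j ∈ Finset.univ.filter (fun j => i ≤ j),
        ε ^ ((j:ℕ)-(i:ℕ)) * ∫ ω, r i ω * (1 - ind j ω) ∂μ) / (1-ε) := hstep2
    _ ≤ (1/(1-ε)) / (1-ε) := by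
        apply div_le_div_of_nonneg_right hstep3 h1ε.le
    _ = 1 / (1-ε)^2 := by rw [div_div, ← pow_two]
end

section
/- Let X_1,...,X_n be (possibly dependent) nonnegative random variables with finite expectations, linearly correlated as X = A·Y for a nonnegative matrix A with column sparsity s_col (each feature Y_j appears with nonzero coefficient in at most s_col of the X_i) and independent nonnegative Y_1,...,Y_m. Include each index i ∈ [n] in a random set S independently with probability 1/s_col; for i ∈ S let T_i = {j : A_{ij} > 0 and A_{i'j} = 0 for all i' ∈ S with i' < i} and Z_i = Σ_{j∈T_i} A_{ij} Y_j (with Z_i = 0 for i ∉ S). Then E[max_i Z_i] ≥ (1/(e·s_col))·E[max_i X_i], where the outer expectation is over both S and Y. -/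
open MeasureTheory ProbabilityTheory Finset
open scoped Classical

lemma aux_exp_pow (s : ℕ) (hs : 1 ≤ s) : Real.exp (-1) ≤ (1 - 1/(s:ℝ))^(s-1) := by
  rcases eq_or_lt_of_le hs with h | h
  · rw [← h]
    norm_num
  · set k := s - 1 with hk
    have hk1 : 1 ≤ k := by omega
    have hks : (s:ℝ) = (k:ℝ) + 1 := by
      have : k + 1 = s := by omega
      exact_mod_cast this.symm
    have hkpos : (0:ℝ) < k := by exact_mod_cast hk1
    have hbase : Real.exp (-(1/(k:ℝ))) ≤ 1 - 1/(s:ℝ) := by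
      have h1 : 1/(k:ℝ) + 1 ≤ Real.exp (1/(k:ℝ)) := Real.add_one_le_exp _
      have h3 : (0:ℝ) < 1/(k:ℝ) + 1 := by positivity
      have h4 := one_div_le_one_div_of_le h3 h1
      rw [Real.exp_neg, ← one_div]
      refine h4.trans (le_of_eq ?_)
      rw [hks]
      have hkne : (k:ℝ) ≠ 0 := ne_of_gt hkpos
      have h5 : 1/(k:ℝ) + 1 = ((k:ℝ)+1)/k := by rw [add_div, div_self hkne, one_div, add_comm]
      rw [h5, one_div_div, eq_sub_iff_add_eq, ← add_div, div_self (by positivity)]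
    calc Real.exp (-1) = (Real.exp (-(1/(k:ℝ))))^k := by
          rw [← Real.exp_nat_mul]
          congr 1
          field_simp
      _ ≤ (1 - 1/(s:ℝ))^k := pow_le_pow_left₀ (Real.exp_nonneg _) hbase k

lemma aux_prob (s c : ℕ) (hs : 1 ≤ s) (hc : c ≤ s - 1) :
    1/(Real.exp 1 * s) ≤ (1/(s:ℝ)) * (1 - 1/(s:ℝ))^c := by
  have hs0 : (0:ℝ) < s := by exact_mod_cast hs
  have hsR : (1:ℝ) ≤ s := by exact_mod_cast hs
  have hb0 : (0:ℝ) ≤ 1 - 1/(s:ℝ) := by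
    rw [sub_nonneg]
    rw [div_le_one hs0]
    exact hsR
  have hb1 : 1 - 1/(s:ℝ) ≤ 1 := by
    have : (0:ℝ) ≤ 1/(s:ℝ) := by positivity
    linarith
  have h1 : (1 - 1/(s:ℝ))^(s-1) ≤ (1 - 1/(s:ℝ))^c := pow_le_pow_of_le_one hb0 hb1 hc
  have h2 := (aux_exp_pow s hs).trans h1
  calc 1/(Real.exp 1 * s) = (1/(s:ℝ)) * Real.exp (-1) := by
        rw [Real.exp_neg]
        have := Real.exp_ne_zero 1
        field_simp
    _ ≤ (1/(s:ℝ)) * (1 - 1/(s:ℝ))^c := by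
        apply mul_le_mul_of_nonneg_left h2 (by positivity)

/-- Subsampling claim for bounded column sparsity: include each row `i` independently with
probability `1/s_col` (indicators `B i`, jointly independent of the features `Y`), assign
each feature to the first surviving row containing it, and let `Z_i` be the resulting sum.
Then `E[max_i Z_i] ≥ E[max_i X_i]/(e·s_col)`. -/
theorem stmt9 {Ω : Type*} [MeasurableSpace Ω] (μ : Measure Ω) [IsProbabilityMeasure μ]
    {n m : ℕ} (scol : ℕ) (hscol : 1 ≤ scol)
    (A : Fin (n + 1) → Fin m → ℝ) (hA : ∀ i j, 0 ≤ A i j)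
    (hcol : ∀ j, (Finset.univ.filter (fun i => A i j ≠ 0)).card ≤ scol)
    (Y : Fin m → Ω → ℝ) (hYmeas : ∀ j, Measurable (Y j)) (hYnn : ∀ j ω, 0 ≤ Y j ω)
    (hYint : ∀ j, Integrable (Y j) μ)
    (B : Fin (n + 1) → Ω → Bool) (hBmeas : ∀ i, Measurable (B i))
    (hBprob : ∀ i, (μ {ω | B i ω = true}).toReal = 1 / scol)
    (hindep : iIndepFun
      (m := fun k : Fin (n + 1) ⊕ Fin m => Sum.rec
        (fun _ => (inferInstance : MeasurableSpace Bool))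
        (fun _ => (inferInstance : MeasurableSpace ℝ)) k)
      (fun k => Sum.rec
        (motive := fun k => Ω → Sum.elim (fun _ => Bool) (fun _ => ℝ) k) B Y k) μ)
    (X Z : Fin (n + 1) → Ω → ℝ)
    (hX : ∀ i ω, X i ω = ∑ j, A i j * Y j ω)
    (hZ : ∀ i ω, Z i ω =
      if B i ω = true then
        ∑ j ∈ Finset.univ.filter (fun j =>
            A i j ≠ 0 ∧ ∀ i' : Fin (n + 1), i' < i → B i' ω = true → A i' j = 0),
          A i j * Y j ω
      else 0) :
    (1 / (Real.exp 1 * scol)) * ∫ ω, Finset.univ.sup' Finset.univ_nonempty (fun i => X i ω) ∂μ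
      ≤ ∫ ω, Finset.univ.sup' Finset.univ_nonempty (fun i => Z i ω) ∂μ := by
  -- tuples
  set Bt : Ω → (Fin (n+1) → Bool) := fun ω i => B i ω with hBt
  set Yt : Ω → (Fin m → ℝ) := fun ω j => Y j ω with hYt
  have hBtmeas : Measurable Bt := measurable_pi_lambda _ hBmeas
  have hYtmeas : Measurable Yt := measurable_pi_lambda _ hYmeas
  -- argmax machinery
  set W : Fin (n+1) → (Fin m → ℝ) → ℝ := fun i y => ∑ j, A i j * y j with hW
  have hWmeas : ∀ i, Measurable (W i) :=
    fun i => Finset.measurable_sum _ (fun j _ => (measurable_pi_apply j).const_mul _)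
  set Msup : (Fin m → ℝ) → ℝ := fun y => Finset.univ.sup' Finset.univ_nonempty (fun i => W i y)
    with hMsup
  have hMmeas : Measurable Msup := by
    have h1 := Finset.measurable_sup' (f := W) Finset.univ_nonempty (fun i _ => hWmeas i)
    have h2 : Msup = Finset.univ.sup' Finset.univ_nonempty W := by
      funext y
      rw [Finset.sup'_apply]
    rw [h2]
    exact h1
  have hfilt : ∀ y : Fin m → ℝ, (Finset.univ.filter (fun i => W i y = Msup y)).Nonempty := by
    intro y
    obtain ⟨i, _, hieq⟩ := Finset.exists_mem_eq_sup' Finset.univ_nonempty (fun i => W i y)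
    exact ⟨i, Finset.mem_filter.2 ⟨Finset.mem_univ _, hieq.symm⟩⟩
  set istar : (Fin m → ℝ) → Fin (n+1) :=
    fun y => (Finset.univ.filter (fun i => W i y = Msup y)).min' (hfilt y) with histar
  have histar_eq : ∀ y, W (istar y) y = Msup y :=
    fun y => (Finset.mem_filter.1 (Finset.min'_mem _ (hfilt y))).2
  have histarmeas : Measurable istar := by
    apply measurable_to_countable'
    intro i
    have hiff : ∀ y, istar y = i ↔ (W i y = Msup y ∧ ∀ i', i' < i → ¬ (W i' y = Msup y)) := by
      intro y
      constructor
      · rintro rfl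
        refine ⟨histar_eq y, fun i' hi' hW' => ?_⟩
        have hle : istar y ≤ i' :=
          Finset.min'_le (Finset.univ.filter (fun i => W i y = Msup y)) i'
            (Finset.mem_filter.2 ⟨Finset.mem_univ i', hW'⟩)
        exact absurd hle (not_le.2 hi')
      · rintro ⟨h1, h2⟩
        have hmem : i ∈ Finset.univ.filter (fun i => W i y = Msup y) :=
          Finset.mem_filter.2 ⟨Finset.mem_univ _, h1⟩
        have hle : istar y ≤ i :=
          Finset.min'_le (Finset.univ.filter (fun i => W i y = Msup y)) i hmem
        rcases lt_or_eq_of_le hle with hlt | he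
        · exact absurd (histar_eq y) (h2 _ hlt)
        · exact he
    have hset : istar ⁻¹' {i} =
        {y | W i y = Msup y} ∩ ⋂ i' ∈ Finset.univ.filter (fun i' : Fin (n+1) => i' < i),
          {y | W i' y = Msup y}ᶜ := by
      ext y
      simp only [Set.mem_preimage, Set.mem_singleton_iff, hiff, Set.mem_inter_iff,
        Set.mem_setOf_eq, Set.mem_iInter, Finset.mem_filter, Finset.mem_univ, true_and,
        Set.mem_compl_iff]
    rw [hset]
    exact (measurableSet_eq_fun (hWmeas i) hMmeas).inter
      (MeasurableSet.biInter (Set.to_countable _)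
        fun i' _ => (measurableSet_eq_fun (hWmeas i') hMmeas).compl)
  -- indicator functions on Bool tuples
  set Ein : Fin (n+1) → Fin m → Set (Fin (n+1) → Bool) := fun i j =>
    {b | b i = true ∧ ∀ i', i' < i → b i' = true → A i' j = 0} with hEin
  set gI : Fin (n+1) → Fin m → (Fin (n+1) → Bool) → ℝ := fun i j b =>
    if b ∈ Ein i j then 1 else 0 with hgI
  have hgmeas : ∀ i j, Measurable (gI i j) := fun i j => measurable_of_countable _
  have hgnn : ∀ i j b, 0 ≤ gI i j b := by
    intro i j b; simp only [hgI]; split <;> norm_num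
  have hgle : ∀ i j b, gI i j b ≤ 1 := by
    intro i j b; simp only [hgI]; split <;> norm_num
  -- pointwise formula for Z
  have hZeq : ∀ i ω, Z i ω = ∑ j, A i j * Y j ω * gI i j (Bt ω) := by
    intro i ω
    rw [hZ]
    by_cases hb : B i ω = true
    · rw [if_pos hb, Finset.sum_filter]
      refine Finset.sum_congr rfl fun j _ => ?_
      have hbt : Bt ω i = true := hb
      by_cases hc : ∀ i', i' < i → B i' ω = true → A i' j = 0
      · have hgeq : gI i j (Bt ω) = 1 := by
          simp only [hgI, hEin, Set.mem_setOf_eq]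
          exact if_pos ⟨hbt, hc⟩
        by_cases ha : A i j = 0
        · rw [if_neg (fun h => absurd h.1 (by simpa using ha)), ha, zero_mul, zero_mul]
        · rw [if_pos ⟨ha, hc⟩, hgeq, mul_one]
      · have hgeq : gI i j (Bt ω) = 0 := by
          simp only [hgI, hEin, Set.mem_setOf_eq]
          refine if_neg ?_
          rintro ⟨-, h2⟩
          exact hc h2
        rw [hgeq, mul_zero, if_neg (fun h => hc h.2)]
    · rw [if_neg hb]
      symm
      refine Finset.sum_eq_zero fun j _ => ?_
      have hgeq : gI i j (Bt ω) = 0 := by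
        simp only [hgI, hEin, Set.mem_setOf_eq]
        refine if_neg ?_
        rintro ⟨h1, -⟩
        exact hb h1
      rw [hgeq, mul_zero]
  -- F functions
  have hFmeas0 : ∀ i j, Measurable (fun y : Fin m → ℝ => if istar y = i then y j else 0) :=
    fun i j => Measurable.ite (histarmeas (measurableSet_singleton i))
      (measurable_pi_apply j) measurable_const
  set F : Fin (n+1) → Fin m → Ω → ℝ := fun i j ω => if istar (Yt ω) = i then Y j ω else 0 with hF
  have hFcomp : ∀ i j, F i j = (fun y : Fin m → ℝ => if istar y = i then y j else 0) ∘ Yt :=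
    fun i j => rfl
  have hFabs : ∀ i j ω, |F i j ω| ≤ |Y j ω| := by
    intro i j ω
    simp only [hF]
    split
    · exact le_rfl
    · simp [abs_nonneg]
  have hFnn : ∀ i j ω, 0 ≤ F i j ω := by
    intro i j ω
    simp only [hF]
    split
    · exact hYnn j ω
    · exact le_rfl
  have hFint : ∀ i j, Integrable (F i j) μ := by
    intro i j
    refine (hYint j).mono ?_ (Filter.Eventually.of_forall fun ω => ?_)
    · rw [hFcomp]
      exact ((hFmeas0 i j).comp hYtmeas).aestronglyMeasurable
    · rw [Real.norm_eq_abs, Real.norm_eq_abs]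
      exact hFabs i j ω
  have hGmeasΩ : ∀ i j, Measurable (fun ω => gI i j (Bt ω)) :=
    fun i j => (hgmeas i j).comp hBtmeas
  have hGint : ∀ i j, Integrable (fun ω => gI i j (Bt ω)) μ := by
    intro i j
    refine Integrable.mono' (integrable_const 1) (hGmeasΩ i j).aestronglyMeasurable
      (Filter.Eventually.of_forall fun ω => ?_)
    rw [Real.norm_eq_abs, abs_of_nonneg (hgnn _ _ _)]
    exact hgle _ _ _
  have hFGint : ∀ i j, Integrable (fun ω => F i j ω * gI i j (Bt ω)) μ := by
    intro i j
    refine (hYint j).mono ?_ (Filter.Eventually.of_forall fun ω => ?_)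
    · refine AEStronglyMeasurable.mul ?_ (hGmeasΩ i j).aestronglyMeasurable
      rw [hFcomp]
      exact ((hFmeas0 i j).comp hYtmeas).aestronglyMeasurable
    · rw [Real.norm_eq_abs, Real.norm_eq_abs, abs_mul]
      calc |F i j ω| * |gI i j (Bt ω)| ≤ |F i j ω| * 1 := by
            refine mul_le_mul_of_nonneg_left ?_ (abs_nonneg _)
            rw [abs_of_nonneg (hgnn _ _ _)]
            exact hgle _ _ _
        _ = |F i j ω| := mul_one _
        _ ≤ |Y j ω| := hFabs i j ω
  -- independence of B-tuple and Y-tuple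
  have hfmeas : ∀ k : Fin (n+1) ⊕ Fin m,
      @Measurable Ω (Sum.elim (fun _ => Bool) (fun _ => ℝ) k) _
        (Sum.rec (fun _ => (inferInstance : MeasurableSpace Bool))
          (fun _ => (inferInstance : MeasurableSpace ℝ)) k)
        (Sum.rec (motive := fun k => Ω → Sum.elim (fun _ => Bool) (fun _ => ℝ) k) B Y k) := by
    rintro (i | j)
    · exact hBmeas i
    · exact hYmeas j
  have hBY : IndepFun Bt Yt μ := by
    set SL : Finset (Fin (n+1) ⊕ Fin m) :=
      Finset.univ.map ⟨Sum.inl (β := Fin m), Sum.inl_injective⟩ with hSL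
    set TR : Finset (Fin (n+1) ⊕ Fin m) :=
      Finset.univ.map ⟨Sum.inr (α := Fin (n+1)), Sum.inr_injective⟩ with hTR
    letI iS : ∀ a : {x // x ∈ SL}, MeasurableSpace
        (Sum.elim (fun _ => Bool) (fun _ => ℝ) (a : Fin (n+1) ⊕ Fin m)) :=
      fun a => Sum.rec (fun _ => (inferInstance : MeasurableSpace Bool))
        (fun _ => (inferInstance : MeasurableSpace ℝ)) (a : Fin (n+1) ⊕ Fin m)
    letI iT : ∀ a : {x // x ∈ TR}, MeasurableSpace
        (Sum.elim (fun _ => Bool) (fun _ => ℝ) (a : Fin (n+1) ⊕ Fin m)) :=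
      fun a => Sum.rec (fun _ => (inferInstance : MeasurableSpace Bool))
        (fun _ => (inferInstance : MeasurableSpace ℝ)) (a : Fin (n+1) ⊕ Fin m)
    have hdisj : Disjoint SL TR := by
      simp [hSL, hTR, Finset.disjoint_left]
    have h := hindep.indepFun_finset SL TR hdisj hfmeas
    have hmemL : ∀ i : Fin (n+1), Sum.inl i ∈ SL :=
      fun i => Finset.mem_map_of_mem _ (Finset.mem_univ i)
    have hmemR : ∀ j : Fin m, Sum.inr j ∈ TR :=
      fun j => Finset.mem_map_of_mem _ (Finset.mem_univ j)
    exact h.comp (φ := fun v (i : Fin (n+1)) => v ⟨Sum.inl i, hmemL i⟩)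
      (ψ := fun v (j : Fin m) => v ⟨Sum.inr j, hmemR j⟩)
      (by exact measurable_pi_lambda _ fun i => measurable_pi_apply _)
      (by exact measurable_pi_lambda _ fun j => measurable_pi_apply _)
  have hmul : ∀ i j, ∫ ω, F i j ω * gI i j (Bt ω) ∂μ
      = (∫ ω, F i j ω ∂μ) * ∫ ω, gI i j (Bt ω) ∂μ := by
    intro i j
    have hind : IndepFun (F i j) (fun ω => gI i j (Bt ω)) μ := by
      have := (hBY.symm).comp (hFmeas0 i j) (hgmeas i j)
      exact this
    exact hind.integral_mul_eq_mul_integral (hFint i j).aestronglyMeasurable (hGint i j).aestronglyMeasurable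
  -- value of the integral of gI ∘ Bt
  have hgint_eq : ∀ i j, ∫ ω, gI i j (Bt ω) ∂μ = (μ (Bt ⁻¹' Ein i j)).toReal := by
    intro i j
    have hEms : MeasurableSet (Bt ⁻¹' Ein i j) := hBtmeas ((Set.to_countable _).measurableSet)
    have hfun : (fun ω => gI i j (Bt ω)) = Set.indicator (Bt ⁻¹' Ein i j) (fun _ => (1:ℝ)) := by
      funext ω
      simp only [hgI, Set.indicator_apply, Set.mem_preimage]
    rw [hfun, integral_indicator hEms, setIntegral_const, smul_eq_mul, mul_one]
    rfl
  -- probability lower bound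
  have hprob : ∀ i j, A i j ≠ 0 → 1/(Real.exp 1 * scol) ≤ (μ (Bt ⁻¹' Ein i j)).toReal := by
    intro i j hAij
    set Fb : Finset (Fin (n+1)) := Finset.univ.filter (fun i' => i' < i ∧ A i' j ≠ 0) with hFb
    set SS : Finset (Fin (n+1) ⊕ Fin m) := insert (Sum.inl i) (Fb.image (Sum.inl (β := Fin m))) with hSS
    set sfun : Fin (n+1) ⊕ Fin m → Set Ω := fun k => Sum.rec
      (fun i' => if i' = i then {ω | B i' ω = true} else {ω | B i' ω = false})
      (fun _ => Set.univ) k with hsfun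
    have hiFb : i ∉ Fb := by simp [hFb]
    have hinotin : Sum.inl i ∉ Fb.image (Sum.inl (β := Fin m)) := by
      intro h
      obtain ⟨x, hx, he⟩ := Finset.mem_image.1 h
      cases Sum.inl_injective he
      exact hiFb hx
    have hInter : Bt ⁻¹' Ein i j = ⋂ k ∈ SS, sfun k := by
      ext ω
      simp only [Set.mem_preimage, hEin, Set.mem_setOf_eq, Set.mem_iInter, hSS,
        Finset.mem_insert, Finset.mem_image]
      constructor
      · rintro ⟨h1, h2⟩ k hk
        rcases hk with rfl | ⟨i', hi', rfl⟩
        · simpa [hsfun] using h1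
        · have hi'lt : i' < i ∧ A i' j ≠ 0 := by simpa [hFb] using hi'
          have hne : i' ≠ i := ne_of_lt hi'lt.1
          have hfa : B i' ω = false := by
            cases hb : B i' ω with
            | false => rfl
            | true => exact absurd (h2 i' hi'lt.1 hb) hi'lt.2
          simp [hsfun, hne, hfa]
      · intro h
        have h1 : B i ω = true := by
          have := h (Sum.inl i) (Or.inl rfl)
          simpa [hsfun] using this
        refine ⟨h1, fun i' hlt hb => ?_⟩
        by_contra hA0
        have hi'Fb : i' ∈ Fb := by simp [hFb, hlt, hA0]
        have hmem := h (Sum.inl i') (Or.inr ⟨i', hi'Fb, rfl⟩)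
        have hne : i' ≠ i := ne_of_lt hlt
        have hmem' : Bt ω i' = false := by simpa [hsfun, hne] using hmem
        rw [hb] at hmem'
        exact Bool.noConfusion hmem'
    have hmeas_k : ∀ k ∈ SS, MeasurableSet[
        (Sum.rec (motive := fun k => MeasurableSpace (Sum.elim (fun _ => Bool) (fun _ => ℝ) k))
          (fun _ => (inferInstance : MeasurableSpace Bool))
          (fun _ => (inferInstance : MeasurableSpace ℝ)) k).comap
          (Sum.rec (motive := fun k => Ω → Sum.elim (fun _ => Bool) (fun _ => ℝ) k) B Y k)]
        (sfun k) := by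
      intro k hk
      rcases k with i' | j'
      · by_cases h : i' = i
        · exact ⟨{true}, trivial, by ext ω; simp [hsfun, h]; rfl⟩
        · exact ⟨{false}, trivial, by ext ω; simp [hsfun, h]; rfl⟩
      · exact ⟨Set.univ, MeasurableSet.univ, by simp [hsfun]⟩
    have hμ := hindep.meas_biInter (S := SS) (s := sfun) hmeas_k
    have hcardFb : Fb.card ≤ scol - 1 := by
      have hsub : Fb ⊆ (Finset.univ.filter (fun i' => A i' j ≠ 0)).erase i := by
        intro x hx
        simp only [hFb, Finset.mem_filter, Finset.mem_univ, true_and] at hx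
        exact Finset.mem_erase.2 ⟨ne_of_lt hx.1, by simp [hx.2]⟩
      have h1 := Finset.card_le_card hsub
      rw [Finset.card_erase_of_mem (by simp [hAij])] at h1
      exact h1.trans (Nat.sub_le_sub_right (hcol j) 1)
    have hfalse : ∀ i', (μ {ω | B i' ω = false}).toReal = 1 - 1/(scol:ℝ) := by
      intro i'
      have hcompl : {ω | B i' ω = false} = {ω | B i' ω = true}ᶜ := by
        ext ω
        simp
      have hms : MeasurableSet {ω | B i' ω = true} := hBmeas i' (measurableSet_singleton true)
      rw [hcompl, prob_compl_eq_one_sub hms,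
        ENNReal.toReal_sub_of_le prob_le_one ENNReal.one_ne_top, ENNReal.toReal_one, hBprob i']
    rw [hInter, hμ, Finset.prod_insert hinotin,
      Finset.prod_image (fun a _ b _ hab => Sum.inl_injective hab),
      ENNReal.toReal_mul, ENNReal.toReal_prod]
    have hsl : (μ (sfun (Sum.inl i))).toReal = 1/(scol:ℝ) := by
      have hx : sfun (Sum.inl i) = {ω | B i ω = true} := by simp [hsfun]
      rw [hx, hBprob i]
    rw [hsl]
    have hprodeq : (∏ i' ∈ Fb, (μ (sfun (Sum.inl i'))).toReal) = (1 - 1/(scol:ℝ))^Fb.card := by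
      rw [Finset.prod_congr rfl (fun i' hi' => ?_), Finset.prod_const]
      have hlt : i' < i ∧ A i' j ≠ 0 := by simpa [hFb] using hi'
      have hne : i' ≠ i := ne_of_lt hlt.1
      have hx : sfun (Sum.inl i') = {ω | B i' ω = false} := by simp [hsfun, hne]
      rw [hx, hfalse i']
    rw [hprodeq]
    exact aux_prob scol Fb.card hscol hcardFb
  -- integrability of Z and X and sups
  have hZmeas : ∀ i, Measurable (Z i) := by
    intro i
    have : Z i = fun ω => ∑ j, A i j * Y j ω * gI i j (Bt ω) := funext (hZeq i)
    rw [this]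
    exact Finset.measurable_sum _ fun j _ => (((hYmeas j).const_mul _).mul (hGmeasΩ i j))
  have hZint : ∀ i, Integrable (Z i) μ := by
    intro i
    have hzf : Z i = fun ω => ∑ j, A i j * Y j ω * gI i j (Bt ω) := funext (hZeq i)
    rw [hzf]
    refine integrable_finset_sum _ fun j _ => ?_
    refine ((hYint j).const_mul (A i j)).mono
      ((((hYmeas j).const_mul _).mul (hGmeasΩ i j))).aestronglyMeasurable
      (Filter.Eventually.of_forall fun ω => ?_)
    rw [Real.norm_eq_abs, Real.norm_eq_abs, abs_mul]
    calc |A i j * Y j ω| * |gI i j (Bt ω)| ≤ |A i j * Y j ω| * 1 := by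
          refine mul_le_mul_of_nonneg_left ?_ (abs_nonneg _)
          rw [abs_of_nonneg (hgnn _ _ _)]
          exact hgle _ _ _
      _ = |A i j * Y j ω| := mul_one _
  have hXmeas : ∀ i, Measurable (X i) := by
    intro i
    have : X i = fun ω => ∑ j, A i j * Y j ω := funext (hX i)
    rw [this]
    exact Finset.measurable_sum _ fun j _ => ((hYmeas j).const_mul _)
  have hXint : ∀ i, Integrable (X i) μ := by
    intro i
    have : X i = fun ω => ∑ j, A i j * Y j ω := funext (hX i)
    rw [this]
    exact integrable_finset_sum _ fun j _ => ((hYint j).const_mul _)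
  have hsupint : ∀ (f : Fin (n+1) → Ω → ℝ), (∀ i, Integrable (f i) μ) → (∀ i, Measurable (f i)) →
      Integrable (fun ω => Finset.univ.sup' Finset.univ_nonempty (fun i => f i ω)) μ := by
    intro f hint hmeas
    refine Integrable.mono (integrable_finset_sum Finset.univ (fun i _ => (hint i).abs))
      ?_ (Filter.Eventually.of_forall fun ω => ?_)
    · have h1 := Finset.measurable_sup' (f := f) Finset.univ_nonempty (fun i _ => hmeas i)
      have h2 : (fun ω => Finset.univ.sup' Finset.univ_nonempty (fun i => f i ω))
          = Finset.univ.sup' Finset.univ_nonempty f := by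
        funext ω
        rw [Finset.sup'_apply]
      rw [h2]
      exact h1.aestronglyMeasurable
    rw [Real.norm_eq_abs, Real.norm_eq_abs]
    have hR : abs (∑ i, |f i ω|) = ∑ i, |f i ω| :=
      abs_of_nonneg (Finset.sum_nonneg fun i _ => abs_nonneg _)
    rw [hR, abs_le]
    constructor
    · have h1 : f 0 ω ≤ Finset.univ.sup' Finset.univ_nonempty (fun i => f i ω) :=
        Finset.le_sup' (f := fun i => f i ω) (Finset.mem_univ (0 : Fin (n+1)))
      have h2 : |f 0 ω| ≤ ∑ i, |f i ω| :=
        Finset.single_le_sum (f := fun i => |f i ω|) (fun i _ => abs_nonneg _)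
          (Finset.mem_univ (0 : Fin (n+1)))
      have h3 := neg_abs_le (f 0 ω)
      linarith
    · obtain ⟨i0, _, he⟩ := Finset.exists_mem_eq_sup' Finset.univ_nonempty (fun i => f i ω)
      rw [he]
      exact (le_abs_self _).trans (Finset.single_le_sum (f := fun i => |f i ω|)
        (fun i _ => abs_nonneg _) (Finset.mem_univ i0))
  -- pointwise decomposition of sup X
  have hXdecomp : ∀ ω, Finset.univ.sup' Finset.univ_nonempty (fun i => X i ω)
      = ∑ i, ∑ j, A i j * F i j ω := by
    intro ω
    have h1 : (fun i => X i ω) = fun i => W i (Yt ω) := by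
      funext i
      rw [hX]
    have h2 : Finset.univ.sup' Finset.univ_nonempty (fun i => X i ω) = Msup (Yt ω) := by
      rw [h1]
    have h3 : Msup (Yt ω) = W (istar (Yt ω)) (Yt ω) := (histar_eq _).symm
    have h4 : W (istar (Yt ω)) (Yt ω)
        = ∑ i, if istar (Yt ω) = i then W i (Yt ω) else 0 := by
      rw [Finset.sum_ite_eq, if_pos (Finset.mem_univ _)]
    rw [h2, h3, h4]
    refine Finset.sum_congr rfl fun i _ => ?_
    by_cases h : istar (Yt ω) = i
    · rw [if_pos h]
      show (∑ j, A i j * Y j ω) = ∑ j, A i j * F i j ω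
      refine Finset.sum_congr rfl fun j _ => ?_
      have hFe : F i j ω = Y j ω := by
        simp only [hF]
        rw [if_pos h]
      rw [hFe]
    · rw [if_neg h]
      symm
      refine Finset.sum_eq_zero fun j _ => ?_
      have hFe : F i j ω = 0 := by
        simp only [hF]
        rw [if_neg h]
      rw [hFe, mul_zero]
  -- pointwise lower bound for sup Z
  have hZlower : ∀ ω, ∑ i, ∑ j, A i j * (F i j ω * gI i j (Bt ω))
      ≤ Finset.univ.sup' Finset.univ_nonempty (fun i => Z i ω) := by
    intro ω
    have h4 : ∀ i, ∑ j, A i j * (F i j ω * gI i j (Bt ω))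
        = if istar (Yt ω) = i then Z i ω else 0 := by
      intro i
      by_cases h : istar (Yt ω) = i
      · rw [if_pos h, hZeq]
        refine Finset.sum_congr rfl fun j _ => ?_
        have hFe : F i j ω = Y j ω := by
          simp only [hF]
          rw [if_pos h]
        rw [hFe, mul_assoc]
      · rw [if_neg h]
        refine Finset.sum_eq_zero fun j _ => ?_
        have hFe : F i j ω = 0 := by
          simp only [hF]
          rw [if_neg h]
        rw [hFe, zero_mul, mul_zero]
    have hkey : ∑ i, ∑ j, A i j * (F i j ω * gI i j (Bt ω)) = Z (istar (Yt ω)) ω := by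
      calc ∑ i, ∑ j, A i j * (F i j ω * gI i j (Bt ω))
          = ∑ i, if istar (Yt ω) = i then Z i ω else 0 :=
            Finset.sum_congr rfl fun i _ => h4 i
        _ = Z (istar (Yt ω)) ω := by rw [Finset.sum_ite_eq, if_pos (Finset.mem_univ _)]
    rw [hkey]
    exact Finset.le_sup' (f := fun i => Z i ω) (Finset.mem_univ _)
  -- integral identities
  have hIX : ∫ ω, Finset.univ.sup' Finset.univ_nonempty (fun i => X i ω) ∂μ
      = ∑ i, ∑ j, A i j * ∫ ω, F i j ω ∂μ := by
    rw [show (fun ω => Finset.univ.sup' Finset.univ_nonempty (fun i => X i ω))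
      = fun ω => ∑ i, ∑ j, A i j * F i j ω from funext hXdecomp]
    rw [integral_finset_sum _ (fun i _ => integrable_finset_sum _
      fun j _ => (hFint i j).const_mul (A i j))]
    refine Finset.sum_congr rfl fun i _ => ?_
    rw [integral_finset_sum _ (fun j _ => (hFint i j).const_mul (A i j))]
    exact Finset.sum_congr rfl fun j _ => integral_const_mul _ _
  have hIZ : ∫ ω, (∑ i, ∑ j, A i j * (F i j ω * gI i j (Bt ω))) ∂μ
      = ∑ i, ∑ j, A i j * ((∫ ω, F i j ω ∂μ) * (μ (Bt ⁻¹' Ein i j)).toReal) := by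
    rw [integral_finset_sum _ (fun i _ => integrable_finset_sum _
      fun j _ => (hFGint i j).const_mul (A i j))]
    refine Finset.sum_congr rfl fun i _ => ?_
    rw [integral_finset_sum _ (fun j _ => (hFGint i j).const_mul (A i j))]
    refine Finset.sum_congr rfl fun j _ => ?_
    rw [integral_const_mul, hmul i j, hgint_eq i j]
  -- final chain
  have hFnnI : ∀ i j, 0 ≤ ∫ ω, F i j ω ∂μ := fun i j => integral_nonneg (fun ω => hFnn i j ω)
  calc (1 / (Real.exp 1 * scol)) * ∫ ω, Finset.univ.sup' Finset.univ_nonempty (fun i => X i ω) ∂μ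
      = ∑ i, ∑ j, (1 / (Real.exp 1 * scol)) * (A i j * ∫ ω, F i j ω ∂μ) := by
        rw [hIX, Finset.mul_sum]
        exact Finset.sum_congr rfl fun i _ => Finset.mul_sum _ _ _
    _ ≤ ∑ i, ∑ j, A i j * ((∫ ω, F i j ω ∂μ) * (μ (Bt ⁻¹' Ein i j)).toReal) := by
        refine Finset.sum_le_sum fun i _ => Finset.sum_le_sum fun j _ => ?_
        by_cases ha : A i j = 0
        · simp [ha]
        · have hp := hprob i j ha
          have hc := hFnnI i j
          have hAnn := hA i j
          calc (1 / (Real.exp 1 * scol)) * (A i j * ∫ ω, F i j ω ∂μ)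
              = A i j * ((∫ ω, F i j ω ∂μ) * (1 / (Real.exp 1 * scol))) := by ring
            _ ≤ A i j * ((∫ ω, F i j ω ∂μ) * (μ (Bt ⁻¹' Ein i j)).toReal) := by
                refine mul_le_mul_of_nonneg_left ?_ hAnn
                exact mul_le_mul_of_nonneg_left hp hc
    _ = ∫ ω, (∑ i, ∑ j, A i j * (F i j ω * gI i j (Bt ω))) ∂μ := hIZ.symm
    _ ≤ ∫ ω, Finset.univ.sup' Finset.univ_nonempty (fun i => Z i ω) ∂μ := by
        refine integral_mono (integrable_finset_sum _ (fun i _ => integrable_finset_sum _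
          fun j _ => (hFGint i j).const_mul (A i j))) (hsupint Z hZint hZmeas) hZlower
end

section
/- Let X_1,...,X_n be exchangeable-in-expectation nonnegative random variables (arbitrary joint distribution), let r ≤ n, and place each index independently and uniformly into one of r buckets B_1,...,B_r. Let X^{(1)} ≥ X^{(2)} ≥ ... denote the order statistics. Then r·E[max_{i ∈ B_1} X_i] ≥ (1/e)·E[Σ_{i=1}^r X^{(i)}]. -/
open MeasureTheory ProbabilityTheory Finset
open scoped Classical

/-- Maximum of `X i ω` over the indices landing in bucket `b` (0 if the bucket is empty). -/
noncomputable def bucketMax {Ω Ω' : Type*} {n r : ℕ} (X : Fin n → Ω → ℝ)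
    (G : Fin n → Ω' → Fin r) (b : Fin r) (ω : Ω) (ω' : Ω') : ℝ :=
  if h : (Finset.univ.filter (fun i => G i ω' = b)).Nonempty then
    (Finset.univ.filter (fun i => G i ω' = b)).sup' h (fun i => X i ω)
  else 0

lemma aux_exp {r i : ℕ} (hr : 0 < r) (hi : i < r) :
    (Real.exp 1 * r)⁻¹ ≤ (r : ℝ)⁻¹ * (1 - (r : ℝ)⁻¹) ^ i := by
  have hr0 : (0:ℝ) < r := by exact_mod_cast hr
  have hinv_le_one : (r:ℝ)⁻¹ ≤ 1 := by
    rw [inv_le_one_iff₀]; right; exact_mod_cast hr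
  have hbase0 : (0:ℝ) ≤ 1 - (r:ℝ)⁻¹ := by linarith
  have hbase1 : 1 - (r:ℝ)⁻¹ ≤ 1 := by
    have : (0:ℝ) ≤ (r:ℝ)⁻¹ := by positivity
    linarith
  have hkey : (Real.exp 1)⁻¹ ≤ (1 - (r:ℝ)⁻¹) ^ (r - 1) := by
    rcases Nat.lt_or_ge r 2 with h2 | h2
    · have hr1 : r = 1 := by omega
      subst hr1
      simp only [Nat.cast_one, inv_one, sub_self, Nat.sub_self, pow_zero]
      rw [inv_le_one_iff₀]; right
      have := Real.add_one_le_exp (1:ℝ); linarith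
    · have hr1 : (1:ℝ) ≤ (r:ℝ) - 1 := by
        have : (2:ℝ) ≤ r := by exact_mod_cast h2
        linarith
      have hrm1 : (0:ℝ) < (r:ℝ) - 1 := by linarith
      set x : ℝ := ((r:ℝ) - 1)⁻¹ with hx
      have hx0 : 0 < x := by positivity
      have h1 : (r:ℝ) / ((r:ℝ) - 1) ≤ Real.exp x := by
        have := Real.add_one_le_exp x
        have : x + 1 ≤ Real.exp x := this
        calc (r:ℝ) / ((r:ℝ) - 1) = x + 1 := by
              rw [hx, div_eq_iff (ne_of_gt hrm1)]
              field_simp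
              ring
          _ ≤ Real.exp x := this
      have h2' : Real.exp (-x) ≤ 1 - (r:ℝ)⁻¹ := by
        rw [Real.exp_neg]
        have hpos : (0:ℝ) < (r:ℝ) / ((r:ℝ) - 1) := by positivity
        have := inv_anti₀ hpos h1
        calc (Real.exp x)⁻¹ ≤ ((r:ℝ) / ((r:ℝ) - 1))⁻¹ := this
          _ = 1 - (r:ℝ)⁻¹ := by field_simp
      have h3 : Real.exp (-x) ^ (r-1) ≤ (1 - (r:ℝ)⁻¹) ^ (r-1) :=
        pow_le_pow_left₀ (Real.exp_nonneg _) h2' _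
      have h4 : Real.exp (-x) ^ (r-1) = (Real.exp 1)⁻¹ := by
        rw [← Real.exp_nat_mul, ← Real.exp_neg]
        congr 1
        have hcast : ((r - 1 : ℕ) : ℝ) = (r:ℝ) - 1 := by
          have : 1 ≤ r := hr
          push_cast [this]; ring
        rw [hcast, hx]
        field_simp
      linarith [h3, h4.symm.le]
  have hmono : (1 - (r:ℝ)⁻¹) ^ (r-1) ≤ (1 - (r:ℝ)⁻¹) ^ i :=
    pow_le_pow_of_le_one hbase0 hbase1 (by omega)
  calc (Real.exp 1 * r)⁻¹ = (r:ℝ)⁻¹ * (Real.exp 1)⁻¹ := by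
        rw [mul_inv]; ring
    _ ≤ (r:ℝ)⁻¹ * (1 - (r:ℝ)⁻¹) ^ i := by
        apply mul_le_mul_of_nonneg_left _ (by positivity)
        exact le_trans hkey hmono

lemma aux_prob_s13 {Ω' : Type*} [MeasurableSpace Ω'] (μ' : Measure Ω') [IsProbabilityMeasure μ']
    {n r : ℕ} (G : Fin n → Ω' → Fin r)
    (hGindep : iIndepFun G μ')
    (hGmeas : ∀ i, Measurable (G i))
    (hGunif : ∀ i b, μ' {ω' | G i ω' = b} = (r : ENNReal)⁻¹)
    (b0 : Fin r) (σ : Fin n → Fin n) (hσ : Function.Injective σ) (i : Fin n) :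
    μ' ({ω' | G (σ i) ω' = b0} ∩ ⋂ (j : Fin n) (_ : j < i), {ω' | G (σ j) ω' ≠ b0})
      = (r : ENNReal)⁻¹ * (1 - (r : ENNReal)⁻¹) ^ (i : ℕ) := by
  set sets : Fin n → Set (Fin r) := fun k => if k = σ i then {b0} else {b0}ᶜ with hsets
  set T : Finset (Fin n) := (Finset.Iic i).image σ with hT
  have hset_eq : ({ω' | G (σ i) ω' = b0} ∩ ⋂ (j : Fin n) (_ : j < i), {ω' | G (σ j) ω' ≠ b0})
      = ⋂ k ∈ T, G k ⁻¹' sets k := by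
    ext ω'
    simp only [Set.mem_inter_iff, Set.mem_setOf_eq, Set.mem_iInter, hT, Finset.mem_image,
      Finset.mem_Iic, Set.mem_preimage]
    constructor
    · rintro ⟨h1, h2⟩ k ⟨j, hj, rfl⟩
      by_cases hji : j = i
      · subst hji
        simp only [hsets, if_pos rfl, Set.mem_singleton_iff]
        exact h1
      · have hjlt : j < i := lt_of_le_of_ne hj hji
        have hne : σ j ≠ σ i := fun h => hji (hσ h)
        simp only [hsets, if_neg hne, Set.mem_compl_iff, Set.mem_singleton_iff]
        exact h2 j hjlt
    · intro h
      constructor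
      · have := h (σ i) ⟨i, le_refl i, rfl⟩
        simpa [hsets] using this
      · intro j hjlt
        have hne : σ j ≠ σ i := fun hh => (ne_of_lt hjlt) (hσ hh)
        have := h (σ j) ⟨j, le_of_lt hjlt, rfl⟩
        simpa [hsets, if_neg hne] using this
  rw [hset_eq]
  have hsets_meas : ∀ k, k ∈ T → MeasurableSet (sets k) := by
    intro k _
    by_cases hk : k = σ i
    · simp only [hsets, if_pos hk]; exact measurableSet_singleton b0
    · simp only [hsets, if_neg hk]; exact (measurableSet_singleton b0).compl
  rw [hGindep.measure_inter_preimage_eq_mul T hsets_meas]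
  have hσinj : ∀ x ∈ Finset.Iic i, ∀ y ∈ Finset.Iic i, σ x = σ y → x = y :=
    fun x _ y _ h => hσ h
  rw [hT, Finset.prod_image hσinj]
  have hμ_eq : ∀ k : Fin n, μ' (G k ⁻¹' {b0}) = (r : ENNReal)⁻¹ := by
    intro k
    have : G k ⁻¹' {b0} = {ω' | G k ω' = b0} := by ext; simp
    rw [this]; exact hGunif k b0
  have hμ_compl : ∀ k : Fin n, μ' (G k ⁻¹' {b0}ᶜ) = 1 - (r : ENNReal)⁻¹ := by
    intro k
    rw [Set.preimage_compl, measure_compl ((hGmeas k) (measurableSet_singleton b0))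
      (measure_ne_top _ _), measure_univ, hμ_eq]
  rw [← Finset.Iio_insert i, Finset.prod_insert (by simp)]
  have h1 : μ' (G (σ i) ⁻¹' sets (σ i)) = (r : ENNReal)⁻¹ := by
    simp only [hsets, if_pos rfl]; exact hμ_eq (σ i)
  have h2 : ∀ j ∈ Finset.Iio i, μ' (G (σ j) ⁻¹' sets (σ j)) = 1 - (r : ENNReal)⁻¹ := by
    intro j hj
    have hjlt : j < i := Finset.mem_Iio.mp hj
    have hne : σ j ≠ σ i := fun hh => (ne_of_lt hjlt) (hσ hh)
    simp only [hsets, if_neg hne]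
    exact hμ_compl (σ j)
  rw [h1, Finset.prod_congr rfl h2, Finset.prod_const, Fin.card_Iio]

lemma aux_meas {Ω Ω' : Type*} [MeasurableSpace Ω] [MeasurableSpace Ω'] {n r : ℕ}
    (X : Fin n → Ω → ℝ) (hmeas : ∀ i, Measurable (X i))
    (G : Fin n → Ω' → Fin r) (hGmeas : ∀ i, Measurable (G i)) (b : Fin r) :
    Measurable (fun w : Ω × Ω' => bucketMax X G b w.1 w.2) := by
  have hrep : (fun w : Ω × Ω' => bucketMax X G b w.1 w.2)
      = fun w : Ω × Ω' => ∑ S : Finset (Fin n),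
          if (Finset.univ.filter (fun i => G i w.2 = b)) = S then
            (if h : S.Nonempty then S.sup' h (fun i => X i w.1) else 0)
          else 0 := by
    funext w
    rw [Finset.sum_ite_eq]
    simp [bucketMax]
  rw [hrep]
  apply Finset.measurable_sum
  intro S _
  have hcond : MeasurableSet {w : Ω × Ω' | (Finset.univ.filter (fun i => G i w.2 = b)) = S} := by
    have heq : {w : Ω × Ω' | (Finset.univ.filter (fun i => G i w.2 = b)) = S}
        = ⋂ i : Fin n, {w : Ω × Ω' | G i w.2 = b ↔ i ∈ S} := by
      ext w
      simp [Finset.ext_iff, Set.mem_iInter]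
    rw [heq]
    apply MeasurableSet.iInter
    intro i
    have hGi : MeasurableSet {w : Ω × Ω' | G i w.2 = b} :=
      ((hGmeas i).comp measurable_snd) (measurableSet_singleton b)
    by_cases hi : i ∈ S
    · have : {w : Ω × Ω' | G i w.2 = b ↔ i ∈ S} = {w : Ω × Ω' | G i w.2 = b} := by
        ext w; simp [hi]
      rw [this]; exact hGi
    · have : {w : Ω × Ω' | G i w.2 = b ↔ i ∈ S} = {w : Ω × Ω' | G i w.2 = b}ᶜ := by
        ext w; simp [hi]
      rw [this]; exact hGi.compl
  apply Measurable.ite hcond _ measurable_const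
  by_cases hS : S.Nonempty
  · simp only [dif_pos hS]
    have := Finset.measurable_sup' hS (f := fun i (w : Ω × Ω') => X i w.1)
      (fun i _ => (hmeas i).comp measurable_fst)
    have heq : (S.sup' hS fun i (w : Ω × Ω') => X i w.1)
        = fun w : Ω × Ω' => S.sup' hS fun i => X i w.1 := by
      funext w; rw [Finset.sup'_apply]
    rwa [heq] at this
  · simp only [dif_neg hS]
    exact measurable_const

/-- Random bucketing bound: if each of `n` nonnegative (arbitrarily correlated) values is
placed independently and uniformly into one of `r ≤ n` buckets, then
`r·E[max over bucket 1] ≥ (1/e)·E[Σ_{i=1}^r X^{(i)}]`, where `X^{(i)}` are the order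
statistics (here given by a pointwise sorting bijection `K`). -/
theorem stmt13 {Ω Ω' : Type*} [MeasurableSpace Ω] [MeasurableSpace Ω']
    (μ : Measure Ω) [IsProbabilityMeasure μ] (μ' : Measure Ω') [IsProbabilityMeasure μ']
    {n r : ℕ} (hr : 0 < r) (hrn : r ≤ n)
    (X : Fin n → Ω → ℝ) (hmeas : ∀ i, Measurable (X i)) (hnn : ∀ i ω, 0 ≤ X i ω)
    (hint : ∀ i, Integrable (X i) μ)
    (K : Ω → Fin n → Fin n) (hKbij : ∀ ω, Function.Bijective (K ω))
    (hKsort : ∀ ω, ∀ i i' : Fin n, i ≤ i' → X (K ω i') ω ≤ X (K ω i) ω)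
    (G : Fin n → Ω' → Fin r) (hGmeas : ∀ i, Measurable (G i))
    (hGindep : iIndepFun G μ')
    (hGunif : ∀ i b, μ' {ω' | G i ω' = b} = (r : ENNReal)⁻¹) :
    (1 / Real.exp 1) *
        ∫ ω, (∑ i ∈ Finset.univ.filter (fun i : Fin n => (i : ℕ) < r), X (K ω i) ω) ∂μ
      ≤ r * ∫ w, bucketMax X G ⟨0, hr⟩ w.1 w.2 ∂(μ.prod μ') := by
  have hr0 : (0:ℝ) < r := by exact_mod_cast hr
  set b0 : Fin r := ⟨0, hr⟩ with hb0
  have hbm_nonneg : ∀ (ω : Ω) (ω' : Ω'), 0 ≤ bucketMax X G b0 ω ω' := by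
    intro ω ω'
    unfold bucketMax
    split
    · next h => obtain ⟨i, hi⟩ := h; exact Finset.le_sup'_of_le _ hi (hnn i ω)
    · exact le_refl 0
  have hbm_le : ∀ (ω : Ω) (ω' : Ω'), bucketMax X G b0 ω ω' ≤ ∑ j, X j ω := by
    intro ω ω'
    unfold bucketMax
    split
    · exact Finset.sup'_le _ _ fun i _ =>
        Finset.single_le_sum (fun j _ => hnn j ω) (Finset.mem_univ i)
    · exact Finset.sum_nonneg fun j _ => hnn j ω
  have hM : Measurable (fun w : Ω × Ω' => bucketMax X G b0 w.1 w.2) := aux_meas X hmeas G hGmeas b0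
  have hSint : Integrable (fun ω => ∑ j, X j ω) μ := integrable_finset_sum _ fun j _ => hint j
  have hmap : Measure.map Prod.fst (μ.prod μ') = μ := by
    simp [Measure.map_fst_prod]
  have hdom : Integrable (fun w : Ω × Ω' => ∑ j, X j w.1) (μ.prod μ') := by
    have h2 : Integrable (fun ω => ∑ j, X j ω) (Measure.map Prod.fst (μ.prod μ')) := by
      rw [hmap]; exact hSint
    have := (integrable_map_measure (by rw [hmap]; exact hSint.aestronglyMeasurable)
      measurable_fst.aemeasurable).mp h2
    exact this
  have hbmInt : Integrable (fun w : Ω × Ω' => bucketMax X G b0 w.1 w.2) (μ.prod μ') := by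
    apply hdom.mono' hM.aestronglyMeasurable
    filter_upwards with w
    rw [Real.norm_eq_abs, abs_of_nonneg (hbm_nonneg _ _)]
    exact hbm_le _ _
  have hgint : Integrable (fun ω => ∫ ω', bucketMax X G b0 ω ω' ∂μ') μ :=
    hbmInt.integral_prod_left
  have key : ∀ ω : Ω,
      (Real.exp 1 * r)⁻¹ * (∑ i ∈ Finset.univ.filter (fun i : Fin n => (i : ℕ) < r), X (K ω i) ω)
        ≤ ∫ ω', bucketMax X G b0 ω ω' ∂μ' := by
    intro ω
    set A : Fin n → Set Ω' := fun i =>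
      {ω' | G (K ω i) ω' = b0} ∩ ⋂ (j : Fin n) (_ : j < i), {ω' | G (K ω j) ω' ≠ b0} with hA
    have hGset : ∀ k, MeasurableSet {ω' | G k ω' = b0} := fun k =>
      (hGmeas k) (measurableSet_singleton b0)
    have hAmeas : ∀ i, MeasurableSet (A i) := by
      intro i
      apply MeasurableSet.inter (hGset _)
      exact MeasurableSet.iInter fun j => MeasurableSet.iInter fun _ => (hGset _).compl
    have hAμ : ∀ i, μ' (A i) = (r : ENNReal)⁻¹ * (1 - (r : ENNReal)⁻¹) ^ (i : ℕ) :=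
      fun i => aux_prob_s13 μ' G hGindep hGmeas hGunif b0 (K ω) (hKbij ω).injective i
    have hptwise : ∀ ω', (∑ i ∈ Finset.univ.filter (fun i : Fin n => (i : ℕ) < r),
        (A i).indicator (fun _ => X (K ω i) ω) ω') ≤ bucketMax X G b0 ω ω' := by
      intro ω'
      by_cases hex : ∃ i ∈ Finset.univ.filter (fun i : Fin n => (i : ℕ) < r), ω' ∈ A i
      · obtain ⟨i, hif, hiA⟩ := hex
        have hsum : (∑ k ∈ Finset.univ.filter (fun i : Fin n => (i : ℕ) < r),
            (A k).indicator (fun _ => X (K ω k) ω) ω') = X (K ω i) ω := by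
          rw [Finset.sum_eq_single i]
          · rw [Set.indicator_of_mem hiA]
          · intro j hjf hji
            apply Set.indicator_of_notMem
            intro hjA
            simp only [hA, Set.mem_inter_iff, Set.mem_setOf_eq, Set.mem_iInter] at hiA hjA
            rcases lt_or_gt_of_ne hji with h | h
            · exact hiA.2 j h hjA.1
            · exact hjA.2 i h hiA.1
          · intro hnot; exact absurd hif hnot
        rw [hsum]
        have hGi : G (K ω i) ω' = b0 := by
          have h' := hiA
          simp only [hA, Set.mem_inter_iff, Set.mem_setOf_eq] at h'
          exact h'.1
        have hmem : K ω i ∈ Finset.univ.filter (fun k => G k ω' = b0) := by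
          simp [hGi]
        unfold bucketMax
        rw [dif_pos ⟨_, hmem⟩]
        exact Finset.le_sup' (fun k => X k ω) hmem
      · push_neg at hex
        have hz : (∑ k ∈ Finset.univ.filter (fun i : Fin n => (i : ℕ) < r),
            (A k).indicator (fun _ => X (K ω k) ω) ω') = 0 :=
          Finset.sum_eq_zero fun k hk => Set.indicator_of_notMem (hex k hk) _
        rw [hz]; exact hbm_nonneg ω ω'
    have hbmInt' : Integrable (fun ω' => bucketMax X G b0 ω ω') μ' := by
      apply (integrable_const (∑ j, X j ω)).mono'
      · exact (hM.comp measurable_prodMk_left).aestronglyMeasurable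
      · filter_upwards with ω'
        rw [Real.norm_eq_abs, abs_of_nonneg (hbm_nonneg _ _)]
        exact hbm_le _ _
    have hindInt : ∀ i ∈ Finset.univ.filter (fun i : Fin n => (i : ℕ) < r),
        Integrable ((A i).indicator (fun _ => X (K ω i) ω)) μ' :=
      fun i _ => (integrable_const _).indicator (hAmeas i)
    have h1 : ∫ ω', (∑ i ∈ Finset.univ.filter (fun i : Fin n => (i : ℕ) < r),
        (A i).indicator (fun _ => X (K ω i) ω) ω') ∂μ' ≤ ∫ ω', bucketMax X G b0 ω ω' ∂μ' :=
      integral_mono (integrable_finset_sum _ hindInt) hbmInt' hptwise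
    have h2 : ∫ ω', (∑ i ∈ Finset.univ.filter (fun i : Fin n => (i : ℕ) < r),
        (A i).indicator (fun _ => X (K ω i) ω) ω') ∂μ'
        = ∑ i ∈ Finset.univ.filter (fun i : Fin n => (i : ℕ) < r),
            (μ' (A i)).toReal * X (K ω i) ω := by
      rw [integral_finset_sum _ hindInt]
      refine Finset.sum_congr rfl fun i _ => ?_
      rw [integral_indicator_const _ (hAmeas i)]
      simp [smul_eq_mul, measureReal_def]
    have h3 : (Real.exp 1 * r)⁻¹ *
        (∑ i ∈ Finset.univ.filter (fun i : Fin n => (i : ℕ) < r), X (K ω i) ω)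
        ≤ ∑ i ∈ Finset.univ.filter (fun i : Fin n => (i : ℕ) < r),
            (μ' (A i)).toReal * X (K ω i) ω := by
      rw [Finset.mul_sum]
      refine Finset.sum_le_sum fun i hi => ?_
      have hir : (i : ℕ) < r := by
        simpa using (Finset.mem_filter.mp hi).2
      have hle1 : (r : ENNReal)⁻¹ ≤ 1 := by
        rw [ENNReal.inv_le_one]
        exact_mod_cast hr
      have htoReal : (μ' (A i)).toReal = (r:ℝ)⁻¹ * (1 - (r:ℝ)⁻¹) ^ (i : ℕ) := by
        rw [hAμ i, ENNReal.toReal_mul, ENNReal.toReal_pow]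
        congr 1
        · simp [ENNReal.toReal_inv]
        · rw [ENNReal.toReal_sub_of_le hle1 ENNReal.one_ne_top]
          simp [ENNReal.toReal_inv]
      rw [htoReal]
      exact mul_le_mul_of_nonneg_right (aux_exp hr hir) (hnn _ _)
    calc (Real.exp 1 * r)⁻¹ *
        (∑ i ∈ Finset.univ.filter (fun i : Fin n => (i : ℕ) < r), X (K ω i) ω)
        ≤ ∑ i ∈ Finset.univ.filter (fun i : Fin n => (i : ℕ) < r),
            (μ' (A i)).toReal * X (K ω i) ω := h3
      _ = ∫ ω', (∑ i ∈ Finset.univ.filter (fun i : Fin n => (i : ℕ) < r),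
            (A i).indicator (fun _ => X (K ω i) ω) ω') ∂μ' := h2.symm
      _ ≤ ∫ ω', bucketMax X G b0 ω ω' ∂μ' := h1
  have hfinal : ∫ ω, ((Real.exp 1 * r)⁻¹ *
        (∑ i ∈ Finset.univ.filter (fun i : Fin n => (i : ℕ) < r), X (K ω i) ω)) ∂μ
      ≤ ∫ ω, (∫ ω', bucketMax X G b0 ω ω' ∂μ') ∂μ := by
    apply integral_mono_of_nonneg _ hgint
    · filter_upwards with ω
      exact key ω
    · filter_upwards with ω
      exact mul_nonneg (by positivity) (Finset.sum_nonneg fun j _ => hnn _ _)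
  rw [integral_const_mul] at hfinal
  rw [MeasureTheory.integral_prod _ hbmInt]
  have hrr : (r:ℝ) * (Real.exp 1 * r)⁻¹ = 1 / Real.exp 1 := by
    field_simp
  calc (1 / Real.exp 1) *
        ∫ ω, (∑ i ∈ Finset.univ.filter (fun i : Fin n => (i : ℕ) < r), X (K ω i) ω) ∂μ
      = (r:ℝ) * ((Real.exp 1 * r)⁻¹ *
        ∫ ω, (∑ i ∈ Finset.univ.filter (fun i : Fin n => (i : ℕ) < r), X (K ω i) ω) ∂μ) := by
        rw [← mul_assoc, hrr]
    _ ≤ (r:ℝ) * ∫ ω, (∫ ω', bucketMax X G b0 ω ω' ∂μ') ∂μ :=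
        mul_le_mul_of_nonneg_left hfinal (le_of_lt hr0)
end

section
/- Let X_1,...,X_n be random variables that are negatively associated, each nonnegative with finite expectation. Set τ = (1/2)E[max_i X_i] and let ALG be the stopping rule accepting the first X_i ≥ τ. Then E[ALG] ≥ (1/2)E[max_i X_i]. -/
open MeasureTheory ProbabilityTheory Finset

open scoped Classical

/-- Correlation inequality from tail bounds, via the layer-cake formula. -/
lemma na_corr {Ω : Type*} [MeasurableSpace Ω] (μ : Measure Ω) [IsProbabilityMeasure μ]
    (Y : Ω → ℝ) (hY : Measurable Y) (hYnn : ∀ ω, 0 ≤ Y ω) (hYint : Integrable Y μ)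
    (B : Set Ω) (hB : MeasurableSet B)
    (h : ∀ a : ℝ, μ {ω | a ≤ Y ω} * μ B ≤ μ ({ω | a ≤ Y ω} ∩ B)) :
    (μ B).toReal * ∫ ω, Y ω ∂μ ≤ ∫ ω, B.indicator Y ω ∂μ := by
  set Z : Ω → ℝ := B.indicator Y with hZ
  have hZnn : ∀ ω, 0 ≤ Z ω := fun ω => Set.indicator_nonneg (fun x _ => hYnn x) ω
  have hZmeas : Measurable Z := hY.indicator hB
  have hZint : Integrable Z μ := hYint.indicator hB
  have key : ∀ t : ℝ, μ B * μ {a | t ≤ Y a} ≤ μ {a | t ≤ Z a} := by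
    intro t
    rcases le_or_gt t 0 with ht | ht
    · have h1 : {a | t ≤ Z a} = Set.univ := by
        ext ω; simp only [Set.mem_setOf_eq, Set.mem_univ, iff_true]
        exact le_trans ht (hZnn ω)
      rw [h1, measure_univ]
      calc μ B * μ {a | t ≤ Y a} ≤ 1 * 1 := mul_le_mul' prob_le_one prob_le_one
        _ = 1 := one_mul 1
    · have h2 : {a | t ≤ Z a} = {a | t ≤ Y a} ∩ B := by
        ext ω
        simp only [Set.mem_setOf_eq, Set.mem_inter_iff, hZ, Set.indicator_apply]
        by_cases hω : ω ∈ B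
        · simp [hω]
        · simp [hω]
          linarith
      rw [h2, mul_comm]
      exact h t
  have L : μ B * ∫⁻ ω, ENNReal.ofReal (Y ω) ∂μ ≤ ∫⁻ ω, ENNReal.ofReal (Z ω) ∂μ := by
    rw [lintegral_eq_lintegral_meas_le μ (Filter.Eventually.of_forall hYnn) hY.aemeasurable,
        lintegral_eq_lintegral_meas_le μ (Filter.Eventually.of_forall hZnn) hZmeas.aemeasurable,
        ← lintegral_const_mul' (μ B) _ (measure_ne_top μ B)]
    exact lintegral_mono fun t => key t
  have hZfin : ∫⁻ ω, ENNReal.ofReal (Z ω) ∂μ ≠ ⊤ := hZint.lintegral_lt_top.ne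
  rw [integral_eq_lintegral_of_nonneg_ae (Filter.Eventually.of_forall hYnn)
        hY.aestronglyMeasurable,
      integral_eq_lintegral_of_nonneg_ae (Filter.Eventually.of_forall hZnn)
        hZmeas.aestronglyMeasurable, ← ENNReal.toReal_mul]
  exact ENNReal.toReal_mono hZfin L

/-- Prophet inequality for negatively associated values: with
`τ = (1/2)·E[max_i X_i]`, the rule accepting the first `X_i ≥ τ` gets at least
`(1/2)·E[max_i X_i]`. -/
theorem stmt14 {Ω : Type*} [MeasurableSpace Ω] (μ : Measure Ω) [IsProbabilityMeasure μ]
    {n : ℕ} (X : Fin (n + 1) → Ω → ℝ)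
    (hmeas : ∀ i, Measurable (X i)) (hnn : ∀ i ω, 0 ≤ X i ω)
    (hint : ∀ i, Integrable (X i) μ)
    (hNA : ∀ (S S' : Finset (Fin (n + 1))), Disjoint S S' →
      ∀ (f : (S → ℝ) → ℝ) (g : (S' → ℝ) → ℝ), Monotone f → Monotone g →
      ∀ a b : ℝ,
        μ {ω | a ≤ f (fun j => X j.1 ω)} * μ {ω | g (fun j => X j.1 ω) ≤ b}
          ≤ μ {ω | a ≤ f (fun j => X j.1 ω) ∧ g (fun j => X j.1 ω) ≤ b})
    (τ : ℝ)
    (hτ : τ = (1 / 2) * ∫ ω, Finset.univ.sup' Finset.univ_nonempty (fun i => X i ω) ∂μ) :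
    (1 / 2) * ∫ ω, Finset.univ.sup' Finset.univ_nonempty (fun i => X i ω) ∂μ
      ≤ ∫ ω, algValue X τ ω ∂μ := by
  set M : Ω → ℝ := fun ω => Finset.univ.sup' Finset.univ_nonempty (fun i => X i ω) with hM
  set A : Set Ω := {ω | ∃ i, τ ≤ X i ω} with hA
  set B : Fin (n + 1) → Set Ω := fun i => {ω | ∀ j, j < i → X j ω < τ} with hB
  set Y : Fin (n + 1) → Ω → ℝ := fun i ω => max (X i ω - τ) 0 with hY
  have hAmeas : MeasurableSet A := by
    have : A = ⋃ i, {ω | τ ≤ X i ω} := by ext ω; simp [hA]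
    rw [this]
    exact MeasurableSet.iUnion fun i => measurableSet_le measurable_const (hmeas i)
  have hBmeas : ∀ i, MeasurableSet (B i) := by
    intro i
    have : B i = ⋂ j, ⋂ (_ : j < i), {ω | X j ω < τ} := by ext ω; simp [hB]
    rw [this]
    exact MeasurableSet.iInter fun j => MeasurableSet.iInter fun _ =>
      measurableSet_lt (hmeas j) measurable_const
  have hYnn : ∀ i ω, 0 ≤ Y i ω := fun i ω => le_max_right _ _
  have hYmeas : ∀ i, Measurable (Y i) := fun i =>
    ((hmeas i).sub measurable_const).max measurable_const
  have hYint : ∀ i, Integrable (Y i) μ := fun i =>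
    ((hint i).sub (integrable_const τ)).pos_part
  -- pointwise decomposition of the algorithm's value
  have hid : ∀ ω, algValue X τ ω
      = A.indicator (fun _ => τ) ω + ∑ i, (B i).indicator (Y i) ω := by
    intro ω
    by_cases h : (Finset.univ.filter (fun i => τ ≤ X i ω)).Nonempty
    · set i₀ := (Finset.univ.filter fun i => τ ≤ X i ω).min' h with hi₀
      have hi₀mem : i₀ ∈ Finset.univ.filter fun i => τ ≤ X i ω := Finset.min'_mem _ h
      have hτi₀ : τ ≤ X i₀ ω := (Finset.mem_filter.mp hi₀mem).2
      have hlt : ∀ j, j < i₀ → X j ω < τ := by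
        intro j hj
        by_contra hc
        push_neg at hc
        exact absurd hj (not_lt.mpr (Finset.min'_le _ j
          (Finset.mem_filter.mpr ⟨Finset.mem_univ _, hc⟩)))
      have hAω : ω ∈ A := ⟨i₀, hτi₀⟩
      have hsum : ∑ i, (B i).indicator (Y i) ω = X i₀ ω - τ := by
        rw [Finset.sum_eq_single i₀]
        · have hBi₀ : ω ∈ B i₀ := hlt
          rw [Set.indicator_of_mem hBi₀]
          simp only [hY]
          exact max_eq_left (sub_nonneg.mpr hτi₀)
        · intro i _ hne
          rcases lt_or_gt_of_ne hne with hlt' | hgt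
          · have hXi : X i ω < τ := hlt i hlt'
            have hYz : Y i ω = 0 := max_eq_right (by linarith)
            simp [Set.indicator_apply, hYz]
          · have hnB : ω ∉ B i := fun hBi => absurd hτi₀ (not_le.mpr (hBi i₀ hgt))
            rw [Set.indicator_of_notMem hnB]
        · intro h'
          exact absurd (Finset.mem_univ i₀) h'
      rw [show algValue X τ ω = X i₀ ω from dif_pos h, Set.indicator_of_mem hAω, hsum]
      ring
    · have hnA : ω ∉ A := by
        rintro ⟨i, hi⟩
        exact h ⟨i, Finset.mem_filter.mpr ⟨Finset.mem_univ _, hi⟩⟩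
      have hz : ∀ i, (B i).indicator (Y i) ω = 0 := by
        intro i
        have hXi : ¬ τ ≤ X i ω := fun hc =>
          h ⟨i, Finset.mem_filter.mpr ⟨Finset.mem_univ _, hc⟩⟩
        push_neg at hXi
        have hYz : Y i ω = 0 := max_eq_right (by linarith)
        simp [Set.indicator_apply, hYz]
      rw [show algValue X τ ω = 0 from dif_neg h, Set.indicator_of_notMem hnA]
      simp [hz]
  -- integrability facts
  have hind_int : ∀ i, Integrable ((B i).indicator (Y i)) μ := fun i =>
    (hYint i).indicator (hBmeas i)
  have hA_int : Integrable (A.indicator fun _ => τ) μ := (integrable_const τ).indicator hAmeas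
  have hALG : ∫ ω, algValue X τ ω ∂μ
      = τ * (μ A).toReal + ∑ i, ∫ ω, (B i).indicator (Y i) ω ∂μ := by
    rw [show (fun ω => algValue X τ ω)
          = fun ω => A.indicator (fun _ => τ) ω + ∑ i, (B i).indicator (Y i) ω
        from funext hid]
    rw [integral_add hA_int (integrable_finset_sum _ fun i _ => hind_int i),
      integral_finset_sum _ fun i _ => hind_int i, integral_indicator_const _ hAmeas,
      smul_eq_mul, mul_comm, measureReal_def]
  -- negative association applied to each index
  have hNAi : ∀ (i : Fin (n + 1)) (a : ℝ),
      μ {ω | a ≤ Y i ω} * μ (B i) ≤ μ ({ω | a ≤ Y i ω} ∩ B i) := by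
    intro i a
    set S : Finset (Fin (n + 1)) := {i} with hS
    set S' : Finset (Fin (n + 1)) := Finset.univ.filter (· < i) with hS'
    have hdisj : Disjoint S S' := by
      rw [Finset.disjoint_left]
      intro j hj hj'
      rw [hS, Finset.mem_singleton] at hj
      rw [hS', Finset.mem_filter] at hj'
      exact absurd hj' (by simp [hj])
    have hiS : i ∈ S := Finset.mem_singleton_self i
    set f : (S → ℝ) → ℝ := fun x => max (x ⟨i, hiS⟩ - τ) 0 with hf
    set g : (S' → ℝ) → ℝ := fun x => ∑ j, (if τ ≤ x j then (1 : ℝ) else 0) with hg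
    have hfmono : Monotone f := fun x y hxy =>
      max_le_max (sub_le_sub_right (hxy _) τ) le_rfl
    have hgmono : Monotone g := by
      intro x y hxy
      apply Finset.sum_le_sum
      intro j _
      by_cases hc : τ ≤ x j
      · rw [if_pos hc, if_pos (le_trans hc (hxy j))]
      · rw [if_neg hc]
        by_cases hc' : τ ≤ y j <;> simp [hc']
    have key := hNA S S' hdisj f g hfmono hgmono a 0
    have e1 : ∀ ω, f (fun j => X j.1 ω) = Y i ω := fun ω => rfl
    have e2 : ∀ ω, (g (fun j => X j.1 ω) ≤ 0 ↔ ω ∈ B i) := by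
      intro ω
      constructor
      · intro hg0 j hj
        by_contra hc
        push_neg at hc
        have hjmem : j ∈ S' := Finset.mem_filter.mpr ⟨Finset.mem_univ _, hj⟩
        have hone : (1 : ℝ) ≤ g (fun j => X j.1 ω) := by
          have hsgl := Finset.single_le_sum
            (f := fun k : S' => if τ ≤ X k.1 ω then (1 : ℝ) else 0)
            (fun k _ => by positivity) (Finset.mem_univ (⟨j, hjmem⟩ : S'))
          simpa [hg, if_pos hc] using hsgl
        linarith
      · intro hBω
        have hz : g (fun j => X j.1 ω) = 0 := by
          apply Finset.sum_eq_zero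
          intro k _
          rw [if_neg (not_le.mpr (hBω k.1 (Finset.mem_filter.mp k.2).2))]
        rw [hz]
      -- done
    have es1 : {ω | a ≤ f fun j => X j.1 ω} = {ω | a ≤ Y i ω} := by
      ext ω; rw [Set.mem_setOf_eq, e1 ω]
    have es2 : {ω | g (fun j => X j.1 ω) ≤ 0} = B i := by
      ext ω; rw [Set.mem_setOf_eq, e2 ω]
    have es3 : {ω | (a ≤ f fun j => X j.1 ω) ∧ g (fun j => X j.1 ω) ≤ 0}
        = {ω | a ≤ Y i ω} ∩ B i := by
      ext ω
      rw [Set.mem_setOf_eq, Set.mem_inter_iff, e1 ω, Set.mem_setOf_eq, e2 ω]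
    rw [es1, es2, es3] at key
    exact key
  have hcorr : ∀ i, (μ (B i)).toReal * ∫ ω, Y i ω ∂μ
      ≤ ∫ ω, (B i).indicator (Y i) ω ∂μ := fun i =>
    na_corr μ (Y i) (hYmeas i) (hYnn i) (hYint i) (B i) (hBmeas i) (hNAi i)
  set p : ℝ := (μ A).toReal with hp
  have hp1 : p ≤ 1 := by
    have h1 := ENNReal.toReal_mono ENNReal.one_ne_top (prob_le_one (μ := μ) (s := A))
    simpa using h1
  have hB_lb : ∀ i, 1 - p ≤ (μ (B i)).toReal := by
    intro i
    have hsub : Aᶜ ⊆ B i := by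
      intro ω hω j _
      by_contra hc
      push_neg at hc
      exact hω ⟨j, hc⟩
    have hle : μ Aᶜ ≤ μ (B i) := measure_mono hsub
    have hAc : (μ Aᶜ).toReal = 1 - p := by
      rw [prob_compl_eq_one_sub hAmeas,
        ENNReal.toReal_sub_of_le prob_le_one ENNReal.one_ne_top, ENNReal.toReal_one]
    rw [← hAc]
    exact ENNReal.toReal_mono (measure_ne_top μ _) hle
  -- the prophet's value
  have hMmeas : Measurable M := by
    have hMeq : M = Finset.univ.sup' Finset.univ_nonempty X := by
      funext ω
      exact (Finset.sup'_apply _ _ _).symm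
    rw [hMeq]
    exact Finset.measurable_sup' _ fun i _ => hmeas i
  have hMnn : ∀ ω, 0 ≤ M ω := fun ω =>
    le_trans (hnn 0 ω) (Finset.le_sup' (fun i => X i ω) (Finset.mem_univ (0 : Fin (n + 1))))
  have hMle : ∀ ω, M ω ≤ ∑ i, X i ω := fun ω =>
    Finset.sup'_le _ _ fun i _ => Finset.single_le_sum (fun j _ => hnn j ω) (Finset.mem_univ i)
  have hMint : Integrable M μ := by
    apply Integrable.mono' (integrable_finset_sum Finset.univ fun i _ => hint i)
      hMmeas.aestronglyMeasurable
    filter_upwards with ω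
    rw [Real.norm_eq_abs, abs_of_nonneg (hMnn ω)]
    exact hMle ω
  have hEM : ∫ ω, M ω ∂μ = 2 * τ := by rw [hτ]; ring
  have hsumY : τ ≤ ∑ i, ∫ ω, Y i ω ∂μ := by
    have h1 : ∀ ω, M ω - τ ≤ ∑ i, Y i ω := by
      intro ω
      obtain ⟨i, -, hieq⟩ := Finset.exists_mem_eq_sup' Finset.univ_nonempty fun i => X i ω
      calc M ω - τ = X i ω - τ := by
            rw [hM]; exact congrArg (fun z => z - τ) hieq
        _ ≤ Y i ω := le_max_left _ _
        _ ≤ ∑ j, Y j ω := Finset.single_le_sum (fun j _ => hYnn j ω) (Finset.mem_univ i)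
    have h2 : ∫ ω, (M ω - τ) ∂μ ≤ ∫ ω, ∑ i, Y i ω ∂μ :=
      integral_mono (hMint.sub (integrable_const τ))
        (integrable_finset_sum _ fun i _ => hYint i) h1
    rw [integral_sub hMint (integrable_const τ), integral_const, hEM,
      integral_finset_sum _ fun i _ => hYint i] at h2
    simp only [measure_univ, probReal_univ, ENNReal.toReal_one, smul_eq_mul, one_mul] at h2
    linarith
  -- putting everything together
  rw [← hτ, hALG]
  have hfinal : τ ≤ τ * p + ∑ i, ∫ ω, (B i).indicator (Y i) ω ∂μ := by
    have step1 : (1 - p) * τ ≤ (1 - p) * ∑ i, ∫ ω, Y i ω ∂μ :=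
      mul_le_mul_of_nonneg_left hsumY (by linarith)
    have step2 : (1 - p) * ∑ i, ∫ ω, Y i ω ∂μ
        ≤ ∑ i, ∫ ω, (B i).indicator (Y i) ω ∂μ := by
      rw [Finset.mul_sum]
      apply Finset.sum_le_sum
      intro i _
      calc (1 - p) * ∫ ω, Y i ω ∂μ ≤ (μ (B i)).toReal * ∫ ω, Y i ω ∂μ :=
            mul_le_mul_of_nonneg_right (hB_lb i) (integral_nonneg (hYnn i))
        _ ≤ ∫ ω, (B i).indicator (Y i) ω ∂μ := hcorr i
    calc τ = τ * p + (1 - p) * τ := by ring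
      _ ≤ τ * p + ∑ i, ∫ ω, (B i).indicator (Y i) ω ∂μ :=
          add_le_add le_rfl (le_trans step1 step2)
  exact hfinal
end

section
/- Let Y_1,...,Y_m be independent nonnegative random variables and S_1,...,S_n ⊆ [m] arbitrary subsets, with X_i = Σ_{j ∈ S_i} Y_j. Define Z_i = Σ_{j ∈ S_i \ (S_1 ∪ ... ∪ S_{i−1})} Y_j. Then max_i Z_i ≥ max_j Y_j pointwise, and consequently the fixed-threshold algorithm with τ = (1/2)E[max_i Z_i] achieves expected reward at least (1/2)E[max_j Y_j] on the sequence X_1,...,X_n. -/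
open MeasureTheory ProbabilityTheory Finset
open scoped Classical

open scoped Classical in
lemma algValue_eq {Ω : Type*} {n : ℕ} (X : Fin (n + 1) → Ω → ℝ) (τ : ℝ) (ω : Ω) :
    algValue X τ ω = τ * (if ∃ i, τ ≤ X i ω then (1:ℝ) else 0)
      + ∑ i, max (X i ω - τ) 0 * (if ∀ j, j < i → X j ω < τ then (1:ℝ) else 0) := by
  rw [algValue]
  by_cases h : (Finset.univ.filter (fun i => τ ≤ X i ω)).Nonempty
  · rw [dif_pos h]
    set i0 := (Finset.univ.filter (fun i => τ ≤ X i ω)).min' h with hi0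
    have hi0mem : i0 ∈ Finset.univ.filter (fun i => τ ≤ X i ω) := Finset.min'_mem _ h
    have hτi0 : τ ≤ X i0 ω := (Finset.mem_filter.1 hi0mem).2
    have hlt : ∀ j, j < i0 → X j ω < τ := by
      intro j hj
      by_contra hc
      push_neg at hc
      exact absurd (Finset.min'_le _ j (Finset.mem_filter.2 ⟨Finset.mem_univ _, hc⟩)) (not_le.2 hj)
    have hsum : ∑ i, max (X i ω - τ) 0 * (if ∀ j, j < i → X j ω < τ then (1:ℝ) else 0)
        = X i0 ω - τ := by
      rw [Finset.sum_eq_single i0]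
      · rw [if_pos hlt, mul_one, max_eq_left (sub_nonneg.2 hτi0)]
      · intro b _ hb
        rcases lt_or_gt_of_ne hb with hblt | hbgt
        · rw [max_eq_right (sub_nonpos.2 (hlt b hblt).le), zero_mul]
        · rw [if_neg, mul_zero]
          intro hall
          exact absurd (hall i0 hbgt) (not_lt.2 hτi0)
      · exact fun hb => absurd (Finset.mem_univ i0) hb
    rw [hsum, if_pos ⟨i0, hτi0⟩]
    ring
  · rw [dif_neg h]
    have hall : ∀ i, X i ω < τ := by
      intro i
      by_contra hc
      push_neg at hc
      exact h ⟨i, Finset.mem_filter.2 ⟨Finset.mem_univ _, hc⟩⟩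
    rw [if_neg (by push_neg; exact hall)]
    · rw [Finset.sum_eq_zero, mul_zero, add_zero]
      intro i _
      rw [max_eq_right (sub_nonpos.2 (hall i).le), zero_mul]

open scoped Classical in
lemma indep_aux {Ω : Type*} [MeasurableSpace Ω] (μ : Measure Ω)
    {m : ℕ} (Y : Fin (m + 1) → Ω → ℝ) (hYmeas : ∀ j, Measurable (Y j))
    (hindep : iIndepFun Y μ)
    (T U : Finset (Fin (m + 1))) (hdisj : Disjoint T U)
    {ι : Type*} [Fintype ι] (R : ι → Finset (Fin (m + 1))) (hsub : ∀ j, R j ⊆ U) (τ c : ℝ) :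
    IndepFun (fun ω => max ((∑ k ∈ T, Y k ω) - τ) 0)
      (fun ω => if ∀ j : ι, (∑ k ∈ R j, Y k ω) < c then (1:ℝ) else 0) μ := by
  have base := hindep.indepFun_finset T U hdisj hYmeas
  set φ : (T → ℝ) → ℝ := fun v => max ((∑ k : T, v k) - τ) 0 with hφ
  set ψ : (U → ℝ) → ℝ := fun w =>
    if ∀ j : ι, (∑ k : U, if (k : Fin (m + 1)) ∈ R j then w k else 0) < c then (1:ℝ) else 0
    with hψ
  have hφm : Measurable φ :=
    ((Finset.measurable_sum univ fun k _ => measurable_pi_apply k).sub measurable_const).max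
      measurable_const
  have hψm : Measurable ψ := by
    refine Measurable.ite ?_ measurable_const measurable_const
    have : {w : U → ℝ | ∀ j : ι, (∑ k : U, if (k : Fin (m + 1)) ∈ R j then w k else 0) < c}
        = ⋂ j : ι, {w : U → ℝ | (∑ k : U, if (k : Fin (m + 1)) ∈ R j then w k else 0) < c} := by
      ext w; simp [Set.mem_iInter]
    rw [this]
    refine MeasurableSet.iInter fun j => measurableSet_lt ?_ measurable_const
    exact Finset.measurable_sum univ fun k _ => by
      split_ifs
      exacts [measurable_pi_apply k, measurable_const]
  have h1 : (fun ω => max ((∑ k ∈ T, Y k ω) - τ) 0) = φ ∘ (fun a (k : T) => Y k a) := by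
    funext ω
    simp only [Function.comp_apply, hφ]
    rw [Finset.sum_coe_sort T (fun k => Y k ω)]
  have h2 : (fun ω => if ∀ j : ι, (∑ k ∈ R j, Y k ω) < c then (1:ℝ) else 0)
      = ψ ∘ (fun a (k : U) => Y k a) := by
    funext ω
    simp only [Function.comp_apply, hψ]
    refine if_congr (forall_congr' fun j => ?_) rfl rfl
    rw [Finset.sum_coe_sort U (fun k => if k ∈ R j then Y k ω else 0),
      Finset.sum_ite_mem U (R j) (fun k => Y k ω), Finset.inter_eq_right.2 (hsub j)]
  rw [h1, h2]
  exact base.comp hφm hψm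

/-- Unweighted linear correlations: with `X_i = Σ_{j ∈ S_i} Y_j` and `Z_i` the sum over the
features of `S_i` not appearing earlier, `max_i Z_i ≥ max_j Y_j` pointwise, and the
fixed-threshold rule with `τ = (1/2)E[max_i Z_i]` gets at least `(1/2)E[max_j Y_j]`. -/
theorem stmt15 {Ω : Type*} [MeasurableSpace Ω] (μ : Measure Ω) [IsProbabilityMeasure μ]
    {n m : ℕ} (Y : Fin (m + 1) → Ω → ℝ)
    (hYmeas : ∀ j, Measurable (Y j)) (hYnn : ∀ j ω, 0 ≤ Y j ω)
    (hYint : ∀ j, Integrable (Y j) μ)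
    (hindep : iIndepFun Y μ)
    (S : Fin (n + 1) → Finset (Fin (m + 1)))
    (hcover : ∀ j, ∃ i, j ∈ S i)
    (X Z : Fin (n + 1) → Ω → ℝ)
    (hX : ∀ i ω, X i ω = ∑ j ∈ S i, Y j ω)
    (hZ : ∀ i ω, Z i ω =
      ∑ j ∈ S i \ (Finset.univ.filter (fun i' : Fin (n + 1) => i' < i)).biUnion S, Y j ω)
    (τ : ℝ)
    (hτ : τ = (1 / 2) * ∫ ω, Finset.univ.sup' Finset.univ_nonempty (fun i => Z i ω) ∂μ) :
    (∀ ω, Finset.univ.sup' Finset.univ_nonempty (fun j => Y j ω)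
        ≤ Finset.univ.sup' Finset.univ_nonempty (fun i => Z i ω)) ∧
    (1 / 2) * ∫ ω, Finset.univ.sup' Finset.univ_nonempty (fun j => Y j ω) ∂μ
      ≤ ∫ ω, algValue X τ ω ∂μ := by
  classical
  -- basic facts
  have hXeq : ∀ i, X i = fun ω => ∑ j ∈ S i, Y j ω := fun i => funext (hX i)
  have hZeq : ∀ i, Z i = fun ω =>
      ∑ j ∈ S i \ (Finset.univ.filter (fun i' : Fin (n + 1) => i' < i)).biUnion S, Y j ω :=
    fun i => funext (hZ i)
  have hXmeas : ∀ i, Measurable (X i) := fun i => by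
    rw [hXeq i]; exact Finset.measurable_sum _ fun j _ => hYmeas j
  have hZmeas : ∀ i, Measurable (Z i) := fun i => by
    rw [hZeq i]; exact Finset.measurable_sum _ fun j _ => hYmeas j
  have hXint : ∀ i, Integrable (X i) μ := fun i => by
    rw [hXeq i]; exact integrable_finset_sum _ fun j _ => hYint j
  have hZint : ∀ i, Integrable (Z i) μ := fun i => by
    rw [hZeq i]; exact integrable_finset_sum _ fun j _ => hYint j
  have hZnn : ∀ i ω, 0 ≤ Z i ω := fun i ω => by
    rw [hZ i ω]; exact Finset.sum_nonneg fun j _ => hYnn j ω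
  have hZX : ∀ i ω, Z i ω ≤ X i ω := fun i ω => by
    rw [hZ i ω, hX i ω]
    exact Finset.sum_le_sum_of_subset_of_nonneg Finset.sdiff_subset fun j _ _ => hYnn j ω
  -- part 1 : pointwise domination
  have part1 : ∀ ω, Finset.univ.sup' Finset.univ_nonempty (fun j => Y j ω)
      ≤ Finset.univ.sup' Finset.univ_nonempty (fun i => Z i ω) := by
    intro ω
    refine Finset.sup'_le _ _ fun j _ => ?_
    obtain ⟨i1, hi1⟩ := hcover j
    have hFne : (Finset.univ.filter (fun i => j ∈ S i)).Nonempty :=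
      ⟨i1, Finset.mem_filter.2 ⟨Finset.mem_univ _, hi1⟩⟩
    set i0 := (Finset.univ.filter (fun i => j ∈ S i)).min' hFne with hi0def
    have hi0S : j ∈ S i0 := (Finset.mem_filter.1 (Finset.min'_mem _ hFne)).2
    have hj : j ∈ S i0 \ (Finset.univ.filter (fun i' : Fin (n + 1) => i' < i0)).biUnion S := by
      rw [Finset.mem_sdiff]
      refine ⟨hi0S, fun hmem => ?_⟩
      obtain ⟨i', hi', hjS⟩ := Finset.mem_biUnion.1 hmem
      exact absurd (Finset.min'_le _ i' (Finset.mem_filter.2 ⟨Finset.mem_univ _, hjS⟩))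
        (not_le.2 (Finset.mem_filter.1 hi').2)
    calc Y j ω ≤ Z i0 ω := by
          rw [hZ i0 ω]; exact Finset.single_le_sum (fun k _ => hYnn k ω) hj
      _ ≤ _ := Finset.le_sup' (fun i => Z i ω) (Finset.mem_univ i0)
  refine ⟨part1, ?_⟩
  -- helper functions
  set χ : Fin (n + 1) → Ω → ℝ :=
    fun i ω => if ∀ j, j < i → X j ω < τ then (1:ℝ) else 0 with hχdef
  set χT : Ω → ℝ := fun ω => if ∃ i, τ ≤ X i ω then (1:ℝ) else 0 with hχTdef
  set G : Fin (n + 1) → Ω → ℝ := fun i ω => max (Z i ω - τ) 0 with hGdef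
  set H : Fin (n + 1) → Ω → ℝ := fun i ω => max (X i ω - τ) 0 with hHdef
  have hχnn : ∀ i ω, 0 ≤ χ i ω := fun i ω => by
    simp only [hχdef]; split_ifs <;> norm_num
  have hχle1 : ∀ i ω, χ i ω ≤ 1 := fun i ω => by
    simp only [hχdef]; split_ifs <;> norm_num
  have hχTnn : ∀ ω, 0 ≤ χT ω := fun ω => by
    simp only [hχTdef]; split_ifs <;> norm_num
  have hχTle1 : ∀ ω, χT ω ≤ 1 := fun ω => by
    simp only [hχTdef]; split_ifs <;> norm_num
  have hGnn : ∀ i ω, 0 ≤ G i ω := fun i ω => le_max_right _ _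
  have hHnn : ∀ i ω, 0 ≤ H i ω := fun i ω => le_max_right _ _
  -- measurability
  have hχmeas : ∀ i, Measurable (χ i) := by
    intro i
    simp only [hχdef]
    refine Measurable.ite ?_ measurable_const measurable_const
    have : {ω | ∀ j, j < i → X j ω < τ} = ⋂ j, ⋂ (_ : j < i), {ω | X j ω < τ} := by
      ext ω; simp [Set.mem_iInter]
    rw [this]
    exact MeasurableSet.iInter fun j => MeasurableSet.iInter fun _ =>
      measurableSet_lt (hXmeas j) measurable_const
  have hχTmeas : Measurable χT := by
    simp only [hχTdef]
    refine Measurable.ite ?_ measurable_const measurable_const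
    have : {ω | ∃ i, τ ≤ X i ω} = ⋃ i, {ω | τ ≤ X i ω} := by
      ext ω; simp [Set.mem_iUnion]
    rw [this]
    exact MeasurableSet.iUnion fun i => measurableSet_le measurable_const (hXmeas i)
  have hGmeas : ∀ i, Measurable (G i) := fun i =>
    ((hZmeas i).sub measurable_const).max measurable_const
  have hHmeas : ∀ i, Measurable (H i) := fun i =>
    ((hXmeas i).sub measurable_const).max measurable_const
  -- integrability
  have hbdd_int : ∀ f : Ω → ℝ, Measurable f → (∀ ω, 0 ≤ f ω) → (∀ ω, f ω ≤ 1) →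
      Integrable f μ := fun f hm h0 h1 =>
    (integrable_const (1:ℝ)).mono' hm.aestronglyMeasurable
      (ae_of_all μ fun ω => by rw [Real.norm_eq_abs, abs_of_nonneg (h0 ω)]; exact h1 ω)
  have hχint : ∀ i, Integrable (χ i) μ := fun i =>
    hbdd_int _ (hχmeas i) (hχnn i) (hχle1 i)
  have hχTint : Integrable χT μ := hbdd_int _ hχTmeas hχTnn hχTle1
  have hGint : ∀ i, Integrable (G i) μ := fun i =>
    ((hZint i).sub (integrable_const τ)).pos_part
  have hHint : ∀ i, Integrable (H i) μ := fun i =>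
    ((hXint i).sub (integrable_const τ)).pos_part
  have hprodint : ∀ (F : Fin (n + 1) → Ω → ℝ), (∀ i, Measurable (F i)) →
      (∀ i, Integrable (F i) μ) → (∀ i ω, 0 ≤ F i ω) →
      ∀ i, Integrable (fun ω => F i ω * χ i ω) μ := by
    intro F hFm hFi hFnn i
    refine (hFi i).mono' ((hFm i).mul (hχmeas i)).aestronglyMeasurable (ae_of_all μ fun ω => ?_)
    rw [Real.norm_eq_abs, abs_of_nonneg (mul_nonneg (hFnn i ω) (hχnn i ω))]
    calc F i ω * χ i ω ≤ F i ω * 1 :=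
          mul_le_mul_of_nonneg_left (hχle1 i ω) (hFnn i ω)
      _ = F i ω := mul_one _
  have hGχint : ∀ i, Integrable (fun ω => G i ω * χ i ω) μ :=
    hprodint G hGmeas hGint hGnn
  have hHχint : ∀ i, Integrable (fun ω => H i ω * χ i ω) μ :=
    hprodint H hHmeas hHint hHnn
  -- independence
  have hindepGχ : ∀ i, IndepFun (G i) (χ i) μ := by
    intro i
    have key := indep_aux μ Y hYmeas hindep
      (S i \ (Finset.univ.filter (fun i' : Fin (n + 1) => i' < i)).biUnion S)
      ((Finset.univ.filter (fun i' : Fin (n + 1) => i' < i)).biUnion S)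
      Finset.sdiff_disjoint
      (ι := {j : Fin (n + 1) // j < i}) (R := fun j => S j.1)
      (fun j k hk => Finset.mem_biUnion.2
        ⟨j.1, Finset.mem_filter.2 ⟨Finset.mem_univ _, j.2⟩, hk⟩) τ τ
    have e1 : (fun ω => max
        ((∑ k ∈ S i \ (Finset.univ.filter (fun i' : Fin (n + 1) => i' < i)).biUnion S, Y k ω)
          - τ) 0) = G i := by
      funext ω
      simp only [hGdef]
      rw [hZ i ω]
    have e2 : (fun ω => if ∀ j : {j : Fin (n + 1) // j < i}, (∑ k ∈ S j.1, Y k ω) < τ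
        then (1:ℝ) else 0) = χ i := by
      funext ω
      simp only [hχdef]
      refine if_congr ?_ rfl rfl
      rw [Subtype.forall]
      exact forall_congr' fun j => forall_congr' fun hj => by rw [hX j ω]
    rw [e1, e2] at key
    exact key
  have hprod : ∀ i, ∫ ω, G i ω * χ i ω ∂μ = (∫ ω, G i ω ∂μ) * ∫ ω, χ i ω ∂μ := fun i =>
    (hindepGχ i).integral_mul_eq_mul_integral (hGint i).aestronglyMeasurable
      (hχint i).aestronglyMeasurable
  -- the algorithm's expected value
  have halg : ∫ ω, algValue X τ ω ∂μ
      = τ * (∫ ω, χT ω ∂μ) + ∑ i, ∫ ω, H i ω * χ i ω ∂μ := by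
    rw [integral_congr_ae (ae_of_all μ fun ω => algValue_eq X τ ω)]
    rw [integral_add (hχTint.const_mul τ) (integrable_finset_sum _ fun i _ => hHχint i),
      integral_const_mul, integral_finset_sum _ fun i _ => hHχint i]
  -- bounds on q = ∫ χT
  have hq0 : 0 ≤ ∫ ω, χT ω ∂μ := integral_nonneg hχTnn
  have hq1 : ∫ ω, χT ω ∂μ ≤ 1 := by
    have := integral_mono hχTint (integrable_const (1:ℝ)) hχTle1
    simpa using this
  -- χ i dominates 1 - χT
  have hc : ∀ i, 1 - ∫ ω, χT ω ∂μ ≤ ∫ ω, χ i ω ∂μ := by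
    intro i
    have hpt : ∀ ω, 1 - χT ω ≤ χ i ω := by
      intro ω
      by_cases h : ∃ k, τ ≤ X k ω
      · have : χT ω = 1 := by simp only [hχTdef]; rw [if_pos h]
        rw [this]; simpa using hχnn i ω
      · push_neg at h
        have h1 : χT ω = 0 := by simp only [hχTdef]; rw [if_neg (by push_neg; exact h)]
        have h2 : χ i ω = 1 := by simp only [hχdef]; rw [if_pos fun j _ => h j]
        rw [h1, h2]; norm_num
    have := integral_mono ((integrable_const (1:ℝ)).sub hχTint) (hχint i)
      (fun ω => hpt ω)
    simp only [Pi.sub_apply] at this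
    rw [integral_sub (integrable_const (1:ℝ)) hχTint] at this
    simpa using this
  -- integrability of the maxima
  have hmax_int : ∀ {k : ℕ} (W : Fin (k + 1) → Ω → ℝ) (_ : ∀ i, Measurable (W i))
      (_ : ∀ i, Integrable (W i) μ) (_ : ∀ i ω, 0 ≤ W i ω),
      Integrable (fun ω => Finset.univ.sup' Finset.univ_nonempty (fun i => W i ω)) μ := by
    intro k W hWm hWi hWnn
    have hm : Measurable (fun ω => Finset.univ.sup' Finset.univ_nonempty (fun i => W i ω)) := by
      have h := Finset.measurable_sup' (Finset.univ_nonempty) (fun i _ => hWm i)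
      have : (Finset.univ.sup' Finset.univ_nonempty W)
          = fun ω => Finset.univ.sup' Finset.univ_nonempty (fun i => W i ω) :=
        funext fun ω => Finset.sup'_apply _ _ _
      rwa [this] at h
    refine (integrable_finset_sum Finset.univ fun i _ => hWi i).mono'
      hm.aestronglyMeasurable (ae_of_all μ fun ω => ?_)
    rw [Real.norm_eq_abs, abs_le]
    constructor
    · have h0 : (0:ℝ) ≤ Finset.univ.sup' Finset.univ_nonempty (fun i => W i ω) :=
        le_trans (hWnn 0 ω) (Finset.le_sup' (fun i => W i ω) (Finset.mem_univ 0))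
      have hs : (0:ℝ) ≤ ∑ i, W i ω := Finset.sum_nonneg fun i _ => hWnn i ω
      linarith
    · exact Finset.sup'_le _ _ fun i _ =>
        Finset.single_le_sum (fun k _ => hWnn k ω) (Finset.mem_univ i)
  have hmaxZint := hmax_int Z hZmeas hZint hZnn
  have hmaxYint := hmax_int Y hYmeas hYint hYnn
  -- sum of the positive parts dominates max Z − τ
  have hsumG : (∫ ω, Finset.univ.sup' Finset.univ_nonempty (fun i => Z i ω) ∂μ) - τ
      ≤ ∑ i, ∫ ω, G i ω ∂μ := by
    have hpt : ∀ ω, (Finset.univ.sup' Finset.univ_nonempty (fun i => Z i ω)) - τ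
        ≤ ∑ i, G i ω := by
      intro ω
      obtain ⟨i0, -, h0⟩ := Finset.exists_mem_eq_sup' Finset.univ_nonempty (fun i => Z i ω)
      rw [h0]
      calc Z i0 ω - τ ≤ G i0 ω := le_max_left _ _
        _ ≤ ∑ i, G i ω := Finset.single_le_sum (fun k _ => hGnn k ω) (Finset.mem_univ i0)
    have := integral_mono (hmaxZint.sub (integrable_const τ))
      (integrable_finset_sum _ fun i _ => hGint i) hpt
    simp only [Pi.sub_apply] at this
    rw [integral_sub hmaxZint (integrable_const τ),
      integral_finset_sum _ (fun i _ => hGint i)] at this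
    simpa using this
  have hmaxZ2τ : ∫ ω, Finset.univ.sup' Finset.univ_nonempty (fun i => Z i ω) ∂μ = 2 * τ := by
    rw [hτ]; ring
  have hτnn : 0 ≤ τ := by
    rw [hτ]
    have : 0 ≤ ∫ ω, Finset.univ.sup' Finset.univ_nonempty (fun i => Z i ω) ∂μ :=
      integral_nonneg fun ω =>
        le_trans (hZnn 0 ω) (Finset.le_sup' (fun i => Z i ω) (Finset.mem_univ 0))
    linarith
  have hA : τ ≤ ∑ i, ∫ ω, G i ω ∂μ := by rw [hmaxZ2τ] at hsumG; linarith
  have hGInn : ∀ i, 0 ≤ ∫ ω, G i ω ∂μ := fun i => integral_nonneg (hGnn i)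
  -- final chain
  have hmaxY_le : ∫ ω, Finset.univ.sup' Finset.univ_nonempty (fun j => Y j ω) ∂μ
      ≤ ∫ ω, Finset.univ.sup' Finset.univ_nonempty (fun i => Z i ω) ∂μ :=
    integral_mono hmaxYint hmaxZint part1
  have hstep1 : ∀ i, ∫ ω, G i ω * χ i ω ∂μ ≤ ∫ ω, H i ω * χ i ω ∂μ := fun i =>
    integral_mono (hGχint i) (hHχint i) fun ω =>
      mul_le_mul_of_nonneg_right
        (max_le_max (sub_le_sub_right (hZX i ω) τ) le_rfl) (hχnn i ω)
  have hchain : τ ≤ ∫ ω, algValue X τ ω ∂μ := by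
    have c1 : τ * (∫ ω, χT ω ∂μ) + τ * (1 - ∫ ω, χT ω ∂μ) = τ := by ring
    have c2 : τ * (1 - ∫ ω, χT ω ∂μ) ≤ (∑ i, ∫ ω, G i ω ∂μ) * (1 - ∫ ω, χT ω ∂μ) :=
      mul_le_mul_of_nonneg_right hA (by linarith)
    have c3 : (∑ i, ∫ ω, G i ω ∂μ) * (1 - ∫ ω, χT ω ∂μ)
        = ∑ i, (∫ ω, G i ω ∂μ) * (1 - ∫ ω, χT ω ∂μ) := Finset.sum_mul _ _ _
    have c4 : ∑ i, (∫ ω, G i ω ∂μ) * (1 - ∫ ω, χT ω ∂μ)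
        ≤ ∑ i, (∫ ω, G i ω ∂μ) * (∫ ω, χ i ω ∂μ) :=
      Finset.sum_le_sum fun i _ => mul_le_mul_of_nonneg_left (hc i) (hGInn i)
    have c5 : ∑ i, (∫ ω, G i ω ∂μ) * (∫ ω, χ i ω ∂μ) ≤ ∑ i, ∫ ω, H i ω * χ i ω ∂μ := by
      refine Finset.sum_le_sum fun i _ => ?_
      rw [← hprod i]
      exact hstep1 i
    linarith [halg]
  linarith [hmaxY_le, hmaxZ2τ, hchain]
end

section
/- Let Y_1,...,Y_m be independent nonnegative random variables, let τ > 0 satisfy Π_j Pr[Y_j ≤ τ] = 1/2, and write p_j = Pr[Y_j > τ]. Then E[max_j Y_j] ≥ (1/2)·Σ_j p_j·E[Y_j | Y_j > τ]. -/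
open MeasureTheory ProbabilityTheory Finset

/-- Tail bound: if `τ > 0` satisfies `Π_j Pr[Y_j ≤ τ] = 1/2`, then
`E[max_j Y_j] ≥ (1/2)·Σ_j Pr[Y_j > τ]·E[Y_j | Y_j > τ]`, the summand being written as
`∫_{Y_j > τ} Y_j dμ` (which equals `p_j·E[Y_j | Y_j > τ]`, interpreted as 0 if `p_j = 0`). -/
theorem stmt16 {Ω : Type*} [MeasurableSpace Ω] (μ : Measure Ω) [IsProbabilityMeasure μ]
    {m : ℕ} (Y : Fin (m + 1) → Ω → ℝ)
    (hYmeas : ∀ j, Measurable (Y j)) (hYnn : ∀ j ω, 0 ≤ Y j ω)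
    (hYint : ∀ j, Integrable (Y j) μ)
    (hindep : iIndepFun Y μ)
    (τ : ℝ) (hτ : 0 < τ)
    (hhalf : ∏ j, (μ {ω | Y j ω ≤ τ}).toReal = 1 / 2) :
    (1 / 2) * ∑ j, ∫ ω in {ω | τ < Y j ω}, Y j ω ∂μ
      ≤ ∫ ω, Finset.univ.sup' Finset.univ_nonempty (fun j => Y j ω) ∂μ := by
  classical
  set M : Ω → ℝ := fun ω => Finset.univ.sup' Finset.univ_nonempty (fun j => Y j ω) with hM
  have hMeq : M = Finset.univ.sup' Finset.univ_nonempty Y := by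
    funext ω; rw [Finset.sup'_apply]
  have hMmeas : Measurable M := by
    rw [hMeq]; exact Finset.measurable_sup' Finset.univ_nonempty (fun j _ => hYmeas j)
  have hMnn : ∀ ω, 0 ≤ M ω := fun ω =>
    le_trans (hYnn 0 ω) (Finset.le_sup' (fun i => Y i ω) (Finset.mem_univ (0 : Fin (m+1))))
  have hMle : ∀ ω, M ω ≤ ∑ j, Y j ω := by
    intro ω
    apply Finset.sup'_le
    intro j _
    exact Finset.single_le_sum (fun i _ => hYnn i ω) (Finset.mem_univ j)
  have hMint : Integrable M μ := by
    refine (integrable_finset_sum Finset.univ fun j _ => hYint j).mono' hMmeas.aestronglyMeasurable ?_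
    filter_upwards with ω
    rw [Real.norm_of_nonneg (hMnn ω)]
    exact hMle ω
  -- sets
  set B : Fin (m + 1) → Set Ω := fun j => ⋂ i ∈ ({j}ᶜ : Finset (Fin (m+1))), {ω | Y i ω ≤ τ} with hB
  set A : Fin (m + 1) → Set Ω := fun j => {ω | τ < Y j ω} ∩ B j with hA
  have hBmeas : ∀ j, MeasurableSet (B j) := by
    intro j
    exact Finset.measurableSet_biInter _ fun i _ => (hYmeas i) measurableSet_Iic
  have hTmeas : ∀ j, MeasurableSet {ω | τ < Y j ω} := fun j => (hYmeas j) measurableSet_Ioi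
  have hAmeas : ∀ j, MeasurableSet (A j) := fun j => (hTmeas j).inter (hBmeas j)
  -- key step per j
  have key : ∀ j, (1 / 2 : ℝ) * ∫ ω in {ω | τ < Y j ω}, Y j ω ∂μ ≤ ∫ ω in A j, Y j ω ∂μ := by
    intro j
    -- independence of f and g
    set f : Ω → ℝ := fun ω => Set.indicator (Set.Ioi τ) id (Y j ω) with hf
    set g : Ω → ℝ := fun ω => Set.indicator (B j) 1 ω with hg
    have hφ : Measurable fun v : ↥({j} : Finset (Fin (m+1))) → ℝ =>
        Set.indicator (Set.Ioi τ) id (v ⟨j, Finset.mem_singleton_self j⟩) :=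
      (measurable_id.indicator measurableSet_Ioi).comp (measurable_pi_apply _)
    have hψ : Measurable fun v : ↥({j}ᶜ : Finset (Fin (m+1))) → ℝ =>
        Set.indicator {v : ↥({j}ᶜ : Finset (Fin (m+1))) → ℝ | ∀ i, v i ≤ τ}
          (fun _ => (1:ℝ)) v := by
      refine Measurable.indicator measurable_const ?_
      have : {v : ↥({j}ᶜ : Finset (Fin (m+1))) → ℝ | ∀ i, v i ≤ τ}
          = ⋂ i, (fun v => v i) ⁻¹' Set.Iic τ := by
        ext v; simp [Set.mem_iInter]
      rw [this]
      exact MeasurableSet.iInter fun i => (measurable_pi_apply i) measurableSet_Iic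
    have hIF := (hindep.indepFun_finset {j} ({j}ᶜ) disjoint_compl_right hYmeas).comp hφ hψ
    have hiff : ∀ ω, ω ∈ B j ↔
        ∀ i : ↥({j}ᶜ : Finset (Fin (m+1))), Y (i : Fin (m+1)) ω ≤ τ := by
      intro ω
      rw [hB]
      simp only [Set.mem_iInter, Set.mem_setOf_eq]
      exact ⟨fun h i => h i i.2, fun h i hi => h ⟨i, hi⟩⟩
    have hfg : IndepFun f g μ := by
      convert hIF using 1
      · rfl
      funext ω
      simp only [Function.comp_apply, hg]
      by_cases h : ω ∈ B j
      · rw [Set.indicator_of_mem h, Set.indicator_of_mem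
          (show (fun i : ↥({j}ᶜ : Finset (Fin (m+1))) => Y (i : Fin (m+1)) ω) ∈
            {v : ↥({j}ᶜ : Finset (Fin (m+1))) → ℝ | ∀ i, v i ≤ τ} from (hiff ω).mp h)]
        simp
      · rw [Set.indicator_of_notMem h, Set.indicator_of_notMem
          (show (fun i : ↥({j}ᶜ : Finset (Fin (m+1))) => Y (i : Fin (m+1)) ω) ∉
            {v : ↥({j}ᶜ : Finset (Fin (m+1))) → ℝ | ∀ i, v i ≤ τ} from
            fun hc => h ((hiff ω).mpr hc))]
    have hfmeas : Measurable f := (measurable_id.indicator measurableSet_Ioi).comp (hYmeas j)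
    have hgmeas : Measurable g := measurable_const.indicator (hBmeas j)
    have hmul := IndepFun.integral_mul_eq_mul_integral hfg hfmeas.aestronglyMeasurable hgmeas.aestronglyMeasurable
    -- compute the three integrals
    have hfg_eq : (f * g) = Set.indicator (A j) (Y j) := by
      funext ω
      simp only [Pi.mul_apply, hf, hg, hA, Set.indicator_apply, Set.mem_Ioi,
        Set.mem_inter_iff, Set.mem_setOf_eq, id]
      by_cases h1 : τ < Y j ω <;> by_cases h2 : ω ∈ B j <;> simp [h1, h2]
    have hfint : ∫ ω, f ω ∂μ = ∫ ω in {ω | τ < Y j ω}, Y j ω ∂μ := by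
      have : f = Set.indicator {ω | τ < Y j ω} (Y j) := by
        funext ω
        simp only [hf, Set.indicator_apply, Set.mem_Ioi, Set.mem_setOf_eq, id]
      rw [this, integral_indicator (hTmeas j)]
    have hgint : ∫ ω, g ω ∂μ = (μ (B j)).toReal := integral_indicator_one (hBmeas j)
    have hBprod : (μ (B j)).toReal = ∏ i ∈ ({j}ᶜ : Finset (Fin (m+1))), (μ {ω | Y i ω ≤ τ}).toReal := by
      rw [hB]
      have := hindep.meas_biInter (S := ({j}ᶜ : Finset (Fin (m+1))))
        (s := fun i => {ω | Y i ω ≤ τ}) (fun i _ => ⟨Set.Iic τ, measurableSet_Iic, rfl⟩)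
      rw [this, ENNReal.toReal_prod]
    have hhalf_le : (1 / 2 : ℝ) ≤ ∏ i ∈ ({j}ᶜ : Finset (Fin (m+1))), (μ {ω | Y i ω ≤ τ}).toReal := by
      have hsplit : (μ {ω | Y j ω ≤ τ}).toReal *
          ∏ i ∈ ({j}ᶜ : Finset (Fin (m+1))), (μ {ω | Y i ω ≤ τ}).toReal = 1 / 2 := by
        rw [← hhalf]
        rw [← Finset.prod_mul_prod_compl ({j} : Finset (Fin (m+1)))]
        simp
      have h1 : (μ {ω | Y j ω ≤ τ}).toReal ≤ 1 := by
        simpa using ENNReal.toReal_mono ENNReal.one_ne_top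
          (prob_le_one (μ := μ) (s := {ω | Y j ω ≤ τ}))
      have h2 : (0:ℝ) ≤ ∏ i ∈ ({j}ᶜ : Finset (Fin (m+1))), (μ {ω | Y i ω ≤ τ}).toReal :=
        Finset.prod_nonneg fun i _ => ENNReal.toReal_nonneg
      nlinarith
    have hInn : 0 ≤ ∫ ω in {ω | τ < Y j ω}, Y j ω ∂μ :=
      setIntegral_nonneg (hTmeas j) fun ω _ => hYnn j ω
    calc (1 / 2 : ℝ) * ∫ ω in {ω | τ < Y j ω}, Y j ω ∂μ
        ≤ (∏ i ∈ ({j}ᶜ : Finset (Fin (m+1))), (μ {ω | Y i ω ≤ τ}).toReal)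
            * ∫ ω in {ω | τ < Y j ω}, Y j ω ∂μ := by
          exact mul_le_mul_of_nonneg_right hhalf_le hInn
      _ = ∫ ω in A j, Y j ω ∂μ := by
          rw [← hBprod, ← hgint, ← hfint, mul_comm, ← hmul]
          rw [hfg_eq, integral_indicator (hAmeas j)]
  -- now sum up
  have hdisj : Set.Pairwise (↑(Finset.univ : Finset (Fin (m+1)))) (Function.onFun Disjoint A) := by
    intro j _ k _ hjk
    rw [Function.onFun, Set.disjoint_left]
    rintro ω ⟨hω1, hω2⟩ ⟨hω3, hω4⟩
    have : Y k ω ≤ τ := Set.mem_iInter₂.mp hω2 k (by simp [Finset.mem_compl, Ne.symm hjk]) 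
    exact absurd hω3 (not_lt.mpr this)
  have step2 : ∀ j, ∫ ω in A j, Y j ω ∂μ ≤ ∫ ω in A j, M ω ∂μ := by
    intro j
    refine setIntegral_mono_on ((hYint j).integrableOn) (hMint.integrableOn) (hAmeas j) ?_
    intro ω _
    exact Finset.le_sup' (fun i => Y i ω) (Finset.mem_univ j)
  have step3 : ∑ j, ∫ ω in A j, M ω ∂μ ≤ ∫ ω, M ω ∂μ := by
    rw [← integral_biUnion_finset Finset.univ (fun j _ => hAmeas j) hdisj
      (fun j _ => hMint.integrableOn)]
    exact setIntegral_le_integral hMint (Filter.Eventually.of_forall hMnn)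
  calc (1 / 2 : ℝ) * ∑ j, ∫ ω in {ω | τ < Y j ω}, Y j ω ∂μ
      = ∑ j, (1 / 2 : ℝ) * ∫ ω in {ω | τ < Y j ω}, Y j ω ∂μ := by rw [Finset.mul_sum]
    _ ≤ ∑ j, ∫ ω in A j, Y j ω ∂μ := Finset.sum_le_sum fun j _ => key j
    _ ≤ ∑ j, ∫ ω in A j, M ω ∂μ := Finset.sum_le_sum fun j _ => step2 j
    _ ≤ ∫ ω, M ω ∂μ := step3
end
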